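/- arXiv:cs/0506020 — 8 statements merged into one kernel-verified Lean document; each statement's English description precedes it below -/
import Mathlib

section
/- For every fixed real P > 0, the total throughput of the worst-user scheduler converges to P: lim_{N→∞} N · ∫_0^∞ log(1+Px) · N e^{−Nx} dx = P, where the limit is taken along positive integers N → ∞. In particular this throughput is Θ(1) in N. -/
open Real Set Filter MeasureTheory

/-- Integrability of `x * exp(-b*x)` on `Ioi 0`. -/
lemma aux_int1 {b : ℝ} (hb : 0 < b) :
    MeasureTheory.IntegrableOn (fun x : ℝ => x * Real.exp (-b * x)) (Ioi 0) := by
  have := integrableOn_rpow_mul_exp_neg_mul_rpow (p := 1) (s := 1) (b := b)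
    (by norm_num) zero_lt_one hb
  refine this.congr_fun (fun x hx => ?_) measurableSet_Ioi
  norm_num [Real.rpow_one]

/-- Integrability of `x^2 * exp(-b*x)` on `Ioi 0`. -/
lemma aux_int2 {b : ℝ} (hb : 0 < b) :
    MeasureTheory.IntegrableOn (fun x : ℝ => x ^ 2 * Real.exp (-b * x)) (Ioi 0) := by
  have := integrableOn_rpow_mul_exp_neg_mul_rpow (p := 1) (s := 2) (b := b)
    (by norm_num) zero_lt_one hb
  refine this.congr_fun (fun x hx => ?_) measurableSet_Ioi
  beta_reduce
  rw [Real.rpow_one, show ((2:ℝ)) = ((2:ℕ):ℝ) by norm_num, Real.rpow_natCast]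

lemma aux_val1 {b : ℝ} (hb : 0 < b) :
    ∫ x in Ioi (0 : ℝ), x * Real.exp (-b * x) = 1 / b ^ 2 := by
  have h := Real.integral_rpow_mul_exp_neg_mul_Ioi (a := 2) (r := b) (by norm_num) hb
  rw [show (2 : ℝ) - 1 = 1 by norm_num] at h
  simp only [Real.rpow_one, Real.Gamma_two, mul_one] at h
  have heq : ∫ x in Ioi (0 : ℝ), x * Real.exp (-b * x)
      = ∫ x in Ioi (0 : ℝ), x * Real.exp (-(b * x)) := by
    refine MeasureTheory.setIntegral_congr_fun measurableSet_Ioi (fun x hx => ?_)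
    rw [neg_mul]
  rw [heq, h, show ((2:ℝ)) = ((2:ℕ):ℝ) by norm_num, Real.rpow_natCast]
  norm_num [div_pow]

lemma aux_val2 {b : ℝ} (hb : 0 < b) :
    ∫ x in Ioi (0 : ℝ), x ^ 2 * Real.exp (-b * x) = 2 / b ^ 3 := by
  have h := Real.integral_rpow_mul_exp_neg_mul_Ioi (a := 3) (r := b) (by norm_num) hb
  rw [show (3 : ℝ) - 1 = 2 by norm_num] at h
  have hG : Real.Gamma 3 = 2 := by
    rw [show (3 : ℝ) = 2 + 1 by norm_num, Real.Gamma_add_one (by norm_num), Real.Gamma_two]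
    norm_num
  rw [hG] at h
  have heq : ∫ x in Ioi (0 : ℝ), x ^ 2 * Real.exp (-b * x)
      = ∫ x in Ioi (0 : ℝ), x ^ (2 : ℝ) * Real.exp (-(b * x)) := by
    refine MeasureTheory.setIntegral_congr_fun measurableSet_Ioi (fun x hx => ?_)
    rw [neg_mul, show ((2:ℝ)) = ((2:ℕ):ℝ) by norm_num, Real.rpow_natCast]
  rw [heq, h, show ((3:ℝ)) = ((3:ℕ):ℝ) by norm_num, Real.rpow_natCast]
  norm_num [div_pow]
  ring

/-- For every fixed `P > 0`, the total throughput of the worst-user scheduler converges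
to `P`: `lim_{N→∞} N · ∫_0^∞ log(1+Px) · N e^{−Nx} dx = P`, the limit taken along
positive integers `N → ∞`. In particular this throughput is `Θ(1)` in `N`. -/
theorem worst_user_throughput_tendsto (P : ℝ) (hP : 0 < P) :
    Tendsto (fun N : ℕ =>
        (N : ℝ) * ∫ x in Ioi (0 : ℝ),
          Real.log (1 + P * x) * ((N : ℝ) * Real.exp (-(N : ℝ) * x)))
      atTop (nhds P) := by
  have key : ∀ N : ℕ, 1 ≤ N →
      (P - 2 * P ^ 2 / N ≤ (N : ℝ) * ∫ x in Ioi (0 : ℝ),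
          Real.log (1 + P * x) * ((N : ℝ) * Real.exp (-(N : ℝ) * x))) ∧
      ((N : ℝ) * ∫ x in Ioi (0 : ℝ),
          Real.log (1 + P * x) * ((N : ℝ) * Real.exp (-(N : ℝ) * x)) ≤ P) := by
    intro N hN
    set n : ℝ := (N : ℝ) with hn
    have hn1 : (1:ℝ) ≤ n := by rw [hn]; exact_mod_cast hN
    have hn0 : 0 < n := lt_of_lt_of_le zero_lt_one hn1
    -- pointwise bounds
    have hbound : ∀ x : ℝ, x ∈ Ioi (0 : ℝ) →
        P * x - P ^ 2 * x ^ 2 ≤ Real.log (1 + P * x) ∧ Real.log (1 + P * x) ≤ P * x := by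
      intro x hx
      have hx0 : 0 < x := hx
      have h1 : (0 : ℝ) < 1 + P * x := by positivity
      constructor
      · have hlog := Real.one_sub_inv_le_log_of_pos h1
        have h2 : P * x - P ^ 2 * x ^ 2 ≤ 1 - (1 + P * x)⁻¹ := by
          have hinv : (1 + P * x)⁻¹ * (1 + P * x) = 1 := inv_mul_cancel₀ h1.ne'
          have hinvn : 0 ≤ (1 + P * x)⁻¹ := inv_nonneg.2 h1.le
          nlinarith [mul_pos hP hx0, sq_nonneg (P * x)]
        linarith
      · have := Real.log_le_sub_one_of_pos h1
        linarith
    -- integrability of the main integrand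
    have hmeas : AEStronglyMeasurable
        (fun x : ℝ => Real.log (1 + P * x) * (n * Real.exp (-n * x)))
        (volume.restrict (Ioi 0)) := by
      apply Measurable.aestronglyMeasurable
      exact (Real.measurable_log.comp (measurable_const.add (measurable_id.const_mul P))).mul
        ((Real.measurable_exp.comp (measurable_id.const_mul (-n))).const_mul n)
    have hint1 := aux_int1 hn0
    have hint2 := aux_int2 hn0
    have hintf : MeasureTheory.IntegrableOn
        (fun x : ℝ => Real.log (1 + P * x) * (n * Real.exp (-n * x))) (Ioi 0) := by
      refine MeasureTheory.Integrable.mono' ((hint1.const_mul (P * n))) hmeas ?_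
      refine (MeasureTheory.ae_restrict_iff' measurableSet_Ioi).2 (Filter.Eventually.of_forall
        (fun x hx => ?_))
      have hx0 : 0 < x := hx
      have hb := hbound x hx
      have hlognn : 0 ≤ Real.log (1 + P * x) := Real.log_nonneg (by nlinarith)
      have hexp : 0 < Real.exp (-n * x) := Real.exp_pos _
      rw [Real.norm_eq_abs, abs_of_nonneg (by positivity)]
      calc Real.log (1 + P * x) * (n * Real.exp (-n * x))
          ≤ P * x * (n * Real.exp (-n * x)) := by
            apply mul_le_mul_of_nonneg_right hb.2 (by positivity)
        _ = P * n * (x * Real.exp (-n * x)) := by ring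
    -- upper bound
    have hupper : (∫ x in Ioi (0 : ℝ), Real.log (1 + P * x) * (n * Real.exp (-n * x)))
        ≤ P / n := by
      have hle : (∫ x in Ioi (0 : ℝ), Real.log (1 + P * x) * (n * Real.exp (-n * x)))
          ≤ ∫ x in Ioi (0 : ℝ), P * n * (x * Real.exp (-n * x)) := by
        refine MeasureTheory.setIntegral_mono_on hintf (hint1.const_mul (P * n))
          measurableSet_Ioi (fun x hx => ?_)
        have hb := hbound x hx
        have : 0 < x := hx
        calc Real.log (1 + P * x) * (n * Real.exp (-n * x))
            ≤ P * x * (n * Real.exp (-n * x)) :=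
              mul_le_mul_of_nonneg_right hb.2 (by positivity)
          _ = P * n * (x * Real.exp (-n * x)) := by ring
      rw [MeasureTheory.integral_const_mul, aux_val1 hn0] at hle
      calc (∫ x in Ioi (0 : ℝ), Real.log (1 + P * x) * (n * Real.exp (-n * x)))
          ≤ P * n * (1 / n ^ 2) := hle
        _ = P / n := by field_simp
    -- lower bound
    have hlower : P / n - 2 * P ^ 2 / n ^ 2
        ≤ ∫ x in Ioi (0 : ℝ), Real.log (1 + P * x) * (n * Real.exp (-n * x)) := by
      have hle : (∫ x in Ioi (0 : ℝ),
            (P * n * (x * Real.exp (-n * x)) - P ^ 2 * n * (x ^ 2 * Real.exp (-n * x))))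
          ≤ ∫ x in Ioi (0 : ℝ), Real.log (1 + P * x) * (n * Real.exp (-n * x)) := by
        refine MeasureTheory.setIntegral_mono_on
          ((hint1.const_mul (P * n)).sub (hint2.const_mul (P ^ 2 * n))) hintf
          measurableSet_Ioi (fun x hx => ?_)
        have hb := hbound x hx
        have : 0 < x := hx
        calc P * n * (x * Real.exp (-n * x)) - P ^ 2 * n * (x ^ 2 * Real.exp (-n * x))
            = (P * x - P ^ 2 * x ^ 2) * (n * Real.exp (-n * x)) := by ring
          _ ≤ Real.log (1 + P * x) * (n * Real.exp (-n * x)) :=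
              mul_le_mul_of_nonneg_right hb.1 (by positivity)
      rw [MeasureTheory.integral_sub (hint1.const_mul (P * n)) (hint2.const_mul (P ^ 2 * n)),
        MeasureTheory.integral_const_mul, MeasureTheory.integral_const_mul,
        aux_val1 hn0, aux_val2 hn0] at hle
      calc P / n - 2 * P ^ 2 / n ^ 2
          = P * n * (1 / n ^ 2) - P ^ 2 * n * (2 / n ^ 3) := by field_simp
        _ ≤ _ := hle
    constructor
    · calc P - 2 * P ^ 2 / n = n * (P / n - 2 * P ^ 2 / n ^ 2) := by field_simp
        _ ≤ n * ∫ x in Ioi (0 : ℝ), Real.log (1 + P * x) * (n * Real.exp (-n * x)) :=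
            mul_le_mul_of_nonneg_left hlower hn0.le
    · calc n * ∫ x in Ioi (0 : ℝ), Real.log (1 + P * x) * (n * Real.exp (-n * x))
          ≤ n * (P / n) := mul_le_mul_of_nonneg_left hupper hn0.le
        _ = P := by field_simp
  refine tendsto_of_tendsto_of_tendsto_of_le_of_le'
    (g := fun N : ℕ => P - 2 * P ^ 2 / N) (h := fun _ : ℕ => P) ?_ tendsto_const_nhds ?_ ?_
  · have : Tendsto (fun N : ℕ => 2 * P ^ 2 / N) atTop (nhds 0) :=
      tendsto_const_div_atTop_nhds_zero_nat (2 * P ^ 2)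
    simpa using tendsto_const_nhds.sub this
  · filter_upwards [eventually_ge_atTop 1] with N hN using (key N hN).1
  · filter_upwards [eventually_ge_atTop 1] with N hN using (key N hN).2
end

section
/- For every fixed real P > 0 there exist constants 0 < c₁ ≤ c₂ and N₀ such that for all integers N ≥ N₀: c₁ · log log N ≤ ∫_0^∞ log(1+Px) · N e^{−x}(1−e^{−x})^{N−1} dx ≤ c₂ · log log N. That is, the expected rate to the best of N users, E[log(1+P·max_{i≤N} X_i)] with X_i i.i.d. unit-mean exponential, scales as Θ(log log N). -/
open Real Set MeasureTheory Filter Topology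

private lemma integrableOn_xexp {a : ℝ} (ha : 0 ≤ a) :
    IntegrableOn (fun x => x * Real.exp (-x)) (Ioi a) := by
  refine Integrable.mono' (g := fun x => 2 * Real.exp (-(1/2) * x))
    ((exp_neg_integrableOn_Ioi a (by norm_num)).const_mul 2)
    ((continuous_id.mul (Real.continuous_exp.comp continuous_neg)).aestronglyMeasurable) ?_
  filter_upwards [ae_restrict_mem measurableSet_Ioi] with x hx
  have hx0 : (0:ℝ) ≤ x := le_trans ha (le_of_lt hx)
  rw [Real.norm_eq_abs, abs_of_nonneg (by positivity)]
  have h1 : x / 2 ≤ Real.exp (x / 2) := le_trans (by linarith) (Real.add_one_le_exp (x/2))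
  have h2 : x * Real.exp (-x) ≤ (2 * Real.exp (x/2)) * Real.exp (-x) := by
    have := Real.exp_pos (-x)
    nlinarith
  refine h2.trans (le_of_eq ?_)
  rw [mul_assoc, ← Real.exp_add]
  ring_nf

private lemma tail_xexp {a : ℝ} (ha : 0 ≤ a) :
    ∫ x in Ioi a, x * Real.exp (-x) = (a+1) * Real.exp (-a) := by
  have h := integral_Ioi_of_hasDerivAt_of_tendsto' (a := a) (m := 0)
    (f := fun x => -((x+1) * Real.exp (-x)))
    (f' := fun x => x * Real.exp (-x)) ?_ (integrableOn_xexp ha) ?_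
  · rw [h]; ring
  · intro x _
    have h1 : HasDerivAt (fun y : ℝ => (y+1) * Real.exp (-y))
        (1 * Real.exp (-x) + (x+1) * (Real.exp (-x) * (-1))) x :=
      ((hasDerivAt_id x).add_const 1).mul ((hasDerivAt_neg x).exp)
    have := h1.neg
    convert this using 1
    · rfl
    · ring
  · have h1 := Real.tendsto_pow_mul_exp_neg_atTop_nhds_zero 1
    have h2 := Real.tendsto_exp_neg_atTop_nhds_zero
    have h3 : Tendsto (fun x : ℝ => -(x ^ 1 * Real.exp (-x) + Real.exp (-x))) atTop
        (𝓝 (-(0+0))) := (h1.add h2).neg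
    simp only [neg_add, pow_one, neg_zero, add_zero] at h3 ⊢
    refine h3.congr fun x => by ring

private lemma integrableOn_f (N : ℕ) {a : ℝ} (ha : 0 ≤ a) :
    IntegrableOn (fun x => (N:ℝ) * Real.exp (-x) * (1 - Real.exp (-x)) ^ (N-1)) (Ioi a) := by
  refine Integrable.mono' (g := fun x => (N:ℝ) * Real.exp (-1 * x))
    ((exp_neg_integrableOn_Ioi a one_pos).const_mul N)
    ((Continuous.aestronglyMeasurable (by continuity))) ?_
  filter_upwards [ae_restrict_mem measurableSet_Ioi] with x hx
  have hx0 : (0:ℝ) < x := lt_of_le_of_lt ha hx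
  have he : Real.exp (-x) ≤ 1 := Real.exp_le_one_iff.mpr (by linarith)
  have he0 : 0 < Real.exp (-x) := Real.exp_pos _
  have hp : (0:ℝ) ≤ 1 - Real.exp (-x) := by linarith
  have hp1 : (1 - Real.exp (-x)) ^ (N-1) ≤ 1 := pow_le_one₀ hp (by linarith)
  rw [Real.norm_eq_abs, abs_of_nonneg (by positivity), neg_one_mul]
  have hN : (0:ℝ) ≤ (N:ℝ) * Real.exp (-x) := by positivity
  calc (N:ℝ) * Real.exp (-x) * (1 - Real.exp (-x)) ^ (N-1)
      ≤ (N:ℝ) * Real.exp (-x) * 1 := by nlinarith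
    _ = (N:ℝ) * Real.exp (-x) := by ring

private lemma tail_f (N : ℕ) {a : ℝ} (ha : 0 ≤ a) :
    ∫ x in Ioi a, (N:ℝ) * Real.exp (-x) * (1 - Real.exp (-x)) ^ (N-1)
      = 1 - (1 - Real.exp (-a)) ^ N := by
  have h := integral_Ioi_of_hasDerivAt_of_tendsto' (a := a) (m := 1)
    (f := fun x => (1 - Real.exp (-x)) ^ N)
    (f' := fun x => (N:ℝ) * Real.exp (-x) * (1 - Real.exp (-x)) ^ (N-1)) ?_
    (integrableOn_f N ha) ?_
  · rw [h]
  · intro x _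
    have h1 : HasDerivAt (fun y : ℝ => 1 - Real.exp (-y)) (-(Real.exp (-x) * (-1))) x :=
      ((hasDerivAt_neg x).exp).const_sub 1
    have h2 := h1.pow N
    convert h2 using 1
    · rfl
    · rfl
    · ring
  · have h2 : Tendsto (fun x : ℝ => (1 - Real.exp (-x)) ^ N) atTop (𝓝 ((1 - 0) ^ N)) :=
      (tendsto_const_nhds.sub Real.tendsto_exp_neg_atTop_nhds_zero).pow N
    simpa using h2

private lemma g_le_bound {P : ℝ} (hP : 0 < P) (N : ℕ) {x : ℝ} (hx : 0 < x) :
    Real.log (1 + P * x) * ((N:ℝ) * Real.exp (-x) * (1 - Real.exp (-x)) ^ (N-1))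
      ≤ P * (N:ℝ) * (x * Real.exp (-x)) := by
  have he : Real.exp (-x) ≤ 1 := Real.exp_le_one_iff.mpr (by linarith)
  have he0 : 0 < Real.exp (-x) := Real.exp_pos _
  have hp : (0:ℝ) ≤ 1 - Real.exp (-x) := by linarith
  have hp1 : (1 - Real.exp (-x)) ^ (N-1) ≤ 1 := pow_le_one₀ hp (by linarith)
  have hlog0 : 0 ≤ Real.log (1 + P * x) := Real.log_nonneg (by nlinarith)
  have hlog : Real.log (1 + P * x) ≤ P * x := by
    have := Real.log_le_sub_one_of_pos (show (0:ℝ) < 1 + P * x by nlinarith)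
    linarith
  have hf0 : (0:ℝ) ≤ (N:ℝ) * Real.exp (-x) * (1 - Real.exp (-x)) ^ (N-1) := by positivity
  have hfle : (N:ℝ) * Real.exp (-x) * (1 - Real.exp (-x)) ^ (N-1) ≤ (N:ℝ) * Real.exp (-x) := by
    have hN : (0:ℝ) ≤ (N:ℝ) * Real.exp (-x) := by positivity
    nlinarith
  calc Real.log (1 + P * x) * ((N:ℝ) * Real.exp (-x) * (1 - Real.exp (-x)) ^ (N-1))
      ≤ (P * x) * ((N:ℝ) * Real.exp (-x)) := mul_le_mul hlog hfle hf0 (by positivity)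
    _ = P * (N:ℝ) * (x * Real.exp (-x)) := by ring

private lemma integrableOn_g {P : ℝ} (hP : 0 < P) (N : ℕ) {a : ℝ} (ha : 0 ≤ a) :
    IntegrableOn (fun x => Real.log (1 + P * x) *
      ((N:ℝ) * Real.exp (-x) * (1 - Real.exp (-x)) ^ (N-1))) (Ioi a) := by
  refine Integrable.mono' (g := fun x => P * (N:ℝ) * (x * Real.exp (-x)))
    ((integrableOn_xexp ha).const_mul (P * N))
    (Measurable.aestronglyMeasurable ((Real.measurable_log.comp (by fun_prop)).mul (by fun_prop))) ?_
  filter_upwards [ae_restrict_mem measurableSet_Ioi] with x hx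
  have hx0 : (0:ℝ) < x := lt_of_le_of_lt ha hx
  have hlog0 : 0 ≤ Real.log (1 + P * x) := Real.log_nonneg (by nlinarith)
  have he : Real.exp (-x) ≤ 1 := Real.exp_le_one_iff.mpr (by linarith)
  have hp : (0:ℝ) ≤ 1 - Real.exp (-x) := by linarith
  rw [Real.norm_eq_abs, abs_of_nonneg (by positivity)]
  exact g_le_bound hP N hx0

set_option maxHeartbeats 1000000 in
/-- For every fixed `P > 0` there are constants `0 < c₁ ≤ c₂` and `N₀` such that for all
`N ≥ N₀`, `c₁ log log N ≤ ∫_0^∞ log(1+Px) · N e^{−x}(1−e^{−x})^{N−1} dx ≤ c₂ log log N`: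
the expected rate to the best of `N` i.i.d. unit-mean exponential users is
`Θ(log log N)`. -/
theorem best_user_rate_theta (P : ℝ) (hP : 0 < P) :
    ∃ c₁ c₂ : ℝ, ∃ N₀ : ℕ, 0 < c₁ ∧ c₁ ≤ c₂ ∧
      ∀ N : ℕ, N₀ ≤ N →
        c₁ * Real.log (Real.log N) ≤
            (∫ x in Ioi (0 : ℝ), Real.log (1 + P * x) *
              ((N : ℝ) * Real.exp (-x) * (1 - Real.exp (-x)) ^ (N - 1))) ∧
          (∫ x in Ioi (0 : ℝ), Real.log (1 + P * x) *
              ((N : ℝ) * Real.exp (-x) * (1 - Real.exp (-x)) ^ (N - 1))) ≤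
            c₂ * Real.log (Real.log N) := by
  have hexp1 : Real.exp (-1) < 1 := by
    rw [show (1:ℝ) = Real.exp 0 by simp]
    exact Real.exp_lt_exp.mpr (by norm_num)
  refine ⟨(1 - Real.exp (-1))/2, 3, ?_⟩
  -- eventual conditions
  have hlogtend : Tendsto (fun N : ℕ => Real.log (Real.log N)) atTop atTop :=
    (Real.tendsto_log_atTop.comp Real.tendsto_log_atTop).comp tendsto_natCast_atTop_atTop
  have h1 : ∀ᶠ N : ℕ in atTop,
      max (max 1 (-2 * Real.log P)) (Real.log (1 + 2*P)) ≤ Real.log (Real.log N) :=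
    hlogtend.eventually_ge_atTop _
  have h2' : ∀ᶠ x : ℝ in atTop, P * (2 * Real.log x + 1) ≤ x := by
    have hlo := Real.isLittleO_log_id_atTop
    have hb := hlo.def (show (0:ℝ) < 1/(4*P) by positivity)
    filter_upwards [hb, eventually_ge_atTop (2*P), eventually_ge_atTop (1:ℝ)] with x hx hx2 hx1
    simp only [Real.norm_eq_abs, id_eq] at hx
    rw [abs_of_nonneg (Real.log_nonneg hx1), abs_of_nonneg (by linarith)] at hx
    have hlx : Real.log x ≤ x / (4*P) := by
      calc Real.log x ≤ 1/(4*P) * x := hx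
        _ = x / (4*P) := by ring
    have h4P : (0:ℝ) < 4*P := by positivity
    have : 2 * P * Real.log x ≤ 2 * P * (x / (4*P)) := by nlinarith
    have hxx : 2 * P * (x / (4*P)) = x / 2 := by field_simp; ring
    nlinarith
  have h2 : ∀ᶠ N : ℕ in atTop, P * (2 * Real.log N + 1) ≤ (N:ℝ) :=
    tendsto_natCast_atTop_atTop.eventually h2'
  have h3 : ∀ᶠ N : ℕ in atTop, (3:ℝ) ≤ (N:ℝ) :=
    tendsto_natCast_atTop_atTop.eventually_ge_atTop 3
  obtain ⟨N₀, hN₀⟩ := eventually_atTop.mp ((h1.and h2).and h3)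
  refine ⟨N₀, by linarith, by linarith [Real.exp_pos (-1)], ?_⟩
  intro N hN
  obtain ⟨⟨hmax, hPN⟩, hN3⟩ := hN₀ N hN
  set L := Real.log N with hLdef
  set ll := Real.log L with hlldef
  have hll1 : 1 ≤ ll := le_trans (le_trans (le_max_left _ _) (le_max_left _ _)) hmax
  have hllP : -2 * Real.log P ≤ ll := le_trans (le_trans (le_max_right _ _) (le_max_left _ _)) hmax
  have hll2P : Real.log (1 + 2*P) ≤ ll := le_trans (le_max_right _ _) hmax
  have hNpos : (0:ℝ) < (N:ℝ) := by linarith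
  have hL1 : 1 ≤ L := by
    have hexp3 : Real.exp 1 ≤ (N:ℝ) :=
      le_trans (le_of_lt (lt_trans Real.exp_one_lt_d9 (by norm_num))) hN3
    exact (Real.le_log_iff_exp_le hNpos).mpr hexp3
  have hL0 : (0:ℝ) < L := by linarith
  have hll0 : (0:ℝ) < ll := by linarith
  have hexpL : Real.exp L = (N:ℝ) := Real.exp_log hNpos
  have heL : Real.exp (-L) = (N:ℝ)⁻¹ := by rw [Real.exp_neg, hexpL]
  have hNne : (N:ℝ) ≠ 0 := ne_of_gt hNpos
  have hN1 : 1 ≤ N := by exact_mod_cast le_trans (by norm_num : (1:ℝ) ≤ 3) hN3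
  -- nonnegativity of the integrand a.e. on Ioi 0
  have hg0 : (0:ℝ→ℝ) ≤ᵐ[volume.restrict (Ioi (0:ℝ))]
      fun x => Real.log (1 + P * x) * ((N:ℝ) * Real.exp (-x) * (1 - Real.exp (-x)) ^ (N-1)) := by
    filter_upwards [ae_restrict_mem measurableSet_Ioi] with x hx
    have hx0 : (0:ℝ) < x := hx
    have he : Real.exp (-x) ≤ 1 := Real.exp_le_one_iff.mpr (by linarith)
    have hp : (0:ℝ) ≤ 1 - Real.exp (-x) := by linarith
    have hlog0 : 0 ≤ Real.log (1 + P * x) := Real.log_nonneg (by nlinarith)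
    positivity
  constructor
  · -- lower bound
    have low1 : (∫ x in Ioi L, Real.log (1 + P * x) *
          ((N:ℝ) * Real.exp (-x) * (1 - Real.exp (-x)) ^ (N-1)))
        ≤ ∫ x in Ioi (0:ℝ), Real.log (1 + P * x) *
          ((N:ℝ) * Real.exp (-x) * (1 - Real.exp (-x)) ^ (N-1)) :=
      setIntegral_mono_set (integrableOn_g hP N le_rfl) hg0
        ((Ioi_subset_Ioi (le_of_lt hL0)).eventuallyLE)
    have low2 : (∫ x in Ioi L, Real.log (1 + P * L) *
          ((N:ℝ) * Real.exp (-x) * (1 - Real.exp (-x)) ^ (N-1)))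
        ≤ ∫ x in Ioi L, Real.log (1 + P * x) *
          ((N:ℝ) * Real.exp (-x) * (1 - Real.exp (-x)) ^ (N-1)) := by
      refine setIntegral_mono_on ((integrableOn_f N (le_of_lt hL0)).const_mul _)
        (integrableOn_g hP N (le_of_lt hL0)) measurableSet_Ioi ?_
      intro x hx
      have hx0 : L < x := hx
      have he : Real.exp (-x) ≤ 1 := Real.exp_le_one_iff.mpr (by linarith)
      have hp : (0:ℝ) ≤ 1 - Real.exp (-x) := by linarith
      have hf0 : (0:ℝ) ≤ (N:ℝ) * Real.exp (-x) * (1 - Real.exp (-x)) ^ (N-1) := by positivity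
      refine mul_le_mul_of_nonneg_right ?_ hf0
      exact Real.log_le_log (by nlinarith) (by nlinarith)
    have low3 : (∫ x in Ioi L, Real.log (1 + P * L) *
          ((N:ℝ) * Real.exp (-x) * (1 - Real.exp (-x)) ^ (N-1)))
        = Real.log (1 + P * L) * (1 - (1 - (N:ℝ)⁻¹) ^ N) := by
      rw [MeasureTheory.integral_const_mul, tail_f N (le_of_lt hL0), heL]
    -- (1 - 1/N)^N ≤ exp(-1)
    have hinv : (0:ℝ) < (N:ℝ)⁻¹ := by positivity
    have hinv1 : (N:ℝ)⁻¹ ≤ 1 := by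
      rw [inv_le_one_iff₀]; right; linarith
    have hstep : (1 - (N:ℝ)⁻¹) ^ N ≤ Real.exp (-1) := by
      have ha : 1 - (N:ℝ)⁻¹ ≤ Real.exp (-(N:ℝ)⁻¹) := by
        have := Real.add_one_le_exp (-(N:ℝ)⁻¹); linarith
      have hnn : (0:ℝ) ≤ 1 - (N:ℝ)⁻¹ := by linarith
      have h := pow_le_pow_left₀ hnn ha N
      rwa [← Real.exp_nat_mul, show (N:ℝ) * -(N:ℝ)⁻¹ = -1 by field_simp] at h
    -- log(1+PL) ≥ ll/2
    have hlow : ll / 2 ≤ Real.log (1 + P * L) := by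
      have h1' : Real.log (P * L) ≤ Real.log (1 + P * L) :=
        Real.log_le_log (by positivity) (by linarith)
      rw [Real.log_mul (ne_of_gt hP) (ne_of_gt hL0)] at h1'
      have : -ll/2 ≤ Real.log P := by linarith
      linarith
    have key : (1 - Real.exp (-1))/2 * ll
        ≤ Real.log (1 + P * L) * (1 - (1 - (N:ℝ)⁻¹) ^ N) := by
      have hA : (1 - Real.exp (-1))/2 * ll = (ll/2) * (1 - Real.exp (-1)) := by ring
      rw [hA]
      refine mul_le_mul hlow (by linarith) (by linarith) ?_
      exact le_trans (by positivity) hlow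
    calc (1 - Real.exp (-1))/2 * ll ≤ Real.log (1 + P * L) * (1 - (1 - (N:ℝ)⁻¹) ^ N) := key
      _ = _ := low3.symm
      _ ≤ _ := low2
      _ ≤ _ := low1
  · -- upper bound
    set T := 2 * L with hTdef
    have hT0 : (0:ℝ) < T := by linarith
    have hsplit : Ioi (0:ℝ) = Ioc 0 T ∪ Ioi T := (Ioc_union_Ioi_eq_Ioi (le_of_lt hT0)).symm
    have hInt1 : IntegrableOn (fun x => Real.log (1 + P * x) *
        ((N:ℝ) * Real.exp (-x) * (1 - Real.exp (-x)) ^ (N-1))) (Ioc 0 T) :=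
      (integrableOn_g hP N le_rfl).mono_set Ioc_subset_Ioi_self
    have hInt2 : IntegrableOn (fun x => Real.log (1 + P * x) *
        ((N:ℝ) * Real.exp (-x) * (1 - Real.exp (-x)) ^ (N-1))) (Ioi T) :=
      integrableOn_g hP N (le_of_lt hT0)
    rw [hsplit, setIntegral_union (Ioc_disjoint_Ioi le_rfl) measurableSet_Ioi hInt1 hInt2]
    -- bound on Ioc part
    have hlogT0 : 0 ≤ Real.log (1 + P * T) := Real.log_nonneg (by nlinarith)
    have huA : (∫ x in Ioc (0:ℝ) T, Real.log (1 + P * x) *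
          ((N:ℝ) * Real.exp (-x) * (1 - Real.exp (-x)) ^ (N-1)))
        ≤ Real.log (1 + P * T) := by
      have step1 : (∫ x in Ioc (0:ℝ) T, Real.log (1 + P * x) *
            ((N:ℝ) * Real.exp (-x) * (1 - Real.exp (-x)) ^ (N-1)))
          ≤ ∫ x in Ioc (0:ℝ) T, Real.log (1 + P * T) *
            ((N:ℝ) * Real.exp (-x) * (1 - Real.exp (-x)) ^ (N-1)) := by
        refine setIntegral_mono_on hInt1
          (IntegrableOn.mono_set ((integrableOn_f N le_rfl).const_mul _) Ioc_subset_Ioi_self)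
          measurableSet_Ioc ?_
        intro x hx
        obtain ⟨hx0, hxT⟩ := hx
        have he : Real.exp (-x) ≤ 1 := Real.exp_le_one_iff.mpr (by linarith)
        have hp : (0:ℝ) ≤ 1 - Real.exp (-x) := by linarith
        have hf0 : (0:ℝ) ≤ (N:ℝ) * Real.exp (-x) * (1 - Real.exp (-x)) ^ (N-1) := by positivity
        refine mul_le_mul_of_nonneg_right ?_ hf0
        exact Real.log_le_log (by nlinarith) (by nlinarith)
      have hf0ae : (0:ℝ→ℝ) ≤ᵐ[volume.restrict (Ioi (0:ℝ))]
          fun x => (N:ℝ) * Real.exp (-x) * (1 - Real.exp (-x)) ^ (N-1) := by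
        filter_upwards [ae_restrict_mem measurableSet_Ioi] with x hx
        have hx0 : (0:ℝ) < x := hx
        have he : Real.exp (-x) ≤ 1 := Real.exp_le_one_iff.mpr (by linarith)
        have hp : (0:ℝ) ≤ 1 - Real.exp (-x) := by linarith
        positivity
      have step2 : (∫ x in Ioc (0:ℝ) T,
            (N:ℝ) * Real.exp (-x) * (1 - Real.exp (-x)) ^ (N-1)) ≤ 1 := by
        have hmono : (∫ x in Ioc (0:ℝ) T,
              (N:ℝ) * Real.exp (-x) * (1 - Real.exp (-x)) ^ (N-1))
            ≤ ∫ x in Ioi (0:ℝ), (N:ℝ) * Real.exp (-x) * (1 - Real.exp (-x)) ^ (N-1) :=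
          setIntegral_mono_set (integrableOn_f N le_rfl) hf0ae
            (Ioc_subset_Ioi_self.eventuallyLE)
        rw [tail_f N le_rfl] at hmono
        simpa [Real.exp_zero, zero_pow (Nat.one_le_iff_ne_zero.mp hN1)] using hmono
      calc (∫ x in Ioc (0:ℝ) T, Real.log (1 + P * x) *
            ((N:ℝ) * Real.exp (-x) * (1 - Real.exp (-x)) ^ (N-1)))
          ≤ ∫ x in Ioc (0:ℝ) T, Real.log (1 + P * T) *
            ((N:ℝ) * Real.exp (-x) * (1 - Real.exp (-x)) ^ (N-1)) := step1
        _ = Real.log (1 + P * T) * ∫ x in Ioc (0:ℝ) T,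
            (N:ℝ) * Real.exp (-x) * (1 - Real.exp (-x)) ^ (N-1) := by
            rw [MeasureTheory.integral_const_mul]
        _ ≤ Real.log (1 + P * T) * 1 := mul_le_mul_of_nonneg_left step2 hlogT0
        _ = Real.log (1 + P * T) := mul_one _
    have hlogT : Real.log (1 + P * T) ≤ 2 * ll := by
      have h1' : Real.log (1 + P * T) ≤ Real.log ((1 + 2*P) * L) := by
        refine Real.log_le_log (by nlinarith) ?_
        rw [hTdef]; nlinarith
      rw [Real.log_mul (by nlinarith) (ne_of_gt hL0)] at h1'
      linarith
    -- bound on tail part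
    have hTexp : Real.exp (-T) = (N:ℝ)⁻¹ * (N:ℝ)⁻¹ := by
      rw [hTdef, show -(2*L) = -L + -L by ring, Real.exp_add, heL]
    have huB : (∫ x in Ioi T, Real.log (1 + P * x) *
          ((N:ℝ) * Real.exp (-x) * (1 - Real.exp (-x)) ^ (N-1))) ≤ 1 := by
      have step1 : (∫ x in Ioi T, Real.log (1 + P * x) *
            ((N:ℝ) * Real.exp (-x) * (1 - Real.exp (-x)) ^ (N-1)))
          ≤ ∫ x in Ioi T, P * (N:ℝ) * (x * Real.exp (-x)) := by
        refine setIntegral_mono_on hInt2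
          ((integrableOn_xexp (le_of_lt hT0)).const_mul (P * N)) measurableSet_Ioi ?_
        intro x hx
        exact g_le_bound hP N (lt_trans hT0 hx)
      rw [MeasureTheory.integral_const_mul, tail_xexp (le_of_lt hT0), hTexp] at step1
      refine le_trans step1 ?_
      have hcalc : P * (N:ℝ) * ((T + 1) * ((N:ℝ)⁻¹ * (N:ℝ)⁻¹))
          = P * (2 * L + 1) / (N:ℝ) := by
        rw [hTdef]; field_simp
      rw [hcalc]
      rw [div_le_one hNpos]
      exact hPN
    calc (∫ x in Ioc (0:ℝ) T, Real.log (1 + P * x) *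
          ((N:ℝ) * Real.exp (-x) * (1 - Real.exp (-x)) ^ (N-1)))
        + (∫ x in Ioi T, Real.log (1 + P * x) *
          ((N:ℝ) * Real.exp (-x) * (1 - Real.exp (-x)) ^ (N-1)))
        ≤ Real.log (1 + P * T) + 1 := add_le_add huA huB
      _ ≤ 2 * ll + ll := add_le_add hlogT hll1
      _ = 3 * ll := by ring
end

section
/- For every fixed real P > 0 there exist constants 0 < c₁ ≤ c₂ such that for all integers n ≥ 1 (writing N = 2n for the number of users): c₁ ≤ ((2n)! / (n! · (n−1)!)) · ∫_0^∞ log(1+Px) (1−e^{−x})^n e^{−nx} dx ≤ c₂. Consequently the total throughput of the median-user scheduler, which equals n times this integral expression, is Θ(N) in the number of users N, the optimal throughput scaling law. -/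
open Real Set MeasureTheory Finset Filter


private lemma int_exp_rate {b : ℝ} (hb : 0 < b) :
    ∫ x in Ioi (0:ℝ), Real.exp (-(b * x)) = 1 / b := by
  have h : ∀ x ∈ Ici (0:ℝ), HasDerivAt (fun y => -Real.exp (-(b * y)) / b)
      (Real.exp (-(b * x))) x := by
    intro x _
    have : HasDerivAt (fun y => -(b * y)) (-b) x := by
      have h := ((hasDerivAt_id x).const_mul b).neg
      simp only [id_eq, mul_one] at h
      exact h
    have := (this.exp).neg.div_const b
    exact this.congr_deriv (by rw [div_eq_iff hb.ne']; ring)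
  have hint : IntegrableOn (fun x => Real.exp (-(b * x))) (Ioi (0:ℝ)) := by
    simpa [neg_mul] using exp_neg_integrableOn_Ioi (0:ℝ) hb
  have htend : Tendsto (fun y => -Real.exp (-(b * y)) / b) atTop (nhds 0) := by
    have : Tendsto (fun y => Real.exp (-(b * y))) atTop (nhds 0) := by
      simpa [neg_mul] using Real.tendsto_exp_comp_nhds_zero.mpr
        (tendsto_id.const_mul_atTop_of_neg (by linarith) : Tendsto (fun y : ℝ => -b * y) atTop atBot)
    simpa using (this.neg).div_const b
  have := integral_Ioi_of_hasDerivAt_of_tendsto' h hint htend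
  rw [this]
  simp
  ring


private lemma g_int (a : ℕ) {b : ℝ} (hb : 0 < b) :
    IntegrableOn (fun x => (1 - Real.exp (-x)) ^ a * Real.exp (-(b * x))) (Ioi (0:ℝ)) := by
  have hint : IntegrableOn (fun x => Real.exp (-(b * x))) (Ioi (0:ℝ)) := by
    simpa [neg_mul] using exp_neg_integrableOn_Ioi (0:ℝ) hb
  refine hint.mono' ?_ ?_
  · exact (((continuous_const.sub (continuous_neg.rexp)).pow a).mul
      ((continuous_const.mul continuous_id).neg.rexp)).aestronglyMeasurable
  · filter_upwards [ae_restrict_mem measurableSet_Ioi] with x hx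
    have hx0 : (0:ℝ) < x := hx
    have h1 : Real.exp (-x) ≤ 1 := Real.exp_le_one_iff.mpr (by linarith)
    have h0 : 0 < Real.exp (-x) := Real.exp_pos _
    rw [norm_mul, norm_pow, Real.norm_eq_abs, Real.norm_eq_abs,
      abs_of_nonneg (by linarith), abs_of_nonneg (Real.exp_pos _).le]
    nlinarith [pow_le_one₀ (by linarith : (0:ℝ) ≤ 1 - Real.exp (-x)) (by linarith : 1 - Real.exp (-x) ≤ 1) (n := a), Real.exp_pos (-(b*x)), pow_nonneg (by linarith : (0:ℝ) ≤ 1 - Real.exp (-x)) a]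


private lemma g_eq (a : ℕ) : ∀ b : ℝ, 0 < b →
    ∫ x in Ioi (0:ℝ), (1 - Real.exp (-x)) ^ a * Real.exp (-(b * x)) =
      (Nat.factorial a : ℝ) / ∏ j ∈ range (a+1), (b + j) := by
  induction a with
  | zero =>
    intro b hb
    simpa using int_exp_rate hb
  | succ a ih =>
    intro b hb
    have key : ∀ x : ℝ, (1 - Real.exp (-x)) ^ (a+1) * Real.exp (-(b * x)) =
        (1 - Real.exp (-x)) ^ a * Real.exp (-(b * x)) -
        (1 - Real.exp (-x)) ^ a * Real.exp (-((b+1) * x)) := by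
      intro x
      rw [show -((b+1)*x) = -(b*x) + -x by ring, Real.exp_add, pow_succ]
      ring
    rw [show (fun x => (1 - Real.exp (-x)) ^ (a+1) * Real.exp (-(b * x)))
        = fun x => (1 - Real.exp (-x)) ^ a * Real.exp (-(b * x)) -
          (1 - Real.exp (-x)) ^ a * Real.exp (-((b+1) * x)) from funext key]
    rw [integral_sub (g_int a hb) (g_int a (by linarith : (0:ℝ) < b + 1)),
      ih b hb, ih (b+1) (by linarith)]
    -- algebra
    have hpos : ∀ (k : ℕ) (c : ℝ), 0 < c → (0:ℝ) < ∏ j ∈ range k, (c + j) := by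
      intro k c hc
      exact Finset.prod_pos (fun j _ => by positivity)
    have p1 : (0:ℝ) < ∏ j ∈ range (a+1), (b + j) := hpos _ _ hb
    have p2 : (0:ℝ) < ∏ j ∈ range (a+1), (b + 1 + j) := hpos _ _ (by linarith)
    have h1 : ∏ j ∈ range (a+2), (b + (j:ℝ)) = (∏ j ∈ range (a+1), (b + j)) * (b + (a+1)) := by
      rw [prod_range_succ]; push_cast; ring_nf
    have h2 : ∏ j ∈ range (a+2), (b + (j:ℝ)) = b * ∏ j ∈ range (a+1), (b + 1 + j) := by
      rw [prod_range_succ']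
      rw [Finset.prod_congr rfl (fun j _ => by push_cast; ring :
        ∀ j ∈ range (a+1), (b + ((j:ℕ)+1:ℕ)) = (b + 1 + (j:ℝ)))]
      push_cast; ring
    rw [h1]
    have hrel : (∏ j ∈ range (a+1), (b + (j:ℝ))) * (b + (a+1)) = b * ∏ j ∈ range (a+1), (b + 1 + j) := by
      rw [← h1, ← h2]
    rw [Nat.factorial_succ]
    push_cast
    rw [div_sub_div _ _ (ne_of_gt p1) (ne_of_gt p2), div_eq_div_iff (by positivity) (by positivity)]
    linear_combination (-(Nat.factorial a:ℝ) * (∏ j ∈ range (a+1), (b + (j:ℝ)))) * hrel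


private lemma prod_fact (m : ℕ) : ∀ a : ℕ,
    (Nat.factorial m) * ∏ j ∈ range a, (m + 1 + j) = Nat.factorial (m + a) := by
  intro a
  induction a with
  | zero => simp
  | succ a ih =>
    rw [prod_range_succ, ← mul_assoc, ih, show m + (a+1) = (m+a)+1 by omega,
      Nat.factorial_succ]
    ring

private lemma prod_cast (m a : ℕ) :
    ∏ j ∈ range a, ((m:ℝ) + 1 + j) = (Nat.factorial (m+a) : ℝ) / (Nat.factorial m : ℝ) := by
  rw [eq_div_iff (by positivity : (Nat.factorial m : ℝ) ≠ 0)]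
  rw [show ∏ j ∈ range a, ((m:ℝ) + 1 + j) = ((∏ j ∈ range a, (m + 1 + j) : ℕ) : ℝ) by
    push_cast; ring_nf]
  rw [← Nat.cast_mul, mul_comm, prod_fact]

private lemma low_ptwise {P x : ℝ} (hP : 0 < P) (hx : 0 < x) :
    Real.log (1+P) * (1 - Real.exp (-x)) ≤ Real.log (1 + P*x) := by
  have hlogP : 0 ≤ Real.log (1+P) := Real.log_nonneg (by linarith)
  have hex : 0 < Real.exp (-x) := Real.exp_pos _
  rcases le_or_gt 1 x with h1 | h1
  · have hle : Real.log (1+P) ≤ Real.log (1+P*x) := by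
      apply Real.log_le_log (by linarith)
      nlinarith
    nlinarith
  · have hb : 1 - Real.exp (-x) ≤ x := by nlinarith [Real.add_one_le_exp (-x)]
    have hconv : Real.exp ((1-x) * 0 + x * Real.log (1+P)) ≤
        (1-x) * Real.exp 0 + x * Real.exp (Real.log (1+P)) := by
      exact convexOn_exp.2 (Set.mem_univ (0:ℝ)) (Set.mem_univ (Real.log (1+P)))
        (by linarith) (le_of_lt hx) (by ring)
    rw [Real.exp_log (by linarith), Real.exp_zero] at hconv
    have hconv' : Real.exp (x * Real.log (1+P)) ≤ 1 + P * x := by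
      calc Real.exp (x * Real.log (1+P)) = Real.exp ((1-x) * 0 + x * Real.log (1+P)) := by ring_nf
        _ ≤ (1-x) * 1 + x * (1+P) := hconv
        _ = 1 + P * x := by ring
    have hxl : x * Real.log (1+P) ≤ Real.log (1 + P*x) :=
      (Real.le_log_iff_exp_le (by nlinarith)).2 hconv'
    nlinarith


-- integrability of the main integrand
private lemma f_int {P : ℝ} (hP : 0 < P) (n : ℕ) (hn : 1 ≤ n) :
    IntegrableOn (fun x => Real.log (1 + P*x) * (1 - Real.exp (-x)) ^ n *
      Real.exp (-((n:ℝ) * x))) (Ioi (0:ℝ)) := by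
  have base : IntegrableOn (fun x => Real.exp (-((1/2:ℝ) * x))) (Ioi (0:ℝ)) := by
    simpa [neg_mul] using exp_neg_integrableOn_Ioi (0:ℝ) (by norm_num : (0:ℝ) < 1/2)
  have hint : IntegrableOn (fun x => (2*P) * Real.exp (-((1/2) * x))) (Ioi (0:ℝ)) :=
    base.const_mul (2*P)
  refine hint.mono' ?_ ?_
  · apply Measurable.aestronglyMeasurable
    apply Measurable.mul
    apply Measurable.mul
    · exact Real.measurable_log.comp (measurable_const.add (measurable_id'.const_mul P))
    · exact (measurable_const.sub (measurable_id'.neg.exp)).pow_const n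
    · exact ((measurable_id'.const_mul ((n:ℝ))).neg).exp
  · filter_upwards [ae_restrict_mem measurableSet_Ioi] with x hx
    have hx0 : (0:ℝ) < x := hx
    have he1 : Real.exp (-x) ≤ 1 := Real.exp_le_one_iff.mpr (by linarith)
    have he0 : 0 < Real.exp (-x) := Real.exp_pos _
    have hb1 : 0 ≤ 1 - Real.exp (-x) := by linarith
    have hpow : (1 - Real.exp (-x)) ^ n ≤ 1 := pow_le_one₀ hb1 (by linarith)
    have hlog0 : 0 ≤ Real.log (1 + P*x) := Real.log_nonneg (by nlinarith)
    have hlog : Real.log (1 + P*x) ≤ P * x := by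
      have := Real.log_le_sub_one_of_pos (by nlinarith : (0:ℝ) < 1 + P*x)
      linarith
    have hexpmono : Real.exp (-((n:ℝ) * x)) ≤ Real.exp (-(1 * x)) := by
      apply Real.exp_le_exp.mpr
      have : (1:ℝ) ≤ (n:ℝ) := by exact_mod_cast hn
      nlinarith
    have hxe : x * Real.exp (-(1*x)) ≤ 2 * Real.exp (-((1/2) * x)) := by
      have h2 : x ≤ 2 * Real.exp ((1/2)*x) := by
        nlinarith [Real.add_one_le_exp ((1/2)*x)]
      have : x * Real.exp (-(1*x)) = (x) * Real.exp (-(1/2*x)) * Real.exp (-(1/2*x)) := by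
        rw [mul_assoc, ← Real.exp_add]; ring_nf
      rw [this]
      have hh : x * Real.exp (-(1/2*x)) ≤ 2 := by
        have e1 : Real.exp ((1/2)*x) * Real.exp (-(1/2*x)) = 1 := by
          rw [← Real.exp_add]; ring_nf; exact Real.exp_zero
        nlinarith [Real.exp_pos (-(1/2*x))]
      nlinarith [Real.exp_pos (-(1/2*x))]
    rw [Real.norm_eq_abs, abs_of_nonneg (by positivity)]
    calc Real.log (1 + P*x) * (1 - Real.exp (-x)) ^ n * Real.exp (-((n:ℝ) * x))
        ≤ (P*x) * 1 * Real.exp (-(1 * x)) := by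
          apply mul_le_mul
          · apply mul_le_mul hlog hpow (by positivity) (by nlinarith)
          · exact hexpmono
          · positivity
          · nlinarith
      _ ≤ 2*P * Real.exp (-((1/2) * x)) := by nlinarith


private lemma upper_ratio (P : ℝ) (k : ℕ) :
    ((Nat.factorial (2*(k+1+1)) : ℝ) / ((Nat.factorial (k+1+1) : ℝ) * (Nat.factorial ((k+1+1)-1) : ℝ)))
      * (P * ((Nat.factorial (k+3) : ℝ) /
          ((Nat.factorial (2*k+4) : ℝ) / (Nat.factorial k : ℝ))))
          = P * (((k:ℝ)+3) / ((k:ℝ)+1)) := by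
  have e1 : Nat.factorial (2*(k+1+1)) = Nat.factorial (2*k+4) := by
    rw [show 2*(k+1+1) = 2*k+4 from by omega]
  have e2 : (k+1+1) - 1 = k+1 := by omega
  have e3 : Nat.factorial (k+3) = (k+3) * Nat.factorial (k+2) := by
    rw [show k+3 = (k+2)+1 from by omega, Nat.factorial_succ]
  have e4 : Nat.factorial (k+2) = (k+2) * Nat.factorial (k+1) := by
    rw [show k+2 = (k+1)+1 from by omega, Nat.factorial_succ]
  have e5 : Nat.factorial (k+1) = (k+1) * Nat.factorial k := by
    rw [Nat.factorial_succ]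
  rw [e1, e2, e3, e4, e5]
  have h1 : (Nat.factorial (2*k+4):ℝ) ≠ 0 := by positivity
  have h3 : (Nat.factorial k:ℝ) ≠ 0 := by positivity
  have h4 : ((k:ℝ)+1) ≠ 0 := by positivity
  have h5 : ((k:ℝ)+2) ≠ 0 := by positivity
  push_cast
  generalize hF : ((Nat.factorial (2*k+4)):ℝ) = F at h1 ⊢
  generalize hG : ((Nat.factorial k):ℝ) = G at h3 ⊢
  field_simp

/-- For every fixed `P > 0` there are constants `0 < c₁ ≤ c₂` such that for all `n ≥ 1`
(with `N = 2n` users):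
`c₁ ≤ ((2n)!/(n!(n−1)!)) ∫_0^∞ log(1+Px)(1−e^{−x})^n e^{−nx} dx ≤ c₂`.
Hence the median-user scheduler's throughput, `n` times this quantity, is `Θ(N)`. -/
theorem median_user_rate_theta (P : ℝ) (hP : 0 < P) :
    ∃ c₁ c₂ : ℝ, 0 < c₁ ∧ c₁ ≤ c₂ ∧
      ∀ n : ℕ, 1 ≤ n →
        c₁ ≤ ((Nat.factorial (2 * n) : ℝ) /
              ((Nat.factorial n : ℝ) * (Nat.factorial (n - 1) : ℝ))) *
            ∫ x in Ioi (0 : ℝ),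
              Real.log (1 + P * x) * (1 - Real.exp (-x)) ^ n * Real.exp (-(n : ℝ) * x) ∧
        ((Nat.factorial (2 * n) : ℝ) /
              ((Nat.factorial n : ℝ) * (Nat.factorial (n - 1) : ℝ))) *
            ∫ x in Ioi (0 : ℝ),
              Real.log (1 + P * x) * (1 - Real.exp (-x)) ^ n * Real.exp (-(n : ℝ) * x) ≤
          c₂ := by
  have hlogP : 0 < Real.log (1 + P) := Real.log_pos (by linarith)
  have hlogle : Real.log (1 + P) ≤ P := by
    have := Real.log_le_sub_one_of_pos (by linarith : (0:ℝ) < 1 + P)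
    linarith
  refine ⟨Real.log (1 + P) / 2, 8 * P, by positivity, by linarith, ?_⟩
  intro n hn
  -- normalize integrand
  simp only [neg_mul]
  set C : ℝ := (Nat.factorial (2 * n) : ℝ) /
      ((Nat.factorial n : ℝ) * (Nat.factorial (n - 1) : ℝ)) with hC
  have hCpos : 0 < C := by rw [hC]; positivity
  set J : ℝ := ∫ x in Ioi (0 : ℝ),
      Real.log (1 + P * x) * (1 - Real.exp (-x)) ^ n * Real.exp (-((n:ℝ) * x)) with hJ
  have hfint := f_int hP n hn
  obtain ⟨m, rfl⟩ : ∃ m, n = m + 1 := ⟨n - 1, by omega⟩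
  have hnR : ((m:ℝ) + 1) = ((m + 1 : ℕ) : ℝ) := by push_cast; ring
  constructor
  · -- LOWER BOUND
    have hgint : IntegrableOn (fun x => Real.log (1+P) *
        ((1 - Real.exp (-x)) ^ (m+2) * Real.exp (-(((m:ℝ)+1) * x)))) (Ioi (0:ℝ)) :=
      (g_int (m+2) (by positivity : (0:ℝ) < (m:ℝ)+1)).const_mul _
    have hmono : ∫ x in Ioi (0:ℝ), Real.log (1+P) *
        ((1 - Real.exp (-x)) ^ (m+2) * Real.exp (-(((m:ℝ)+1) * x))) ≤ J := by
      rw [hJ]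
      apply setIntegral_mono_on hgint (by rw [hnR] at *; exact hfint) measurableSet_Ioi
      intro x hx
      have hx0 : (0:ℝ) < x := hx
      have he1 : Real.exp (-x) ≤ 1 := Real.exp_le_one_iff.mpr (by linarith)
      have hb1 : 0 ≤ 1 - Real.exp (-x) := by linarith
      have hkey := low_ptwise hP hx0
      have hexpand : (1 - Real.exp (-x)) ^ (m+2) = (1 - Real.exp (-x)) * (1 - Real.exp (-x)) ^ (m+1) := by
        rw [← pow_succ']
      rw [hexpand]
      have hfac : 0 ≤ (1 - Real.exp (-x)) ^ (m+1) * Real.exp (-(((m:ℝ)+1) * x)) := by positivity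
      have hcast : ((m+1:ℕ):ℝ) = (m:ℝ)+1 := by push_cast; ring
      rw [hcast]
      calc Real.log (1+P) * ((1 - Real.exp (-x)) * (1 - Real.exp (-x)) ^ (m+1) *
              Real.exp (-(((m:ℝ)+1) * x)))
          = (Real.log (1+P) * (1 - Real.exp (-x))) *
              ((1 - Real.exp (-x)) ^ (m+1) * Real.exp (-(((m:ℝ)+1) * x))) := by ring
        _ ≤ Real.log (1 + P*x) *
              ((1 - Real.exp (-x)) ^ (m+1) * Real.exp (-(((m:ℝ)+1) * x))) := by
            exact mul_le_mul_of_nonneg_right hkey hfac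
        _ = Real.log (1 + P*x) * (1 - Real.exp (-x)) ^ (m+1) * Real.exp (-(((m:ℝ)+1) * x)) := by ring
    have hval : ∫ x in Ioi (0:ℝ), Real.log (1+P) *
        ((1 - Real.exp (-x)) ^ (m+2) * Real.exp (-(((m:ℝ)+1) * x)))
        = Real.log (1+P) * ((Nat.factorial (m+2) : ℝ) /
            ((Nat.factorial (2*m+3) : ℝ) / (Nat.factorial m : ℝ))) := by
      rw [integral_const_mul, g_eq (m+2) ((m:ℝ)+1) (by positivity)]
      congr 1
      rw [show ∏ j ∈ range (m+3), ((m:ℝ)+1+j) = (Nat.factorial (2*m+3) : ℝ) / (Nat.factorial m : ℝ) from by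
        rw [prod_cast m (m+3), show m + (m+3) = 2*m+3 from by omega]]
    have hCval : C * (Real.log (1+P) * ((Nat.factorial (m+2) : ℝ) /
        ((Nat.factorial (2*m+3) : ℝ) / (Nat.factorial m : ℝ))))
        = Real.log (1+P) * (((m:ℝ)+2) / (2*(m:ℝ)+3)) := by
      rw [hC]
      have e1 : Nat.factorial (2*(m+1)) = Nat.factorial (2*m+2) := by rw [show 2*(m+1) = 2*m+2 from by omega]
      have e2 : (m+1) - 1 = m := by omega
      have e3 : Nat.factorial (2*m+3) = (2*m+3) * Nat.factorial (2*m+2) := by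
        rw [show 2*m+3 = (2*m+2)+1 by omega, Nat.factorial_succ]
      have e4 : Nat.factorial (m+2) = (m+2) * Nat.factorial (m+1) := by
        rw [show m+2 = (m+1)+1 by omega, Nat.factorial_succ]
      rw [e1, e2, e3, e4]
      push_cast
      have h1 : (0:ℝ) < Nat.factorial (2*m+2) := by positivity
      have h2 : (0:ℝ) < Nat.factorial (m+1) := by positivity
      have h3 : (0:ℝ) < Nat.factorial m := by positivity
      field_simp
    have step : C * (Real.log (1+P) * ((Nat.factorial (m+2) : ℝ) /
        ((Nat.factorial (2*m+3) : ℝ) / (Nat.factorial m : ℝ)))) ≤ C * J := by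
      apply mul_le_mul_of_nonneg_left _ hCpos.le
      rw [← hval]; exact hmono
    rw [hCval] at step
    refine le_trans ?_ step
    have : Real.log (1+P) / 2 ≤ Real.log (1+P) * (((m:ℝ)+2) / (2*(m:ℝ)+3)) := by
      rw [div_le_iff₀ (by norm_num : (0:ℝ) < 2)]
      rw [mul_comm (Real.log (1+P)) _, mul_assoc]
      have hfrac : (1:ℝ) ≤ (((m:ℝ)+2) / (2*(m:ℝ)+3)) * 2 := by
        rw [div_mul_eq_mul_div, le_div_iff₀ (by positivity : (0:ℝ) < 2*(m:ℝ)+3)]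
        ring_nf; linarith
      nlinarith
    exact this
  · -- UPPER BOUND
    have hbase : IntegrableOn (fun x => Real.exp (-((1/2:ℝ) * x))) (Ioi (0:ℝ)) := by
      simpa [neg_mul] using exp_neg_integrableOn_Ioi (0:ℝ) (by norm_num : (0:ℝ) < 1/2)
    rcases Nat.eq_zero_or_pos m with hm0 | hmpos
    · -- n = 1
      subst hm0
      have hC2 : C = 2 := by rw [hC]; norm_num [Nat.factorial]
      have hmono : J ≤ ∫ x in Ioi (0:ℝ), (2*P) * Real.exp (-((1/2:ℝ) * x)) := by
        rw [hJ]
        apply setIntegral_mono_on hfint (hbase.const_mul (2*P)) measurableSet_Ioi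
        intro x hx
        have hx0 : (0:ℝ) < x := hx
        have hPx : 0 < P * x := mul_pos hP hx0
        have he1 : Real.exp (-x) ≤ 1 := Real.exp_le_one_iff.mpr (by linarith)
        have he0 : 0 < Real.exp (-x) := Real.exp_pos _
        have hb1 : 0 ≤ 1 - Real.exp (-x) := by linarith
        have hlog : Real.log (1 + P*x) ≤ P * x := by
          have := Real.log_le_sub_one_of_pos (by linarith : (0:ℝ) < 1 + P*x)
          linarith
        have hlog0 : 0 ≤ Real.log (1 + P*x) := Real.log_nonneg (by linarith)
        have hcast : ((0+1:ℕ):ℝ) = (1:ℝ) := by norm_num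
        have hxe : x * Real.exp (-(1*x)) ≤ 2 * Real.exp (-((1/2:ℝ) * x)) := by
          have h2 : x ≤ 2 * Real.exp ((1/2)*x) := by
            nlinarith [Real.add_one_le_exp ((1/2)*x)]
          have hsplit : x * Real.exp (-(1*x)) = x * Real.exp (-(1/2*x)) * Real.exp (-(1/2*x)) := by
            rw [mul_assoc, ← Real.exp_add]; ring_nf
          rw [hsplit]
          have e1 : Real.exp ((1/2)*x) * Real.exp (-(1/2*x)) = 1 := by
            rw [← Real.exp_add]; ring_nf; exact Real.exp_zero
          have hh : x * Real.exp (-(1/2*x)) ≤ 2 := by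
            nlinarith [Real.exp_pos (-(1/2*x))]
          nlinarith [Real.exp_pos (-(1/2*x))]
        calc Real.log (1 + P*x) * (1 - Real.exp (-x)) ^ (0+1) * Real.exp (-(((0+1:ℕ):ℝ) * x))
            ≤ (P*x) * 1 * Real.exp (-(1 * x)) := by
              rw [hcast]
              have hpow : (1 - Real.exp (-x)) ^ (0+1) ≤ 1 := by
                rw [pow_succ, pow_zero, one_mul]; linarith
              apply mul_le_mul _ le_rfl (Real.exp_pos _).le (by positivity)
              apply mul_le_mul hlog hpow (by positivity) (by linarith)
          _ ≤ (2*P) * Real.exp (-((1/2:ℝ) * x)) := by nlinarith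
      have hintval : ∫ x in Ioi (0:ℝ), (2*P) * Real.exp (-((1/2:ℝ) * x)) = 4*P := by
        rw [integral_const_mul, int_exp_rate (by norm_num : (0:ℝ) < 1/2)]
        ring
      rw [hC2]
      rw [hintval] at hmono
      linarith
    · -- n = k + 2
      obtain ⟨k, rfl⟩ : ∃ k, m = k + 1 := ⟨m - 1, by omega⟩
      have hgint2 : IntegrableOn (fun x => P *
          ((1 - Real.exp (-x)) ^ (k+3) * Real.exp (-(((k:ℝ)+1) * x)))) (Ioi (0:ℝ)) :=
        (g_int (k+3) (by positivity : (0:ℝ) < (k:ℝ)+1)).const_mul _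
      have hmono : J ≤ ∫ x in Ioi (0:ℝ), P *
          ((1 - Real.exp (-x)) ^ (k+3) * Real.exp (-(((k:ℝ)+1) * x))) := by
        rw [hJ]
        apply setIntegral_mono_on hfint hgint2 measurableSet_Ioi
        intro x hx
        have hx0 : (0:ℝ) < x := hx
        have hPx : 0 < P * x := mul_pos hP hx0
        have he1 : Real.exp (-x) ≤ 1 := Real.exp_le_one_iff.mpr (by linarith)
        have he0 : 0 < Real.exp (-x) := Real.exp_pos _
        have hb1 : 0 ≤ 1 - Real.exp (-x) := by linarith
        have hlog : Real.log (1 + P*x) ≤ P * x := by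
          have := Real.log_le_sub_one_of_pos (by linarith : (0:ℝ) < 1 + P*x)
          linarith
        have hlog0 : 0 ≤ Real.log (1 + P*x) := Real.log_nonneg (by linarith)
        have hcast : ((k+1+1:ℕ):ℝ) = (k:ℝ)+2 := by push_cast; ring
        rw [hcast]
        have hxexp : x ≤ Real.exp x - 1 := by nlinarith [Real.add_one_le_exp x]
        have hid : (Real.exp x - 1) * Real.exp (-(((k:ℝ)+2) * x))
            = (1 - Real.exp (-x)) * Real.exp (-(((k:ℝ)+1) * x)) := by
          rw [show -(((k:ℝ)+2)*x) = -(((k:ℝ)+1)*x) + -x by ring, Real.exp_add]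
          have e1 : Real.exp (-x) * Real.exp x = 1 := by
            rw [← Real.exp_add]; simp
          linear_combination (Real.exp (-(((k:ℝ)+1)*x))) * e1
        have hEpos : 0 < Real.exp (-(((k:ℝ)+2) * x)) := Real.exp_pos _
        calc Real.log (1 + P*x) * (1 - Real.exp (-x)) ^ (k+1+1) * Real.exp (-(((k:ℝ)+2) * x))
            ≤ (P * x) * (1 - Real.exp (-x)) ^ (k+2) * Real.exp (-(((k:ℝ)+2) * x)) := by
              apply mul_le_mul_of_nonneg_right _ hEpos.le
              exact mul_le_mul_of_nonneg_right hlog (by positivity)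
          _ ≤ (P * (Real.exp x - 1)) * (1 - Real.exp (-x)) ^ (k+2) * Real.exp (-(((k:ℝ)+2) * x)) := by
              apply mul_le_mul_of_nonneg_right _ hEpos.le
              apply mul_le_mul_of_nonneg_right _ (by positivity)
              exact mul_le_mul_of_nonneg_left hxexp hP.le
          _ = P * ((1 - Real.exp (-x)) ^ (k+3) * Real.exp (-(((k:ℝ)+1) * x))) := by
              have : (1 - Real.exp (-x)) ^ (k+3) = (1 - Real.exp (-x)) ^ (k+2) * (1 - Real.exp (-x)) := by
                rw [← pow_succ]
              rw [this]
              calc (P * (Real.exp x - 1)) * (1 - Real.exp (-x)) ^ (k+2) * Real.exp (-(((k:ℝ)+2) * x))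
                  = P * (1 - Real.exp (-x)) ^ (k+2) * ((Real.exp x - 1) * Real.exp (-(((k:ℝ)+2) * x))) := by ring
                _ = P * (1 - Real.exp (-x)) ^ (k+2) * ((1 - Real.exp (-x)) * Real.exp (-(((k:ℝ)+1) * x))) := by rw [hid]
                _ = P * ((1 - Real.exp (-x)) ^ (k+2) * (1 - Real.exp (-x)) * Real.exp (-(((k:ℝ)+1) * x))) := by ring
      have hval2 : ∫ x in Ioi (0:ℝ), P *
          ((1 - Real.exp (-x)) ^ (k+3) * Real.exp (-(((k:ℝ)+1) * x)))
          = P * ((Nat.factorial (k+3) : ℝ) /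
            ((Nat.factorial (2*k+4) : ℝ) / (Nat.factorial k : ℝ))) := by
        rw [integral_const_mul, g_eq (k+3) ((k:ℝ)+1) (by positivity)]
        congr 1
        rw [show ∏ j ∈ range (k+4), ((k:ℝ)+1+j) = (Nat.factorial (2*k+4) : ℝ) / (Nat.factorial k : ℝ) from by
          rw [prod_cast k (k+4), show k + (k+4) = 2*k+4 from by omega]]
      have hCval2 : C * (P * ((Nat.factorial (k+3) : ℝ) /
          ((Nat.factorial (2*k+4) : ℝ) / (Nat.factorial k : ℝ))))
          = P * (((k:ℝ)+3) / ((k:ℝ)+1)) := by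
        rw [hC]
        exact upper_ratio P k
      have step : C * J ≤ P * (((k:ℝ)+3) / ((k:ℝ)+1)) := by
        rw [← hCval2]
        apply mul_le_mul_of_nonneg_left _ hCpos.le
        rw [← hval2]; exact hmono
      have hfrac : P * (((k:ℝ)+3) / ((k:ℝ)+1)) ≤ 8 * P := by
        have hk1 : (0:ℝ) < (k:ℝ)+1 := by positivity
        have h3 : ((k:ℝ)+3) / ((k:ℝ)+1) ≤ 3 := by
          rw [div_le_iff₀ hk1]; linarith
        calc P * (((k:ℝ)+3) / ((k:ℝ)+1)) ≤ P * 3 := mul_le_mul_of_nonneg_left h3 hP.le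
          _ ≤ 8 * P := by linarith
      exact le_trans step hfrac
end

section
/- Fix a real c > 0 and define for integers N ≥ 1 the sum S(N) = Σ_{m=0}^∞ [ 1 − ( e^{−c} Σ_{l=0}^{m−1} c^l/l! )^N ] (the m = 0 term equals 1, the empty sum being 0). Then S(N) = Θ(log N / log log N): there exist constants 0 < c₁ ≤ c₂ and N₀ such that c₁ · (log N / log log N) ≤ S(N) ≤ c₂ · (log N / log log N) for all N ≥ N₀. -/
open Real Finset

namespace PoissonThetaAux
open Filter

/-- The CDF-like quantity. -/
noncomputable def Fc (c : ℝ) (m : ℕ) : ℝ :=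
  Real.exp (-c) * ∑ l ∈ Finset.range m, c ^ l / (Nat.factorial l : ℝ)

lemma hasSum_exp' (c : ℝ) :
    HasSum (fun n : ℕ => c ^ n / (Nat.factorial n : ℝ)) (Real.exp c) := by
  rw [Real.exp_eq_exp_ℝ]; exact NormedSpace.expSeries_div_hasSum_exp c

lemma exp_neg_mul_exp (c : ℝ) : Real.exp (-c) * Real.exp c = 1 := by
  rw [← Real.exp_add]; simp

lemma Fc_nonneg {c : ℝ} (hc : 0 < c) (m : ℕ) : 0 ≤ Fc c m :=
  mul_nonneg (Real.exp_pos _).le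
    (Finset.sum_nonneg fun l _ => div_nonneg (pow_nonneg hc.le l) (Nat.cast_nonneg _))

lemma Fc_le_one {c : ℝ} (hc : 0 < c) (m : ℕ) : Fc c m ≤ 1 := by
  have h := Real.sum_le_exp_of_nonneg hc.le m
  have h2 : Fc c m ≤ Real.exp (-c) * Real.exp c :=
    mul_le_mul_of_nonneg_left h (Real.exp_pos _).le
  rwa [exp_neg_mul_exp] at h2

lemma tail_eq (c : ℝ) (m : ℕ) :
    1 - Fc c m = Real.exp (-c) * ∑' k : ℕ, c ^ (k + m) / (Nat.factorial (k + m) : ℝ) := by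
  have hs := (hasSum_exp' c).summable
  have h := Summable.sum_add_tsum_nat_add (f := fun n => c ^ n / (Nat.factorial n : ℝ)) m hs
  rw [(hasSum_exp' c).tsum_eq] at h
  have h2 : (∑' k : ℕ, c ^ (k + m) / (Nat.factorial (k + m) : ℝ))
      = Real.exp c - ∑ l ∈ Finset.range m, c ^ l / (Nat.factorial l : ℝ) := by linarith
  rw [Fc, h2, mul_sub, exp_neg_mul_exp]

lemma shift_summable (c : ℝ) (m : ℕ) :
    Summable (fun k : ℕ => c ^ (k + m) / (Nat.factorial (k + m) : ℝ)) :=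
  (summable_nat_add_iff m).mpr (hasSum_exp' c).summable

lemma factorial_split {c : ℝ} (hc : 0 < c) (k m : ℕ) :
    c ^ (k + m) / (Nat.factorial (k + m) : ℝ)
      ≤ (c ^ m / (Nat.factorial m : ℝ)) * (c ^ k / (Nat.factorial k : ℝ)) := by
  have hd : (Nat.factorial m * Nat.factorial k : ℕ) ≤ Nat.factorial (k + m) := by
    have h := Nat.factorial_mul_factorial_dvd_factorial_add m k
    rw [Nat.add_comm m k] at h
    exact Nat.le_of_dvd (Nat.factorial_pos _) h
  have h1 : c ^ (k + m) / (Nat.factorial (k + m) : ℝ)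
      ≤ c ^ (k + m) / ((Nat.factorial m * Nat.factorial k : ℕ) : ℝ) := by
    apply div_le_div_of_nonneg_left (by positivity) (by positivity)
    exact_mod_cast hd
  refine h1.trans_eq ?_
  push_cast
  rw [pow_add]
  have hm : (Nat.factorial m : ℝ) ≠ 0 := by positivity
  have hk : (Nat.factorial k : ℝ) ≠ 0 := by positivity
  field_simp

lemma tail_ge {c : ℝ} (hc : 0 < c) (m : ℕ) :
    Real.exp (-c) * (c ^ m / (Nat.factorial m : ℝ)) ≤ 1 - Fc c m := by
  rw [tail_eq]
  have h0 := Summable.le_tsum (shift_summable c m) 0 (fun j _ => by positivity)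
  simp only [zero_add] at h0
  exact mul_le_mul_of_nonneg_left h0 (Real.exp_pos _).le

lemma tail_le {c : ℝ} (hc : 0 < c) (m : ℕ) :
    1 - Fc c m ≤ c ^ m / (Nat.factorial m : ℝ) := by
  rw [tail_eq]
  have hsg : Summable
      (fun k : ℕ => (c ^ m / (Nat.factorial m : ℝ)) * (c ^ k / (Nat.factorial k : ℝ))) :=
    ((hasSum_exp' c).summable).mul_left _
  have h := Summable.tsum_le_tsum (fun k => factorial_split hc k m) (shift_summable c m) hsg
  rw [Summable.tsum_mul_left _ (hasSum_exp' c).summable, (hasSum_exp' c).tsum_eq] at h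
  have h2 : Real.exp (-c) * (∑' k : ℕ, c ^ (k + m) / (Nat.factorial (k + m) : ℝ))
      ≤ Real.exp (-c) * (c ^ m / (Nat.factorial m : ℝ) * Real.exp c) :=
    mul_le_mul_of_nonneg_left h (Real.exp_pos _).le
  refine h2.trans_eq ?_
  have he := exp_neg_mul_exp c
  linear_combination (c ^ m / (Nat.factorial m : ℝ)) * he

lemma one_sub_pow_le {x : ℝ} (hx0 : 0 ≤ x) (hx1 : x ≤ 1) (N : ℕ) :
    1 - x ^ N ≤ (N : ℝ) * (1 - x) := by
  have h := geom_sum_mul x N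
  have hsum : ∑ i ∈ Finset.range N, x ^ i ≤ (N : ℝ) := by
    calc ∑ i ∈ Finset.range N, x ^ i ≤ ∑ _i ∈ Finset.range N, (1 : ℝ) :=
          Finset.sum_le_sum fun i _ => pow_le_one₀ hx0 hx1
      _ = N := by simp
  have e : 1 - x ^ N = (∑ i ∈ Finset.range N, x ^ i) * (1 - x) := by
    linear_combination h
  rw [e]
  exact mul_le_mul_of_nonneg_right hsum (by linarith)

end PoissonThetaAux

open PoissonThetaAux Filter

set_option maxHeartbeats 2000000 in
/-- Fix `c > 0` and set `S(N) = Σ_{m=0}^∞ [1 − (e^{−c} Σ_{l=0}^{m−1} c^l/l!)^N]`.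
Then `S(N) = Θ(log N / log log N)`. -/
theorem poisson_tail_sum_theta (c : ℝ) (hc : 0 < c) :
    ∃ c₁ c₂ : ℝ, ∃ N₀ : ℕ, 0 < c₁ ∧ c₁ ≤ c₂ ∧
      ∀ N : ℕ, N₀ ≤ N →
        c₁ * (Real.log N / Real.log (Real.log N)) ≤
            (∑' m : ℕ, (1 - (Real.exp (-c) *
              ∑ l ∈ Finset.range m, c ^ l / (Nat.factorial l : ℝ)) ^ N)) ∧
          (∑' m : ℕ, (1 - (Real.exp (-c) *
              ∑ l ∈ Finset.range m, c ^ l / (Nat.factorial l : ℝ)) ^ N)) ≤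
            c₂ * (Real.log N / Real.log (Real.log N)) := by
  set b : ℝ := |Real.log c| with hb
  have hb0 : 0 ≤ b := by rw [hb]; exact abs_nonneg _
  set C₀ : ℝ := 9 + 4 * b with hC₀
  have hC₀pos : (0:ℝ) < C₀ := by rw [hC₀]; positivity
  -- eventual facts
  have hyy : Tendsto (fun N : ℕ => Real.log (Real.log N)) atTop atTop :=
    Real.tendsto_log_atTop.comp (Real.tendsto_log_atTop.comp tendsto_natCast_atTop_atTop)
  have hA : ∀ᶠ N : ℕ in atTop, Real.exp (Real.exp C₀) ≤ (N : ℝ) :=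
    tendsto_natCast_atTop_atTop.eventually_ge_atTop _
  have hlo : ∀ᶠ t : ℝ in atTop, ‖Real.log t‖ ≤ (1/4 : ℝ) * ‖t‖ := by
    have := Asymptotics.isLittleO_iff.mp Real.isLittleO_log_id_atTop
      (show (0:ℝ) < 1/4 by norm_num)
    simpa using this
  have hB : ∀ᶠ N : ℕ in atTop,
      Real.log (Real.log (Real.log N)) ≤ Real.log (Real.log N) / 4 := by
    filter_upwards [hyy.eventually hlo, hyy.eventually_ge_atTop 0] with N h1 h2
    have h3 := le_trans (le_abs_self _) h1
    rw [Real.norm_eq_abs, abs_of_nonneg h2] at h3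
    linarith
  have hxpos : ∀ᶠ N : ℕ in atTop, (0:ℝ) < Real.log N := by
    filter_upwards [tendsto_natCast_atTop_atTop.eventually_ge_atTop (2:ℝ)] with N h
    exact Real.log_pos (by linarith)
  have hLtop : Tendsto (fun N : ℕ => Real.log N / Real.log (Real.log N)) atTop atTop := by
    have h2 : Tendsto (fun t : ℝ => Real.exp t / t ^ 1) atTop atTop :=
      Real.tendsto_exp_div_pow_atTop 1
    refine Tendsto.congr' ?_ (h2.comp hyy)
    filter_upwards [hxpos] with N hx
    simp only [Function.comp_apply, pow_one]
    rw [Real.exp_log hx]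
  set K : ℝ := max 4 (max (4 * c) ((1 + Real.exp c) / 2 + 1)) with hK
  have hC : ∀ᶠ N : ℕ in atTop, K ≤ Real.log N / Real.log (Real.log N) :=
    hLtop.eventually_ge_atTop K
  have Hmain : ∀ᶠ N : ℕ in atTop,
      (1/8 : ℝ) * (Real.log N / Real.log (Real.log N)) ≤
          (∑' m : ℕ, (1 - (Real.exp (-c) *
            ∑ l ∈ Finset.range m, c ^ l / (Nat.factorial l : ℝ)) ^ N)) ∧
        (∑' m : ℕ, (1 - (Real.exp (-c) *
            ∑ l ∈ Finset.range m, c ^ l / (Nat.factorial l : ℝ)) ^ N)) ≤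
          (4 : ℝ) * (Real.log N / Real.log (Real.log N)) := by
    filter_upwards [hA, hB, hC] with N hN1 hN2 hN3
    set x : ℝ := Real.log N with hxdef
    set y : ℝ := Real.log x with hydef
    set z : ℝ := Real.log y with hzdef
    set L : ℝ := x / y with hLdef
    have hNpos : (0:ℝ) < N := lt_of_lt_of_le (Real.exp_pos _) hN1
    have hx : Real.exp C₀ ≤ x := by
      have := Real.log_le_log (Real.exp_pos _) hN1
      rwa [Real.log_exp] at this
    have hx0 : (0:ℝ) < x := lt_of_lt_of_le (Real.exp_pos _) hx
    have hy : C₀ ≤ y := by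
      have := Real.log_le_log (Real.exp_pos _) hx
      rwa [Real.log_exp] at this
    have hy0 : (0:ℝ) < y := lt_of_lt_of_le hC₀pos hy
    have hy1 : (1:ℝ) ≤ y := by rw [hC₀] at hy; linarith
    have hyb : 4 * b ≤ y := by rw [hC₀] at hy; linarith
    have hz0 : (0:ℝ) ≤ z := by rw [hzdef]; exact Real.log_nonneg hy1
    have hz : z ≤ y / 4 := hN2
    have hL4 : (4:ℝ) ≤ L := le_trans (le_max_left _ _) hN3
    have hLc : 4 * c ≤ L := le_trans (le_trans (le_max_left _ _) (le_max_right _ _)) hN3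
    have hLe : (1 + Real.exp c) / 2 + 1 ≤ L :=
      le_trans (le_trans (le_max_right _ _) (le_max_right _ _)) hN3
    have hL0 : (0:ℝ) < L := by linarith
    have hxLy : L * y = x := div_mul_cancel₀ x hy0.ne'
    have hxL : L ≤ x := by nlinarith
    have hlogL : Real.log L = y - z := by
      rw [hLdef, Real.log_div hx0.ne' hy0.ne', ← hydef, ← hzdef]
    have hN1' : (1:ℝ) ≤ (N:ℝ) := by
      have : (1:ℝ) ≤ Real.exp (Real.exp C₀) := Real.one_le_exp (Real.exp_pos _).le
      linarith
    -- the summand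
    set a : ℕ → ℝ := fun m => 1 - Fc c m ^ N with hadef
    have hgoal_eq : (∑' m : ℕ, (1 - (Real.exp (-c) *
        ∑ l ∈ Finset.range m, c ^ l / (Nat.factorial l : ℝ)) ^ N)) = ∑' m, a m := rfl
    have ha0 : ∀ m, 0 ≤ a m := fun m => by
      have := pow_le_one₀ (n := N) (Fc_nonneg hc m) (Fc_le_one hc m)
      simp only [hadef]; linarith
    have ha1 : ∀ m, a m ≤ 1 := fun m => by
      have := pow_nonneg (Fc_nonneg hc m) N
      simp only [hadef]; linarith
    have haN : ∀ m, a m ≤ (N:ℝ) * (c ^ m / (Nat.factorial m : ℝ)) := fun m => by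
      have h1 := one_sub_pow_le (Fc_nonneg hc m) (Fc_le_one hc m) N
      have h2 := tail_le hc m
      calc a m ≤ (N:ℝ) * (1 - Fc c m) := h1
        _ ≤ (N:ℝ) * (c ^ m / (Nat.factorial m : ℝ)) :=
            mul_le_mul_of_nonneg_left h2 (Nat.cast_nonneg N)
    have hasum : Summable a :=
      Summable.of_nonneg_of_le ha0 haN ((Real.summable_pow_div_factorial c).mul_left _)
    clear_value x y z L a
    constructor
    · -- LOWER BOUND
      set M' : ℕ := ⌊L / 2⌋₊ with hM'def
      have hM'le : (M' : ℝ) ≤ L / 2 := Nat.floor_le (by positivity)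
      have hM'ge : L / 2 - 1 ≤ (M' : ℝ) := by
        have := Nat.lt_floor_add_one (L / 2); linarith
      have hM'4 : L / 4 ≤ (M' : ℝ) := by linarith
      have hM'pos : (0:ℝ) < (M' : ℝ) := by linarith
      have hM'1 : (1:ℝ) ≤ (M' : ℝ) := by linarith
      clear_value M'
      have hcond : ∀ m, m < M' → Real.exp c * (Nat.factorial m : ℝ) ≤ (N:ℝ) * c ^ m := by
        intro m hm
        have hm' : (m : ℝ) ≤ (M' : ℝ) := by exact_mod_cast hm.le
        have hfac : (Nat.factorial m : ℝ) ≤ ((M' : ℝ)) ^ M' := by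
          have h6 : Nat.factorial m ≤ Nat.factorial M' := Nat.factorial_le hm.le
          have h7 : Nat.factorial M' ≤ M' ^ M' := Nat.factorial_le_pow _
          exact_mod_cast le_trans h6 h7
        have hlogfac : Real.log (Nat.factorial m : ℝ) ≤ (M' : ℝ) * Real.log (M' : ℝ) := by
          calc Real.log (Nat.factorial m : ℝ) ≤ Real.log (((M' : ℝ)) ^ M') :=
                Real.log_le_log (by positivity) hfac
            _ = (M' : ℝ) * Real.log (M' : ℝ) := Real.log_pow _ _
        have hlogM'0 : 0 ≤ Real.log (M' : ℝ) := Real.log_nonneg hM'1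
        have hlogM' : Real.log (M' : ℝ) ≤ y := by
          calc Real.log (M' : ℝ) ≤ Real.log L := Real.log_le_log hM'pos (by linarith)
            _ = y - z := hlogL
            _ ≤ y := by linarith
        have h8 : (M' : ℝ) * Real.log (M' : ℝ) ≤ x / 2 := by
          have e1 : (L / 2) * y = x / 2 := by rw [div_mul_eq_mul_div, hxLy]
          calc (M' : ℝ) * Real.log (M' : ℝ) ≤ (L / 2) * Real.log (M' : ℝ) :=
                mul_le_mul_of_nonneg_right hM'le hlogM'0
            _ ≤ (L / 2) * y := mul_le_mul_of_nonneg_left hlogM' (by linarith)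
            _ = x / 2 := e1
        have h10 : (M' : ℝ) * b ≤ x / 8 := by
          have p1 : (M' : ℝ) * b ≤ (L / 2) * b := mul_le_mul_of_nonneg_right hM'le hb0
          nlinarith [mul_nonneg hL0.le (sub_nonneg.mpr hyb)]
        have hcx : c ≤ x / 4 := by linarith
        have hmlogc : -((M' : ℝ) * b) ≤ (m : ℝ) * Real.log c := by
          have hlcb : -Real.log c ≤ b := by rw [hb]; exact neg_le_abs _
          have p1 : (m : ℝ) * (-Real.log c) ≤ (m : ℝ) * b :=
            mul_le_mul_of_nonneg_left hlcb (Nat.cast_nonneg m)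
          have p2 : (m : ℝ) * b ≤ (M' : ℝ) * b :=
            mul_le_mul_of_nonneg_right hm' hb0
          nlinarith
        have key3 : c + Real.log (Nat.factorial m : ℝ) ≤ x + (m : ℝ) * Real.log c := by
          linarith
        calc Real.exp c * (Nat.factorial m : ℝ)
            = Real.exp (c + Real.log (Nat.factorial m : ℝ)) := by
              rw [Real.exp_add, Real.exp_log (by positivity)]
          _ ≤ Real.exp (x + (m : ℝ) * Real.log c) := Real.exp_le_exp.mpr key3
          _ = (N:ℝ) * c ^ m := by
              rw [Real.exp_add, hxdef, Real.exp_log hNpos, Real.exp_nat_mul, Real.exp_log hc]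
      have hhalf : ∀ m, m < M' → (1:ℝ)/2 ≤ a m := by
        intro m hm
        have ht := tail_ge hc m
        have h12 := hcond m hm
        have h11 : 1 ≤ (N:ℝ) * (Real.exp (-c) * (c ^ m / (Nat.factorial m : ℝ))) := by
          have e1 : (N:ℝ) * (Real.exp (-c) * (c ^ m / (Nat.factorial m : ℝ)))
              = ((N:ℝ) * c ^ m) / (Real.exp c * (Nat.factorial m : ℝ)) := by
            rw [Real.exp_neg]; field_simp
          rw [e1]
          exact (one_le_div (by positivity)).mpr h12
        have hNt : 1 ≤ (N:ℝ) * (1 - Fc c m) :=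
          le_trans h11 (mul_le_mul_of_nonneg_left ht (Nat.cast_nonneg N))
        have hFexp : Fc c m ≤ Real.exp (-(1 - Fc c m)) := by
          have := Real.add_one_le_exp (-(1 - Fc c m)); linarith
        have hFle : Fc c m ^ N ≤ Real.exp (-((N:ℝ) * (1 - Fc c m))) := by
          calc Fc c m ^ N ≤ (Real.exp (-(1 - Fc c m))) ^ N :=
                pow_le_pow_left₀ (Fc_nonneg hc m) hFexp N
            _ = Real.exp ((N:ℝ) * -(1 - Fc c m)) := (Real.exp_nat_mul _ N).symm
            _ = Real.exp (-((N:ℝ) * (1 - Fc c m))) := by ring_nf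
        have hee : Real.exp (-((N:ℝ) * (1 - Fc c m))) ≤ Real.exp (-1 : ℝ) :=
          Real.exp_le_exp.mpr (by linarith)
        have he2 : Real.exp (-1 : ℝ) ≤ 1/2 := by
          have h2e : (2:ℝ) ≤ Real.exp 1 := by linarith [Real.add_one_le_exp 1]
          have hpos : (0:ℝ) < Real.exp 1 := Real.exp_pos 1
          rw [Real.exp_neg]
          nlinarith [mul_inv_cancel₀ (ne_of_gt hpos), inv_nonneg.mpr hpos.le]
        simp only [hadef]
        linarith
      have hsum2 : ∑ m ∈ Finset.range M', a m ≤ ∑' m, a m :=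
        Summable.sum_le_tsum _ (fun i _ => ha0 i) hasum
      have hlow : (M' : ℝ) * (1/2) ≤ ∑ m ∈ Finset.range M', a m := by
        calc (M' : ℝ) * (1/2) = ∑ _m ∈ Finset.range M', (1/2 : ℝ) := by
              rw [Finset.sum_const]; simp [mul_comm]
          _ ≤ ∑ m ∈ Finset.range M', a m :=
              Finset.sum_le_sum fun i hi => hhalf i (Finset.mem_range.mp hi)
      rw [hgoal_eq]
      calc (1/8 : ℝ) * L ≤ (M' : ℝ) * (1/2) := by linarith
        _ ≤ ∑ m ∈ Finset.range M', a m := hlow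
        _ ≤ ∑' m, a m := hsum2
    · -- UPPER BOUND
      set M : ℕ := ⌈2 * L⌉₊ with hMdef
      have hM2L : 2 * L ≤ (M:ℝ) := Nat.le_ceil _
      have hMle : (M:ℝ) ≤ 2 * L + 1 := (Nat.ceil_lt_add_one (by positivity)).le
      have hM0 : (0:ℝ) < (M:ℝ) := by linarith
      clear_value M
      have hd : Real.log c + 2 ≤ y / 4 := by
        have hlcb : Real.log c ≤ b := by rw [hb]; exact le_abs_self _
        rw [hC₀] at hy; linarith
      have hLM : L ≤ (M:ℝ) := by linarith
      have hlogM : Real.log L ≤ Real.log (M:ℝ) := Real.log_le_log hL0 hLM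
      have h1 : y / 2 + (Real.log c + 2) ≤ Real.log (M:ℝ) := by
        rw [hlogL] at hlogM; linarith
      have h2 : x ≤ (M:ℝ) * (y / 2) := by nlinarith
      have h3 : (M:ℝ) * (y / 2) + (M:ℝ) * Real.log c + 2 * (M:ℝ)
          ≤ (M:ℝ) * Real.log (M:ℝ) := by nlinarith
      have key1 : x + (M:ℝ) * Real.log c + (M:ℝ) ≤ (M:ℝ) * Real.log (M:ℝ) - (M:ℝ) := by
        linarith
      have hMM : ((M:ℝ)) ^ M ≤ (Nat.factorial M : ℝ) * Real.exp (M:ℝ) := by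
        have h4 : ((M:ℝ)) ^ M / (Nat.factorial M : ℝ) ≤ Real.exp (M:ℝ) := by
          refine le_trans ?_ (Real.sum_le_exp_of_nonneg (Nat.cast_nonneg M) (M+1))
          exact Finset.single_le_sum (f := fun i => ((M:ℝ)) ^ i / (Nat.factorial i : ℝ))
            (fun i _ => by positivity) (Finset.self_mem_range_succ M)
        rw [div_le_iff₀ (by positivity)] at h4
        rw [mul_comm]
        exact h4
      have key2 : (N:ℝ) * c ^ M ≤ (Nat.factorial M : ℝ) := by
        have e2 : Real.exp ((M:ℝ) * Real.log (M:ℝ) - (M:ℝ))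
            = ((M:ℝ)) ^ M * Real.exp (-(M:ℝ)) := by
          rw [sub_eq_add_neg, Real.exp_add, Real.exp_nat_mul, Real.exp_log hM0]
        have e3 : ((M:ℝ)) ^ M * Real.exp (-(M:ℝ)) ≤ (Nat.factorial M : ℝ) := by
          rw [Real.exp_neg, ← div_eq_mul_inv, div_le_iff₀ (Real.exp_pos _)]
          exact hMM
        calc (N:ℝ) * c ^ M = Real.exp (x + (M:ℝ) * Real.log c) := by
              rw [Real.exp_add, hxdef, Real.exp_log hNpos, Real.exp_nat_mul, Real.exp_log hc]
          _ ≤ Real.exp ((M:ℝ) * Real.log (M:ℝ) - (M:ℝ)) :=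
              Real.exp_le_exp.mpr (by linarith)
          _ = ((M:ℝ)) ^ M * Real.exp (-(M:ℝ)) := e2
          _ ≤ (Nat.factorial M : ℝ) := e3
      have hsplit := Summable.sum_add_tsum_nat_add (f := a) M hasum
      have hhead : ∑ i ∈ Finset.range M, a i ≤ (M:ℝ) := by
        calc ∑ i ∈ Finset.range M, a i ≤ ∑ _i ∈ Finset.range M, (1:ℝ) :=
              Finset.sum_le_sum fun i _ => ha1 i
          _ = M := by simp
      have hs1 : Summable (fun i : ℕ => a (i + M)) := (summable_nat_add_iff M).mpr hasum
      have hg : Summable (fun k : ℕ =>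
          (N:ℝ) * ((c ^ M / (Nat.factorial M : ℝ)) * (c ^ k / (Nat.factorial k : ℝ)))) :=
        ((Real.summable_pow_div_factorial c).mul_left _).mul_left _
      have hpt : ∀ k : ℕ, a (k + M) ≤
          (N:ℝ) * ((c ^ M / (Nat.factorial M : ℝ)) * (c ^ k / (Nat.factorial k : ℝ))) := by
        intro k
        exact le_trans (haN (k + M))
          (mul_le_mul_of_nonneg_left (factorial_split hc k M) (Nat.cast_nonneg N))
      have htail : (∑' i : ℕ, a (i + M)) ≤ Real.exp c := by
        have h5 := Summable.tsum_le_tsum hpt hs1 hg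
        rw [Summable.tsum_mul_left _ ((Real.summable_pow_div_factorial c).mul_left _),
          Summable.tsum_mul_left _ (Real.summable_pow_div_factorial c),
          (hasSum_exp' c).tsum_eq] at h5
        have h6 : (N:ℝ) * (c ^ M / (Nat.factorial M : ℝ)) ≤ 1 := by
          rw [← mul_div_assoc]
          exact (div_le_one (by positivity)).mpr key2
        calc (∑' i : ℕ, a (i + M))
            ≤ (N:ℝ) * ((c ^ M / (Nat.factorial M : ℝ)) * Real.exp c) := h5
          _ = ((N:ℝ) * (c ^ M / (Nat.factorial M : ℝ))) * Real.exp c := by ring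
          _ ≤ 1 * Real.exp c := mul_le_mul_of_nonneg_right h6 (Real.exp_pos c).le
          _ = Real.exp c := one_mul _
      rw [hgoal_eq, ← hsplit]
      have hfinal : (M:ℝ) + Real.exp c ≤ 4 * L := by linarith
      calc (∑ i ∈ Finset.range M, a i) + ∑' i, a (i + M)
          ≤ (M:ℝ) + Real.exp c := add_le_add hhead htail
        _ ≤ 4 * L := hfinal
  obtain ⟨N₀, hN₀⟩ := eventually_atTop.mp Hmain
  exact ⟨1/8, 4, N₀, by norm_num, by norm_num, fun N hN => hN₀ N hN⟩
end

section
/- Let (H_k)_{k≥1} be i.i.d. unit-mean exponential random variables on a probability space and fix a real R̄ > 0. For integers N ≥ 1 and m ≥ 0 define p_N(m) = 1 − ( ℙ( Σ_{k=1}^m log(1+H_k) > R̄ ) )^N. Then the average delay of incremental redundancy multicast, D(N) = Σ_{m=0}^∞ p_N(m), satisfies D(N) = Θ(log N / log log N): there exist constants 0 < c₁ ≤ c₂ and N₀ such that c₁ · (log N / log log N) ≤ D(N) ≤ c₂ · (log N / log log N) for all N ≥ N₀. -/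
open Real Finset MeasureTheory ProbabilityTheory
open Filter



lemma aux_div_log : Filter.Tendsto (fun y : ℝ => y / Real.log y) atTop atTop := by
  rw [Filter.tendsto_atTop]
  intro b
  have h1 := Real.isLittleO_log_id_atTop.bound (c := (max b 1)⁻¹)
    (by positivity)
  have h2 := Real.tendsto_log_atTop.eventually_ge_atTop 1
  filter_upwards [h1, h2, Filter.eventually_ge_atTop (0:ℝ)] with y hy1 hy2 hy0
  simp only [Real.norm_eq_abs, id_eq] at hy1
  rw [abs_of_nonneg (by linarith : (0:ℝ) ≤ Real.log y), abs_of_nonneg hy0] at hy1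
  have hb1 : (0:ℝ) < max b 1 := lt_of_lt_of_le one_pos (le_max_right _ _)
  have h3 : max b 1 * Real.log y ≤ y := by
    have h4 := mul_le_mul_of_nonneg_left hy1 hb1.le
    rw [← mul_assoc, mul_inv_cancel₀ hb1.ne', one_mul] at h4
    exact h4
  rw [le_div_iff₀ (by linarith : (0:ℝ) < Real.log y)]
  calc b * Real.log y ≤ max b 1 * Real.log y := by
        apply mul_le_mul_of_nonneg_right (le_max_left _ _) (by linarith)
    _ ≤ y := h3

lemma aux_sub_log : Filter.Tendsto (fun y : ℝ => y / 2 - Real.log y) atTop atTop := by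
  have h1 := Real.isLittleO_log_id_atTop.bound (c := (4:ℝ)⁻¹) (by norm_num)
  apply tendsto_atTop_mono' atTop (f₁ := fun y : ℝ => y / 4)
  · filter_upwards [h1, Filter.eventually_ge_atTop (0:ℝ)] with y hy1 hy0
    simp only [Real.norm_eq_abs, id_eq] at hy1
    rw [abs_of_nonneg hy0] at hy1
    have h2 : Real.log y ≤ y / 4 := by
      have := le_abs_self (Real.log y); linarith [hy1]
    linarith
  · exact (tendsto_id.atTop_div_const (by norm_num))

section Aux
variable {Ω : Type*} [MeasurableSpace Ω] (P : Measure Ω) [IsProbabilityMeasure P]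
  (H : ℕ → Ω → ℝ)

lemma aux_cdf (hmeas : ∀ k, Measurable (H k)) (hdist : ∀ k, P.map (H k) = expMeasure 1)
    (k : ℕ) {a : ℝ} (ha : 0 ≤ a) :
    P {ω | H k ω ≤ a} = ENNReal.ofReal (1 - Real.exp (-a)) := by
  haveI : IsProbabilityMeasure (expMeasure 1) := isProbabilityMeasure_expMeasure one_pos
  have h1 : {ω | H k ω ≤ a} = H k ⁻¹' Set.Iic a := rfl
  rw [h1, ← Measure.map_apply (hmeas k) measurableSet_Iic, hdist k,
    ← ofReal_cdf (expMeasure 1) a]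
  congr 1
  rw [cdf_expMeasure_eq one_pos, if_pos ha, one_mul]

omit [IsProbabilityMeasure P] in
lemma aux_prod (hindep : iIndepFun H P)
    (T : Finset ℕ) (a : ℝ) :
    P (⋂ k ∈ T, {ω | H k ω ≤ a}) = ∏ k ∈ T, P {ω | H k ω ≤ a} :=
  hindep.meas_biInter (fun _ _ => ⟨Set.Iic a, measurableSet_Iic, rfl⟩)

lemma aux_null (hmeas : ∀ k, Measurable (H k)) (hdist : ∀ k, P.map (H k) = expMeasure 1)
    (s : Finset ℕ) : P (⋃ k ∈ s, {ω | H k ω ≤ (0:ℝ)}) = 0 := by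
  refine le_antisymm (le_trans (measure_biUnion_finset_le s _) ?_) (by simp)
  have : ∀ k ∈ s, P {ω | H k ω ≤ (0:ℝ)} = 0 := by
    intro k _
    rw [aux_cdf P H hmeas hdist k le_rfl]
    simp
  rw [Finset.sum_congr rfl this]
  simp

/-- Upper bound on `P(S_m ≤ R)`. -/
lemma eps_upper (hmeas : ∀ k, Measurable (H k))
    (hindep : iIndepFun H P)
    (hdist : ∀ k, P.map (H k) = expMeasure 1)
    {R : ℝ} (hR : 0 < R) {m : ℕ} (hm : 2 * R ≤ (m : ℝ)) :
    (P {ω | ∑ k ∈ Finset.Icc 1 m, Real.log (1 + H k ω) ≤ R}).toReal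
      ≤ (24 * R / m) ^ (m - m / 2) := by
  have hm0 : (0:ℝ) < m := lt_of_lt_of_le (by linarith) hm
  set a : ℝ := Real.exp (2 * R / m) - 1 with ha_def
  have hexp_arg : 0 < 2 * R / m := by positivity
  have hexp_arg1 : 2 * R / m ≤ 1 := by rw [div_le_one hm0]; linarith
  have ha0 : 0 ≤ a := by
    have := Real.add_one_le_exp (2 * R / m)
    simp only [ha_def]; linarith
  set j : ℕ := m - m / 2 with hj_def
  set 𝒯 : Finset (Finset ℕ) := (Finset.Icc 1 m).powersetCard j with h𝒯
  -- pointwise inclusion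
  have hsub : {ω | ∑ k ∈ Finset.Icc 1 m, Real.log (1 + H k ω) ≤ R} ⊆
      (⋃ T ∈ 𝒯, ⋂ k ∈ T, {ω | H k ω ≤ a}) ∪ (⋃ k ∈ Finset.Icc 1 m, {ω | H k ω ≤ (0:ℝ)}) := by
    intro ω hω
    simp only [Set.mem_setOf_eq] at hω
    by_cases hp : ∀ k ∈ Finset.Icc 1 m, 0 < H k ω
    · left
      set B : Finset ℕ := (Finset.Icc 1 m).filter (fun k => a < H k ω) with hB
      have hnonneg : ∀ k ∈ Finset.Icc 1 m, 0 ≤ Real.log (1 + H k ω) := fun k hk =>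
        Real.log_nonneg (by linarith [hp k hk])
      have hsubB : ∑ k ∈ B, Real.log (1 + H k ω) ≤ R :=
        le_trans (Finset.sum_le_sum_of_subset_of_nonneg (Finset.filter_subset _ _)
          (fun k hk _ => hnonneg k hk)) hω
      have hterm : ∀ k ∈ B, (2 * R / m) ≤ Real.log (1 + H k ω) := by
        intro k hk
        have hkB : a < H k ω := (Finset.mem_filter.mp hk).2
        have h1a : Real.log (1 + a) ≤ Real.log (1 + H k ω) :=
          Real.log_le_log (by linarith) (by linarith)
        have : (1:ℝ) + a = Real.exp (2 * R / m) := by simp [ha_def]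
        rwa [this, Real.log_exp] at h1a
      have hBsum : (B.card : ℝ) * (2 * R / m) ≤ R := by
        have := Finset.card_nsmul_le_sum B _ _ hterm
        rw [nsmul_eq_mul] at this
        linarith [this, hsubB]
      have hcardR : (B.card : ℝ) * (2 * R) ≤ R * m := by
        rwa [mul_div_assoc', div_le_iff₀ hm0] at hBsum
      have hcardN : 2 * B.card ≤ m := by
        have h2 : (B.card : ℝ) * 2 * R ≤ (m : ℝ) * R := by linarith
        have h3 : ((2 * B.card : ℕ) : ℝ) ≤ (m : ℝ) := by
          push_cast
          nlinarith [le_of_mul_le_mul_right h2 hR]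
        exact_mod_cast h3
      have hG : j ≤ (Finset.Icc 1 m \ B).card := by
        have h1 : (Finset.Icc 1 m \ B).card = (Finset.Icc 1 m).card - B.card :=
          Finset.card_sdiff_of_subset (Finset.filter_subset _ _)
        have h2 : (Finset.Icc 1 m).card = m := by rw [Nat.card_Icc]; omega
        rw [h1, h2, hj_def]
        omega
      obtain ⟨T, hTsub, hTcard⟩ := Finset.exists_subset_card_eq hG
      refine Set.mem_iUnion₂.mpr ⟨T, ?_, ?_⟩
      · exact Finset.mem_powersetCard.mpr ⟨hTsub.trans (Finset.sdiff_subset), hTcard⟩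
      · refine Set.mem_iInter₂.mpr fun k hk => ?_
        have hkG := hTsub hk
        have hkB : k ∉ B := (Finset.mem_sdiff.mp hkG).2
        have hkI : k ∈ Finset.Icc 1 m := (Finset.mem_sdiff.mp hkG).1
        simp only [hB, Finset.mem_filter, not_and, not_lt] at hkB
        exact hkB hkI
    · right
      push_neg at hp
      obtain ⟨k, hk, hk0⟩ := hp
      exact Set.mem_iUnion₂.mpr ⟨k, hk, hk0⟩
  -- measure bound in ENNReal
  have hmeasure : P {ω | ∑ k ∈ Finset.Icc 1 m, Real.log (1 + H k ω) ≤ R}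
      ≤ (𝒯.card : ℕ) • (ENNReal.ofReal (1 - Real.exp (-a))) ^ j := by
    refine le_trans (measure_mono hsub) (le_trans (measure_union_le _ _) ?_)
    rw [aux_null P H hmeas hdist, add_zero]
    refine le_trans (measure_biUnion_finset_le 𝒯 _) ?_
    have heach : ∀ T ∈ 𝒯, P (⋂ k ∈ T, {ω | H k ω ≤ a})
        = (ENNReal.ofReal (1 - Real.exp (-a))) ^ j := by
      intro T hT
      rw [aux_prod P H hindep T a]
      have hTc : T.card = j := (Finset.mem_powersetCard.mp hT).2
      rw [Finset.prod_congr rfl (fun k _ => aux_cdf P H hmeas hdist k ha0),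
        Finset.prod_const, hTc]
    rw [Finset.sum_congr rfl heach, Finset.sum_const]
  -- pass to reals
  have hpR0 : (0:ℝ) ≤ 1 - Real.exp (-a) := by
    have : Real.exp (-a) ≤ 1 := Real.exp_le_one_iff.mpr (by linarith)
    linarith
  have htoReal : (P {ω | ∑ k ∈ Finset.Icc 1 m, Real.log (1 + H k ω) ≤ R}).toReal
      ≤ (𝒯.card : ℝ) * (1 - Real.exp (-a)) ^ j := by
    have hne : ((𝒯.card : ℕ) • (ENNReal.ofReal (1 - Real.exp (-a))) ^ j) ≠ ⊤ := by
      rw [nsmul_eq_mul]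
      exact ENNReal.mul_ne_top (ENNReal.natCast_ne_top _)
        (ENNReal.pow_ne_top ENNReal.ofReal_ne_top)
    have h9 := ENNReal.toReal_mono hne hmeasure
    rw [nsmul_eq_mul, ENNReal.toReal_mul, ENNReal.toReal_pow,
      ENNReal.toReal_ofReal hpR0] at h9
    simpa using h9
  refine le_trans htoReal ?_
  -- real arithmetic
  have hjm : j ≤ m := Nat.sub_le _ _
  have hcard𝒯 : (𝒯.card : ℝ) ≤ 2 ^ m := by
    rw [h𝒯, Finset.card_powersetCard, Nat.card_Icc]
    have h1 : (m + 1 - 1).choose j ≤ 2 ^ m := by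
      have h2 : m.choose j ≤ ∑ i ∈ Finset.range (m + 1), m.choose i :=
        Finset.single_le_sum (fun i _ => Nat.zero_le _) (Finset.mem_range.mpr (Nat.lt_succ_of_le hjm))
      simpa [Nat.sum_range_choose] using h2
    exact_mod_cast h1
  have hpRa : 1 - Real.exp (-a) ≤ a := by
    have := Real.add_one_le_exp (-a); linarith
  have ha6 : a ≤ 6 * R / m := by
    have h1 : Real.exp (2 * R / m) - 1 ≤ (2 * R / m) * Real.exp (2 * R / m) := by
      have h2 : 1 - (2 * R / m) ≤ Real.exp (-(2 * R / m)) := by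
        linarith [Real.add_one_le_exp (-(2 * R / m))]
      have h2b : (1 - (2 * R / m)) * Real.exp (2 * R / m) ≤ 1 := by
        have h2c := mul_le_mul_of_nonneg_right h2 (Real.exp_pos (2 * R / m)).le
        rwa [← Real.exp_add, neg_add_cancel, Real.exp_zero] at h2c
      nlinarith [h2b]
    have h4 : Real.exp (2 * R / m) ≤ Real.exp 1 := Real.exp_le_exp.mpr hexp_arg1
    have h5 : Real.exp 1 ≤ 3 := by
      have h7 := Real.exp_one_lt_d9
      norm_num at h7 ⊢
      linarith
    have h6 : (2 * R / m) * Real.exp (2 * R / m) ≤ (2 * R / m) * 3 := by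
      nlinarith [hexp_arg.le]
    rw [ha_def]
    calc Real.exp (2 * R / m) - 1 ≤ (2 * R / m) * 3 := le_trans h1 h6
      _ = 6 * R / m := by ring
  have hpow : (1 - Real.exp (-a)) ^ j ≤ (6 * R / m) ^ j :=
    pow_le_pow_left₀ hpR0 (le_trans hpRa ha6) j
  have h2m : (2:ℝ) ^ m ≤ 4 ^ j := by
    have h1 : m ≤ 2 * j := by omega
    calc (2:ℝ) ^ m ≤ 2 ^ (2 * j) := pow_le_pow_right₀ one_le_two h1
      _ = 4 ^ j := by rw [pow_mul]; norm_num
  calc (𝒯.card : ℝ) * (1 - Real.exp (-a)) ^ j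
      ≤ 2 ^ m * (6 * R / m) ^ j := by
        apply mul_le_mul hcard𝒯 hpow (pow_nonneg hpR0 j) (by positivity)
    _ ≤ 4 ^ j * (6 * R / m) ^ j := by
        apply mul_le_mul_of_nonneg_right h2m (by positivity)
    _ = (24 * R / m) ^ j := by
        rw [← mul_pow]; congr 1; field_simp; ring

/-- Lower bound on `P(S_m ≤ R)`. -/
lemma eps_lower (hmeas : ∀ k, Measurable (H k))
    (hindep : iIndepFun H P)
    (hdist : ∀ k, P.map (H k) = expMeasure 1)
    {R : ℝ} (hR : 0 < R) {M' : ℕ} (hM1 : 1 ≤ M') (hMR : R ≤ (M' : ℝ))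
    {m : ℕ} (hm : m ≤ M') :
    (R / (3 * M')) ^ M'
      ≤ (P {ω | ∑ k ∈ Finset.Icc 1 m, Real.log (1 + H k ω) ≤ R}).toReal := by
  have hM0 : (0:ℝ) < M' := by exact_mod_cast hM1
  set x : ℝ := R / M' with hx_def
  have hx0 : 0 < x := by positivity
  have hx1 : x ≤ 1 := by rw [hx_def, div_le_one hM0]; linarith
  set b : ℝ := Real.exp x - 1 with hb_def
  have hbx : x ≤ b := by
    have := Real.add_one_le_exp x; rw [hb_def]; linarith
  have hb0 : 0 ≤ b := le_trans hx0.le hbx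
  -- the small event is included in {S ≤ R} up to null sets
  have hsub : (⋂ k ∈ Finset.Icc 1 m, {ω | H k ω ≤ b}) ⊆
      {ω | ∑ k ∈ Finset.Icc 1 m, Real.log (1 + H k ω) ≤ R}
        ∪ (⋃ k ∈ Finset.Icc 1 m, {ω | H k ω ≤ (0:ℝ)}) := by
    intro ω hω
    rw [Set.mem_iInter₂] at hω
    by_cases hp : ∀ k ∈ Finset.Icc 1 m, 0 < H k ω
    · left
      have hterm : ∀ k ∈ Finset.Icc 1 m, Real.log (1 + H k ω) ≤ x := by
        intro k hk
        have h1 : (1:ℝ) + H k ω ≤ Real.exp x := by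
          have := hω k hk; simp only [Set.mem_setOf_eq] at this
          rw [hb_def] at this; linarith
        have h2 : Real.log (1 + H k ω) ≤ Real.log (Real.exp x) :=
          Real.log_le_log (by linarith [hp k hk]) h1
        rwa [Real.log_exp] at h2
      have hsum : ∑ k ∈ Finset.Icc 1 m, Real.log (1 + H k ω)
          ≤ (Finset.Icc 1 m).card • x := Finset.sum_le_card_nsmul _ _ _ hterm
      have hcard : (Finset.Icc 1 m).card = m := by rw [Nat.card_Icc]; omega
      rw [hcard, nsmul_eq_mul] at hsum
      have hmx : (m:ℝ) * x ≤ R := by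
        have h3 : (m:ℝ) ≤ (M':ℝ) := by exact_mod_cast hm
        have h4 : (m:ℝ) * x ≤ (M':ℝ) * x := by nlinarith
        have h5 : (M':ℝ) * x = R := by rw [hx_def]; field_simp
        linarith
      exact le_trans hsum hmx
    · right
      push_neg at hp
      obtain ⟨k, hk, hk0⟩ := hp
      exact Set.mem_iUnion₂.mpr ⟨k, hk, hk0⟩
  have hE : P (⋂ k ∈ Finset.Icc 1 m, {ω | H k ω ≤ b})
      = (ENNReal.ofReal (1 - Real.exp (-b))) ^ m := by
    rw [aux_prod P H hindep _ b,
      Finset.prod_congr rfl (fun k _ => aux_cdf P H hmeas hdist k hb0),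
      Finset.prod_const]
    congr 1
    rw [Nat.card_Icc]; omega
  have hle : (ENNReal.ofReal (1 - Real.exp (-b))) ^ m
      ≤ P {ω | ∑ k ∈ Finset.Icc 1 m, Real.log (1 + H k ω) ≤ R} := by
    rw [← hE]
    refine le_trans (measure_mono hsub) ?_
    refine le_trans (measure_union_le _ _) ?_
    rw [aux_null P H hmeas hdist, add_zero]
  have hpR0 : (0:ℝ) ≤ 1 - Real.exp (-b) := by
    have : Real.exp (-b) ≤ 1 := Real.exp_le_one_iff.mpr (by linarith)
    linarith
  have htoReal : (1 - Real.exp (-b)) ^ m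
      ≤ (P {ω | ∑ k ∈ Finset.Icc 1 m, Real.log (1 + H k ω) ≤ R}).toReal := by
    have h6 := ENNReal.toReal_mono (measure_ne_top P _) hle
    rwa [ENNReal.toReal_pow, ENNReal.toReal_ofReal hpR0] at h6
  refine le_trans ?_ htoReal
  -- real arithmetic: (R/(3M'))^{M'} ≤ (1-exp(-b))^m
  have hkey : R / (3 * M') ≤ 1 - Real.exp (-b) := by
    have h1 : Real.exp (-b) ≤ Real.exp (-x) := Real.exp_le_exp.mpr (by linarith)
    have h2 : Real.exp (-x) + x * Real.exp (-x) ≤ 1 := by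
      have h3 := Real.add_one_le_exp x
      have h4 := mul_le_mul_of_nonneg_right h3 (Real.exp_pos (-x)).le
      rw [← Real.exp_add, add_neg_cancel, Real.exp_zero] at h4
      nlinarith [h4]
    have h5 : Real.exp (-1 : ℝ) ≤ Real.exp (-x) := Real.exp_le_exp.mpr (by linarith)
    have h6 : (1:ℝ)/3 ≤ Real.exp (-x) := by
      have h7 : Real.exp 1 ≤ 3 := by
        have h8 := Real.exp_one_lt_d9; norm_num at h8 ⊢; linarith
      have h9 : (3:ℝ)⁻¹ ≤ (Real.exp 1)⁻¹ := inv_anti₀ (Real.exp_pos 1) h7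
      have h10 : Real.exp (-1:ℝ) = (Real.exp 1)⁻¹ := Real.exp_neg 1
      have h11 := Real.exp_le_exp.mpr (neg_le_neg hx1)
      rw [h10] at h11
      rw [one_div]
      linarith
    have h12 : x * (1/3) ≤ x * Real.exp (-x) :=
      mul_le_mul_of_nonneg_left h6 hx0.le
    have h13 : R / (3 * M') = x / 3 := by rw [hx_def, div_div, mul_comm]
    rw [h13]
    linarith
  have hp1 : 1 - Real.exp (-b) ≤ 1 := by linarith [Real.exp_pos (-b)]
  have hRM0 : 0 ≤ R / (3 * M') := by positivity
  calc (R / (3 * M')) ^ M' ≤ (1 - Real.exp (-b)) ^ M' := pow_le_pow_left₀ hRM0 hkey M'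
    _ ≤ (1 - Real.exp (-b)) ^ m := pow_le_pow_of_le_one hpR0 hp1 hm

end Aux

section Main
variable {Ω : Type*} [MeasurableSpace Ω] (P : Measure Ω) [IsProbabilityMeasure P]
  (H : ℕ → Ω → ℝ)

set_option maxHeartbeats 2000000 in
lemma main_estimate (hmeas : ∀ k, Measurable (H k))
    (hindep : iIndepFun H P)
    (hdist : ∀ k, P.map (H k) = expMeasure 1)
    {R : ℝ} (hR : 0 < R) (N : ℕ) (hN2 : 2 ≤ N)
    (hL2 : 2 ≤ Real.log N) (hLL2 : 2 ≤ Real.log (Real.log N))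
    (hr1 : 12 * R + 12 ≤ Real.log N / Real.log (Real.log N))
    (hr2 : R + 2 ≤ Real.log N / Real.log (Real.log N) / 4)
    (hE2 : Real.log (24 * R) + 1 ≤ Real.log (Real.log N) / 2
      - Real.log (Real.log (Real.log N)))
    (hE7 : |Real.log R| ≤ Real.log (Real.log N) / 2) :
    1/8 * (Real.log N / Real.log (Real.log N)) ≤
        (∑' m : ℕ, (1 -
          (P {ω | R < ∑ k ∈ Finset.Icc 1 m, Real.log (1 + H k ω)}).toReal ^ N)) ∧
      (∑' m : ℕ, (1 -
          (P {ω | R < ∑ k ∈ Finset.Icc 1 m, Real.log (1 + H k ω)}).toReal ^ N)) ≤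
        10 * (Real.log N / Real.log (Real.log N)) := by
  set L : ℝ := Real.log N with hL_def
  set LL : ℝ := Real.log L with hLL_def
  set r : ℝ := L / LL with hr_def
  have hL0 : 0 < L := by linarith
  have hLL0 : 0 < LL := by linarith
  have hN0 : (0:ℝ) < N := by exact_mod_cast (by omega : 0 < N)
  have hr0 : 0 < r := by positivity
  have hr1' : (1:ℝ) ≤ r := by nlinarith
  set f : ℕ → ℝ := fun m => 1 -
    (P {ω | R < ∑ k ∈ Finset.Icc 1 m, Real.log (1 + H k ω)}).toReal ^ N with hf_def
  set ε : ℕ → ℝ :=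
    fun m => (P {ω | ∑ k ∈ Finset.Icc 1 m, Real.log (1 + H k ω) ≤ R}).toReal with hε_def
  have hε0 : ∀ m, 0 ≤ ε m := fun m => ENNReal.toReal_nonneg
  have hε1 : ∀ m, ε m ≤ 1 := by
    intro m
    have h1 := ENNReal.toReal_mono ENNReal.one_ne_top
      (prob_le_one (μ := P) (s := {ω | ∑ k ∈ Finset.Icc 1 m, Real.log (1 + H k ω) ≤ R}))
    simpa using h1
  have hcompl : ∀ m,
      (P {ω | R < ∑ k ∈ Finset.Icc 1 m, Real.log (1 + H k ω)}).toReal = 1 - ε m := by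
    intro m
    have hsm : Measurable fun ω => ∑ k ∈ Finset.Icc 1 m, Real.log (1 + H k ω) :=
      Finset.measurable_sum _ (fun k _ =>
        Real.measurable_log.comp (measurable_const.add (hmeas k)))
    have hms : MeasurableSet {ω | ∑ k ∈ Finset.Icc 1 m, Real.log (1 + H k ω) ≤ R} :=
      measurableSet_le hsm measurable_const
    have h1 : {ω | R < ∑ k ∈ Finset.Icc 1 m, Real.log (1 + H k ω)}
        = {ω | ∑ k ∈ Finset.Icc 1 m, Real.log (1 + H k ω) ≤ R}ᶜ := by
      ext ω; simp [not_le]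
    rw [h1, prob_compl_eq_one_sub hms,
      ENNReal.toReal_sub_of_le prob_le_one ENNReal.one_ne_top, ENNReal.toReal_one]
  have hf : ∀ m, f m = 1 - (1 - ε m) ^ N := by
    intro m
    show 1 - (P {ω | R < ∑ k ∈ Finset.Icc 1 m, Real.log (1 + H k ω)}).toReal ^ N = _
    rw [hcompl m]
  have hf0 : ∀ m, 0 ≤ f m := by
    intro m
    rw [hf m]
    have h1 : (1 - ε m) ^ N ≤ 1 := pow_le_one₀ (by linarith [hε1 m]) (by linarith [hε0 m])
    linarith
  have hf1 : ∀ m, f m ≤ 1 := by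
    intro m
    rw [hf m]
    have h1 : 0 ≤ (1 - ε m) ^ N := pow_nonneg (by linarith [hε1 m]) N
    linarith
  have hfN : ∀ m, f m ≤ (N:ℝ) * ε m := by
    intro m
    have h := one_add_mul_le_pow (show (-2:ℝ) ≤ -ε m by linarith [hε1 m]) N
    rw [show (1:ℝ) + -ε m = 1 - ε m from by ring] at h
    rw [hf m]
    linarith
  -- ===== Upper bound =====
  set M : ℕ := ⌈8 * r⌉₊ with hM_def
  have hM8 : 8 * r ≤ (M:ℝ) := Nat.le_ceil _
  have hM96 : 96 * R + 96 ≤ (M:ℝ) := by nlinarith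
  have hMR0 : (0:ℝ) < M := by nlinarith
  set x : ℝ := 24 * R / M with hx_def
  have hx0 : 0 < x := by positivity
  have hx4 : x ≤ 1/4 := by rw [hx_def, div_le_iff₀ hMR0]; nlinarith
  have hx1 : x ≤ 1 := by linarith
  set jM : ℕ := M - M / 2 with hjM_def
  have hjMhalf : (M:ℝ)/2 ≤ (jM:ℝ) := by
    have h1 : M ≤ 2 * jM := by omega
    have h2 := (Nat.cast_le (α := ℝ)).mpr h1
    push_cast at h2; linarith
  have hjM0 : (0:ℝ) ≤ (jM:ℝ) := by positivity
  have hεb : ∀ i : ℕ, ε (i + M) ≤ x ^ jM * (2 * (1/2)^i) := by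
    intro i
    have hmi : 2 * R ≤ ((i + M : ℕ) : ℝ) := by push_cast; nlinarith
    have h1 := eps_upper P H hmeas hindep hdist hR hmi
    have h2 : 24 * R / ((i + M : ℕ):ℝ) ≤ x := by
      rw [hx_def]
      gcongr
      push_cast; linarith
    have h3 : (24 * R / ((i+M:ℕ):ℝ)) ^ ((i+M) - (i+M)/2) ≤ x ^ ((i+M) - (i+M)/2) :=
      pow_le_pow_left₀ (by positivity) h2 _
    have h4 : x ^ ((i+M) - (i+M)/2) ≤ x ^ (jM + i/2) :=
      pow_le_pow_of_le_one hx0.le hx1 (by omega)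
    have h6 : x ^ (i/2) ≤ 2 * (1/2)^i := by
      have h7 : x ^ (i/2) ≤ (1/4:ℝ) ^ (i/2) := pow_le_pow_left₀ hx0.le hx4 _
      have h8 : (1/4:ℝ) ^ (i/2) = (1/2:ℝ) ^ (2 * (i/2)) := by
        rw [pow_mul]; norm_num
      have h9 : (1/2:ℝ) ^ (2 * (i/2)) ≤ (1/2:ℝ) ^ (i - 1) :=
        pow_le_pow_of_le_one (by norm_num) (by norm_num) (by omega)
      have h10 : (1/2:ℝ) ^ (i - 1) ≤ 2 * (1/2)^i := by
        rcases i with _ | i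
        · norm_num
        · rw [Nat.succ_sub_one, pow_succ]
          nlinarith [pow_nonneg (by norm_num : (0:ℝ) ≤ 1/2) i]
      calc x ^ (i/2) ≤ (1/4:ℝ) ^ (i/2) := h7
        _ = (1/2:ℝ) ^ (2 * (i/2)) := h8
        _ ≤ (1/2:ℝ) ^ (i - 1) := h9
        _ ≤ 2 * (1/2)^i := h10
    calc ε (i + M) ≤ (24 * R / ((i+M:ℕ):ℝ)) ^ ((i+M) - (i+M)/2) := h1
      _ ≤ x ^ ((i+M) - (i+M)/2) := h3
      _ ≤ x ^ (jM + i/2) := h4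
      _ = x ^ jM * x ^ (i/2) := pow_add x _ _
      _ ≤ x ^ jM * (2 * (1/2)^i) :=
          mul_le_mul_of_nonneg_left h6 (pow_nonneg hx0.le _)
  have hNx : (N:ℝ) * x ^ jM ≤ 1/4 := by
    have hlogM : LL/2 + Real.log (24*R) ≤ Real.log M := by
      have h1 : Real.log r ≤ Real.log M := Real.log_le_log hr0 (by nlinarith)
      have h2 : Real.log r = LL - Real.log LL := by
        rw [hr_def, Real.log_div hL0.ne' hLL0.ne']
      linarith
    have hprod : L + Real.log 4 ≤ (jM:ℝ) * (Real.log M - Real.log (24*R)) := by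
      have h1 : LL/2 ≤ Real.log M - Real.log (24*R) := by linarith
      have h3 : (M:ℝ)/2 * (LL/2) ≤ (jM:ℝ) * (Real.log M - Real.log (24*R)) :=
        mul_le_mul hjMhalf h1 (by linarith) hjM0
      have h4 : 4 * r * (LL/2) ≤ (M:ℝ)/2 * (LL/2) := by nlinarith
      have h5 : 4 * r * (LL/2) = 2 * L := by
        rw [hr_def]; field_simp; ring
      have hlog4 : Real.log 4 ≤ 2 := by
        rw [show (4:ℝ) = 2*2 by norm_num, Real.log_mul two_ne_zero two_ne_zero]
        have := Real.log_two_lt_d9; linarith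
      linarith
    have hxlog : Real.log x = Real.log (24*R) - Real.log M := by
      rw [hx_def, Real.log_div (by positivity) hMR0.ne']
    have hxpow : x ^ jM = Real.exp ((jM:ℝ) * Real.log x) := by
      rw [← Real.exp_log (pow_pos hx0 jM), Real.log_pow]
    have hNval : (N:ℝ) = Real.exp L := (Real.exp_log hN0).symm
    calc (N:ℝ) * x ^ jM = Real.exp (L + (jM:ℝ) * Real.log x) := by
          rw [hNval, hxpow, ← Real.exp_add]
      _ ≤ Real.exp (- Real.log 4) := by
          apply Real.exp_le_exp.mpr
          rw [hxlog]
          nlinarith [hprod]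
      _ ≤ 1/4 := by
          rw [Real.exp_neg, Real.exp_log (by norm_num : (0:ℝ) < 4)]
          norm_num
  have hfb : ∀ i : ℕ, f (i + M) ≤ ((N:ℝ) * x^jM * 2) * (1/2)^i := by
    intro i
    calc f (i+M) ≤ (N:ℝ) * ε (i+M) := hfN _
      _ ≤ (N:ℝ) * (x^jM * (2*(1/2)^i)) :=
          mul_le_mul_of_nonneg_left (hεb i) (by positivity)
      _ = ((N:ℝ) * x^jM * 2) * (1/2)^i := by ring
  have hgsum : Summable (fun i : ℕ => ((N:ℝ) * x^jM * 2) * (1/2)^i) :=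
    (summable_geometric_of_lt_one (by norm_num) (by norm_num)).mul_left _
  have hfsum : Summable f := by
    rw [← summable_nat_add_iff M]
    exact Summable.of_nonneg_of_le (fun i => hf0 _) (fun i => hfb i) hgsum
  have hfsum' : Summable (fun i => f (i + M)) := (summable_nat_add_iff M).mpr hfsum
  have htail : (∑' i, f (i + M)) ≤ 1 := by
    have h1 := Summable.tsum_le_tsum hfb hfsum' hgsum
    have h2 : (∑' i:ℕ, ((N:ℝ) * x^jM * 2) * (1/2)^i) = ((N:ℝ) * x^jM * 2) * 2 := by
      rw [tsum_mul_left, tsum_geometric_of_lt_one (by norm_num) (by norm_num)]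
      norm_num
    rw [h2] at h1
    linarith
  have hhead : (∑ i ∈ Finset.range M, f i) ≤ (M:ℝ) := by
    calc ∑ i ∈ Finset.range M, f i ≤ ∑ _i ∈ Finset.range M, (1:ℝ) :=
          Finset.sum_le_sum (fun i _ => hf1 i)
      _ = M := by simp
  have hD_upper : (∑' m, f m) ≤ 10 * r := by
    rw [← Summable.sum_add_tsum_nat_add M hfsum]
    have hM8' : (M:ℝ) ≤ 8*r + 1 := by
      have := Nat.ceil_lt_add_one (by positivity : (0:ℝ) ≤ 8*r)
      linarith
    linarith
  -- ===== Lower bound =====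
  set M' : ℕ := ⌊r/4⌋₊ with hM'_def
  have hM'le : (M':ℝ) ≤ r/4 := Nat.floor_le (by positivity)
  have hM'gt : r/4 - 1 < (M':ℝ) := Nat.sub_one_lt_floor _
  have hM'R : R ≤ (M':ℝ) := by linarith
  have hM'1 : 1 ≤ M' := by
    have h1 : (1:ℝ) ≤ (M':ℝ) := by linarith
    exact_mod_cast h1
  have hM'0 : (0:ℝ) < (M':ℝ) := by
    have : (1:ℝ) ≤ (M':ℝ) := by exact_mod_cast hM'1
    linarith
  have hεlow : ∀ m, m ≤ M' → 1/(N:ℝ) ≤ ε m := by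
    intro m hm
    have h1 := eps_lower P H hmeas hindep hdist hR hM'1 hM'R hm
    refine le_trans ?_ h1
    have hy0 : 0 < R / (3*(M':ℝ)) := by positivity
    have h2 : (R / (3*(M':ℝ)))^M' = Real.exp ((M':ℝ) * Real.log (R/(3*(M':ℝ)))) := by
      rw [← Real.exp_log (pow_pos hy0 M'), Real.log_pow]
    have h3 : Real.log (R/(3*(M':ℝ))) = Real.log R - Real.log (3*(M':ℝ)) :=
      Real.log_div hR.ne' (by positivity)
    have h4 : (M':ℝ) * (Real.log (3*(M':ℝ)) - Real.log R) ≤ L := by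
      rcases le_or_gt (Real.log (3*(M':ℝ)) - Real.log R) 0 with hc | hc
      · nlinarith
      · have h5 : Real.log (3*(M':ℝ)) ≤ LL := by
          have h5a : 3*(M':ℝ) ≤ L := by nlinarith [(div_le_self hL0.le (by linarith : (1:ℝ) ≤ LL) : L/LL ≤ L)]
          exact Real.log_le_log (by positivity) h5a
        have h6 : -Real.log R ≤ LL/2 := by
          have := abs_le.mp hE7; linarith [this.1]
        have h7 : Real.log (3*(M':ℝ)) - Real.log R ≤ 3/2 * LL := by linarith
        calc (M':ℝ) * (Real.log (3*(M':ℝ)) - Real.log R)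
            ≤ (r/4) * (3/2*LL) := mul_le_mul hM'le h7 hc.le (by positivity)
          _ = 3/8 * (r * LL) := by ring
          _ = 3/8 * L := by rw [hr_def]; field_simp
          _ ≤ L := by linarith
    have h8 : Real.exp (-L) ≤ Real.exp ((M':ℝ) * Real.log (R/(3*(M':ℝ)))) := by
      apply Real.exp_le_exp.mpr
      rw [h3]
      nlinarith [h4]
    have h9 : Real.exp (-L) = 1/(N:ℝ) := by
      rw [Real.exp_neg, Real.exp_log hN0, one_div]
    rw [h2, ← h9]
    exact h8
  have hflow : ∀ m, m ≤ M' → 1/2 ≤ f m := by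
    intro m hm
    have hεm := hεlow m hm
    have hq0 : (0:ℝ) ≤ 1 - ε m := by linarith [hε1 m]
    have hq1 : 1 - ε m ≤ 1 - 1/(N:ℝ) := by linarith
    have h1 : (1 - ε m)^N ≤ (1 - 1/(N:ℝ))^N := pow_le_pow_left₀ hq0 hq1 N
    have h2 : (1 - 1/(N:ℝ)) ≤ Real.exp (-(1/(N:ℝ))) := by
      linarith [Real.add_one_le_exp (-(1/(N:ℝ)))]
    have h3 : (1 - 1/(N:ℝ))^N ≤ Real.exp (-(1/(N:ℝ)))^N :=
      pow_le_pow_left₀ (by nlinarith [hN0]) h2 N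
    have h4 : Real.exp (-(1/(N:ℝ)))^N = Real.exp (-1) := by
      rw [← Real.exp_nat_mul]
      congr 1
      field_simp
    have h5 : Real.exp (-1:ℝ) ≤ 1/2 := by
      rw [Real.exp_neg]
      have h6 : (2:ℝ) ≤ Real.exp 1 := by linarith [Real.add_one_le_exp 1]
      have h7 := inv_anti₀ (by norm_num : (0:ℝ) < 2) h6
      simpa [one_div] using h7
    rw [hf m]
    rw [h4] at h3
    linarith
  have hD_lower : 1/8 * r ≤ ∑' m, f m := by
    have h1 : ∑ m ∈ Finset.range (M'+1), f m ≤ ∑' m, f m :=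
      Summable.sum_le_tsum _ (fun m _ => hf0 m) hfsum
    have h2 : ((M'+1:ℕ):ℝ) * (1/2) ≤ ∑ m ∈ Finset.range (M'+1), f m := by
      have h2a := Finset.card_nsmul_le_sum (Finset.range (M'+1)) f (1/2)
        (fun m hm => hflow m (by simp only [Finset.mem_range] at hm; omega))
      simpa [nsmul_eq_mul] using h2a
    have h3 : r/4 ≤ ((M'+1:ℕ):ℝ) := by push_cast; linarith
    nlinarith
  exact ⟨hD_lower, hD_upper⟩

end Main

/-- Let `(H_k)_{k≥1}` be i.i.d. unit-mean exponential random variables and `R̄ > 0`.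
With `p_N(m) = 1 − ℙ(Σ_{k=1}^m log(1+H_k) > R̄)^N`, the average delay of incremental
redundancy multicast `D(N) = Σ_{m=0}^∞ p_N(m)` satisfies `D(N) = Θ(log N / log log N)`. -/
theorem incremental_redundancy_delay_theta
    {Ω : Type*} [MeasurableSpace Ω] (P : Measure Ω) [IsProbabilityMeasure P]
    (H : ℕ → Ω → ℝ) (hmeas : ∀ k, Measurable (H k))
    (hindep : iIndepFun H P)
    (hdist : ∀ k, P.map (H k) = expMeasure 1)
    (R : ℝ) (hR : 0 < R) :
    ∃ c₁ c₂ : ℝ, ∃ N₀ : ℕ, 0 < c₁ ∧ c₁ ≤ c₂ ∧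
      ∀ N : ℕ, N₀ ≤ N →
        c₁ * (Real.log N / Real.log (Real.log N)) ≤
            (∑' m : ℕ, (1 -
              (P {ω | R < ∑ k ∈ Finset.Icc 1 m, Real.log (1 + H k ω)}).toReal ^ N)) ∧
          (∑' m : ℕ, (1 -
              (P {ω | R < ∑ k ∈ Finset.Icc 1 m, Real.log (1 + H k ω)}).toReal ^ N)) ≤
            c₂ * (Real.log N / Real.log (Real.log N)) := by
  have hLtop : Tendsto (fun N : ℕ => Real.log N) atTop atTop :=
    Real.tendsto_log_atTop.comp tendsto_natCast_atTop_atTop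
  have hLLtop : Tendsto (fun N : ℕ => Real.log (Real.log N)) atTop atTop :=
    Real.tendsto_log_atTop.comp hLtop
  have hrtop : Tendsto (fun N : ℕ => Real.log N / Real.log (Real.log N)) atTop atTop :=
    aux_div_log.comp hLtop
  have hstop : Tendsto (fun N : ℕ =>
      Real.log (Real.log N) / 2 - Real.log (Real.log (Real.log N))) atTop atTop :=
    aux_sub_log.comp hLLtop
  have hev : ∀ᶠ N : ℕ in atTop, (2 ≤ N ∧ 2 ≤ Real.log N ∧ 2 ≤ Real.log (Real.log N)
      ∧ 12 * R + 12 ≤ Real.log N / Real.log (Real.log N)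
      ∧ R + 2 ≤ Real.log N / Real.log (Real.log N) / 4
      ∧ Real.log (24 * R) + 1 ≤ Real.log (Real.log N) / 2
          - Real.log (Real.log (Real.log N))
      ∧ |Real.log R| ≤ Real.log (Real.log N) / 2) := by
    filter_upwards [eventually_ge_atTop 2, hLtop.eventually_ge_atTop 2,
      hLLtop.eventually_ge_atTop 2, hrtop.eventually_ge_atTop (12*R+12),
      hrtop.eventually_ge_atTop (4*(R+2)),
      hstop.eventually_ge_atTop (Real.log (24*R) + 1),
      hLLtop.eventually_ge_atTop (2 * |Real.log R|)] with N h1 h2 h3 h4 h5 h6 h7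
    exact ⟨h1, h2, h3, h4, by linarith, h6, by linarith⟩
  obtain ⟨N₀, hN₀⟩ := eventually_atTop.mp hev
  refine ⟨1/8, 10, N₀, by norm_num, by norm_num, ?_⟩
  intro N hN
  obtain ⟨h1, h2, h3, h4, h5, h6, h7⟩ := hN₀ N hN
  have := main_estimate P H hmeas hindep hdist hR N h1 h2 h3 h4 h5 h6 h7
  exact ⟨this.1, this.2⟩
end

section
/- For each integer M ≥ 2 let F_M(x) = 1 − e^{−x} Σ_{j=0}^{M−1} x^j / j! for x ≥ 0 (the cumulative distribution function of a sum of M i.i.d. unit-mean exponential random variables). If (b_M) is a sequence of positive reals with F_M(b_M) = 1/M for every M, then b_M = Θ(M): there exist constants 0 < c₁ ≤ c₂ and M₀ such that c₁ M ≤ b_M ≤ c₂ M for all M ≥ M₀. -/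
open Real Finset

lemma exp_tail_le (x : ℝ) (hx : 0 ≤ x) (M : ℕ) :
    Real.exp x - ∑ j ∈ Finset.range M, x ^ j / (Nat.factorial j : ℝ)
      ≤ x ^ M / (Nat.factorial M : ℝ) * Real.exp x := by
  have hsum : HasSum (fun n : ℕ => x ^ n / (Nat.factorial n : ℝ)) (Real.exp x) := by
    rw [Real.exp_eq_exp_ℝ]; exact NormedSpace.expSeries_div_hasSum_exp x
  have hs : Summable (fun n : ℕ => x ^ n / (Nat.factorial n : ℝ)) := hsum.summable
  have hsplit : ∑ j ∈ Finset.range M, x ^ j / (Nat.factorial j : ℝ)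
      + ∑' k : ℕ, x ^ (k + M) / (Nat.factorial (k + M) : ℝ) = Real.exp x := by
    rw [Summable.sum_add_tsum_nat_add M hs, hsum.tsum_eq]
  have htail : ∑' k : ℕ, x ^ (k + M) / (Nat.factorial (k + M) : ℝ)
      ≤ ∑' k : ℕ, x ^ M / (Nat.factorial M : ℝ) * (x ^ k / (Nat.factorial k : ℝ)) := by
    refine Summable.tsum_le_tsum (fun k => ?_) ((summable_nat_add_iff M).2 hs) (hs.mul_left _)
    have hfac : (Nat.factorial M : ℝ) * (Nat.factorial k : ℝ) ≤ (Nat.factorial (k + M) : ℝ) := by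
      exact_mod_cast Nat.le_of_dvd (Nat.factorial_pos _) (by
        simpa [mul_comm] using Nat.factorial_mul_factorial_dvd_factorial_add k M)
    have hnum : x ^ (k + M) = x ^ M * x ^ k := by ring
    rw [hnum]
    calc x ^ M * x ^ k / (Nat.factorial (k + M) : ℝ)
        ≤ x ^ M * x ^ k / ((Nat.factorial M : ℝ) * (Nat.factorial k : ℝ)) := by
          apply div_le_div_of_nonneg_left (by positivity) (by positivity) hfac
      _ = x ^ M / (Nat.factorial M : ℝ) * (x ^ k / (Nat.factorial k : ℝ)) := by
          rw [div_mul_div_comm]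
  have htsum : ∑' k : ℕ, x ^ M / (Nat.factorial M : ℝ) * (x ^ k / (Nat.factorial k : ℝ))
      = x ^ M / (Nat.factorial M : ℝ) * Real.exp x := by
    rw [tsum_mul_left, hsum.tsum_eq]
  rw [htsum] at htail
  linarith

lemma aux_pow_div_factorial_le_exp (x : ℝ) (hx : 0 ≤ x) (M : ℕ) :
    x ^ M / (Nat.factorial M : ℝ) ≤ Real.exp x := by
  calc x ^ M / (Nat.factorial M : ℝ)
      ≤ ∑ j ∈ Finset.range (M + 1), x ^ j / (Nat.factorial j : ℝ) := by
        refine Finset.single_le_sum (f := fun j => x ^ j / (Nat.factorial j : ℝ))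
          (fun j _ => by positivity) ?_
        simp
    _ ≤ Real.exp x := Real.sum_le_exp_of_nonneg hx _

/-- Let `F_M(x) = 1 − e^{−x} Σ_{j=0}^{M−1} x^j/j!` (Gamma(M,1) cdf). If `(b_M)` are
positive reals with `F_M(b_M) = 1/M` for every `M ≥ 2`, then `b_M = Θ(M)`. -/
theorem gamma_lower_quantile_theta (b : ℕ → ℝ)
    (hbpos : ∀ M : ℕ, 2 ≤ M → 0 < b M)
    (hquant : ∀ M : ℕ, 2 ≤ M →
      1 - Real.exp (-(b M)) * ∑ j ∈ Finset.range M, (b M) ^ j / (Nat.factorial j : ℝ)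
        = 1 / (M : ℝ)) :
    ∃ c₁ c₂ : ℝ, ∃ M₀ : ℕ, 0 < c₁ ∧ c₁ ≤ c₂ ∧
      ∀ M : ℕ, M₀ ≤ M → c₁ * (M : ℝ) ≤ b M ∧ b M ≤ c₂ * (M : ℝ) := by
  have he : (2 : ℝ) ≤ Real.exp 1 := by
    have := Real.add_one_le_exp (1 : ℝ); linarith
  have he2 : Real.exp (-2 : ℝ) ≤ 1 := by
    rw [← Real.exp_zero]; exact Real.exp_le_exp.2 (by norm_num)
  refine ⟨Real.exp (-2), 2, 2, Real.exp_pos _, by linarith, ?_⟩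
  intro M hM
  set x := b M with hx
  have hxpos : 0 < x := hbpos M hM
  have hq := hquant M hM
  have hM1 : (1 : ℝ) ≤ (M : ℝ) := by exact_mod_cast Nat.one_le_of_lt hM
  have hM2 : (2 : ℝ) ≤ (M : ℝ) := by exact_mod_cast hM
  have hMpos : (0 : ℝ) < M := by linarith
  constructor
  · -- lower bound: exp(-2) * M ≤ x
    have h1 : (1 : ℝ) / M ≤ x ^ M / (Nat.factorial M : ℝ) := by
      have hA := exp_tail_le x hxpos.le M
      have hexp := Real.exp_pos x
      have key : 1 - Real.exp (-x) * ∑ j ∈ Finset.range M, x ^ j / (Nat.factorial j : ℝ)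
          ≤ x ^ M / (Nat.factorial M : ℝ) := by
        rw [Real.exp_neg]
        set E := Real.exp x
        set S := ∑ j ∈ Finset.range M, x ^ j / (Nat.factorial j : ℝ)
        set T := x ^ M / (Nat.factorial M : ℝ)
        have h' := mul_le_mul_of_nonneg_left hA (inv_nonneg.2 hexp.le)
        have e1 : E⁻¹ * (E - S) = 1 - E⁻¹ * S := by
          field_simp
        have e2 : E⁻¹ * (T * E) = T := by
          field_simp
        rw [e1, e2] at h'
        exact h'
      linarith [hq ▸ key]
    by_contra hcon
    push_neg at hcon
    have hpow : x ^ M ≤ (Real.exp (-2) * M) ^ M :=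
      pow_le_pow_left₀ hxpos.le hcon.le M
    have hMM : (M : ℝ) ^ M / (Nat.factorial M : ℝ) ≤ Real.exp M :=
      aux_pow_div_factorial_le_exp _ (by positivity) M
    have hfacpos : (0 : ℝ) < (Nat.factorial M : ℝ) := by positivity
    have h2 : (1 : ℝ) / M ≤ (Real.exp (-2) * M) ^ M / (Nat.factorial M : ℝ) :=
      h1.trans (by gcongr)
    have h3 : (Real.exp (-2) * M) ^ M / (Nat.factorial M : ℝ)
        = Real.exp (-2) ^ M * ((M : ℝ) ^ M / (Nat.factorial M : ℝ)) := by
      rw [mul_pow]; ring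
    have h4 : (1 : ℝ) / M ≤ Real.exp (-2) ^ M * Real.exp M := by
      rw [h3] at h2
      exact h2.trans (mul_le_mul_of_nonneg_left hMM (by positivity))
    have h5 : Real.exp (-2) ^ M * Real.exp M = Real.exp (-(M : ℝ)) := by
      rw [← Real.exp_nat_mul, ← Real.exp_add]; ring_nf
    rw [h5, Real.exp_neg, inv_eq_one_div] at h4
    rw [div_le_div_iff₀ hMpos (Real.exp_pos _)] at h4
    have h6 : Real.exp (M : ℝ) ≤ M := by linarith
    have := Real.add_one_le_exp (M : ℝ)
    linarith
  · -- upper bound: x ≤ 2 M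
    have hS : ∑ j ∈ Finset.range M, x ^ j / (Nat.factorial j : ℝ)
        ≤ 2 ^ (M - 1) * Real.exp (x / 2) := by
      calc ∑ j ∈ Finset.range M, x ^ j / (Nat.factorial j : ℝ)
          ≤ ∑ j ∈ Finset.range M, 2 ^ (M - 1) * ((x / 2) ^ j / (Nat.factorial j : ℝ)) := by
            refine Finset.sum_le_sum fun j hj => ?_
            rw [Finset.mem_range] at hj
            have hj' : j ≤ M - 1 := Nat.le_sub_one_of_lt hj
            have hxx : x ^ j = 2 ^ j * (x / 2) ^ j := by
              rw [← mul_pow]; ring_nf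
            rw [hxx, mul_div_assoc]
            exact mul_le_mul_of_nonneg_right (pow_le_pow_right₀ (by norm_num) hj')
              (by positivity)
        _ = 2 ^ (M - 1) * ∑ j ∈ Finset.range M, (x / 2) ^ j / (Nat.factorial j : ℝ) := by
            rw [Finset.mul_sum]
        _ ≤ 2 ^ (M - 1) * Real.exp (x / 2) :=
            mul_le_mul_of_nonneg_left (Real.sum_le_exp_of_nonneg (by positivity) _)
              (by positivity)
    have hhalf : (1 : ℝ) / 2 ≤ 1 - 1 / M := by
      have := one_div_le_one_div_of_le (by norm_num : (0:ℝ) < 2) hM2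
      linarith
    have heq : Real.exp (-x) * ∑ j ∈ Finset.range M, x ^ j / (Nat.factorial j : ℝ)
        = 1 - 1 / M := by linarith
    have hstep : (1 : ℝ) / 2 ≤ 2 ^ (M - 1) * (Real.exp (x / 2))⁻¹ := by
      have hme : Real.exp (-x) * (2 ^ (M - 1) * Real.exp (x / 2))
          = 2 ^ (M - 1) * (Real.exp (x / 2))⁻¹ := by
        rw [← Real.exp_neg]
        rw [mul_comm (Real.exp (-x)), mul_assoc, ← Real.exp_add]
        ring_nf
      calc (1 : ℝ) / 2 ≤ 1 - 1 / M := hhalf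
        _ = Real.exp (-x) * ∑ j ∈ Finset.range M, x ^ j / (Nat.factorial j : ℝ) := heq.symm
        _ ≤ Real.exp (-x) * (2 ^ (M - 1) * Real.exp (x / 2)) :=
            mul_le_mul_of_nonneg_left hS (Real.exp_pos _).le
        _ = 2 ^ (M - 1) * (Real.exp (x / 2))⁻¹ := hme
    have hE := Real.exp_pos (x / 2)
    have hexp2 : Real.exp (x / 2) ≤ 2 ^ M := by
      have h' := mul_le_mul_of_nonneg_right hstep hE.le
      rw [mul_assoc, inv_mul_cancel₀ hE.ne', mul_one] at h'
      have hpp : (2 : ℝ) ^ (M - 1) * 2 = 2 ^ M := by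
        rw [← pow_succ]; congr 1; omega
      nlinarith
    have h2e : (2 : ℝ) ^ M ≤ Real.exp 1 ^ M := pow_le_pow_left₀ (by norm_num) he M
    have hem : Real.exp 1 ^ M = Real.exp (M : ℝ) := by
      rw [← Real.exp_nat_mul]; ring_nf
    have hfin : Real.exp (x / 2) ≤ Real.exp (M : ℝ) := by
      rw [← hem]; exact hexp2.trans h2e
    have := Real.exp_le_exp.mp hfin
    linarith
end

section
/- Fix a real P > 0. For each integer M ≥ 1 let F_M(x) = 1 − e^{−x} Σ_{j=0}^{M−1} x^j / j! and f_M(x) = e^{−x} x^{M−1}/(M−1)! for x ≥ 0. Then there exist constants 0 < c₁ ≤ c₂ and M₀ such that for all M ≥ M₀: c₁ ≤ ∫_0^∞ log(1 + Px/M) · M (1−F_M(x))^{M−1} f_M(x) dx ≤ c₂. That is, the expected rate of the cooperative second stage, E[log(1 + (P/M)·min_{i≤M} χ_i)] with χ_1,…,χ_M i.i.d. with distribution F_M, is Θ(1) in M. -/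
open Real Set Finset

section Aux
open MeasureTheory

noncomputable def csS (M : ℕ) (x : ℝ) : ℝ := ∑ j ∈ Finset.range M, x ^ j / (Nat.factorial j : ℝ)
noncomputable def csE (M : ℕ) (x : ℝ) : ℝ := Real.exp (-x) * csS M x
noncomputable def csf (M : ℕ) (x : ℝ) : ℝ := Real.exp (-x) * x ^ (M - 1) / (Nat.factorial (M - 1) : ℝ)
noncomputable def csg (M : ℕ) (x : ℝ) : ℝ := (M : ℝ) * csE M x ^ (M - 1) * csf M x

lemma csS_continuous (M : ℕ) : Continuous (csS M) := by
  unfold csS; exact continuous_finset_sum _ fun j _ => (continuous_pow j).div_const _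

lemma csE_continuous (M : ℕ) : Continuous (csE M) :=
  ((Real.continuous_exp.comp continuous_neg)).mul (csS_continuous M)

lemma csf_continuous (M : ℕ) : Continuous (csf M) :=
  (((Real.continuous_exp.comp continuous_neg)).mul (continuous_pow _)).div_const _

lemma csg_continuous (M : ℕ) : Continuous (csg M) :=
  (continuous_const.mul ((csE_continuous M).pow _)).mul (csf_continuous M)

lemma hasDerivAt_csS (m : ℕ) (x : ℝ) : HasDerivAt (csS (m+1)) (csS m x) x := by
  have h : HasDerivAt (csS (m+1)) (∑ j ∈ Finset.range (m+1), (j : ℝ) * x ^ (j-1) / (Nat.factorial j : ℝ)) x := by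
    unfold csS
    apply HasDerivAt.fun_sum
    intro j _
    simpa using (hasDerivAt_pow j x).div_const (Nat.factorial j : ℝ)
  convert h using 1
  rw [Finset.sum_range_succ']
  unfold csS
  simp only [Nat.cast_zero, zero_mul, zero_div, add_zero]
  apply Finset.sum_congr rfl
  intro j _
  rw [Nat.factorial_succ]
  push_cast
  field_simp

lemma hasDerivAt_csE (m : ℕ) (x : ℝ) : HasDerivAt (csE (m+1)) (-(csf (m+1) x)) x := by
  have hexp : HasDerivAt (fun y : ℝ => Real.exp (-y)) (-Real.exp (-x)) x := by
    exact ((Real.hasDerivAt_exp (-x)).comp x (hasDerivAt_neg x)).congr_deriv (by simp)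
  have h := hexp.mul (hasDerivAt_csS m x)
  refine h.congr_deriv ?_
  have hsub : csS (m+1) x - csS m x = x ^ m / (Nat.factorial m : ℝ) := by
    unfold csS; rw [Finset.sum_range_succ]; ring
  unfold csf
  simp only [Nat.add_sub_cancel]
  have : (x:ℝ) ^ m / (Nat.factorial m : ℝ) = csS (m+1) x - csS m x := hsub.symm
  rw [mul_div_assoc, this]
  ring

lemma hasDerivAt_csE_pow (m : ℕ) (x : ℝ) :
    HasDerivAt (fun y => csE (m+1) y ^ (m+1)) (-(csg (m+1) x)) x := by
  have h := (hasDerivAt_csE m x).pow (m+1)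
  refine h.congr_deriv ?_
  unfold csg
  push_cast
  ring

lemma csS_nonneg (M : ℕ) {x : ℝ} (hx : 0 ≤ x) : 0 ≤ csS M x := by
  unfold csS
  exact Finset.sum_nonneg fun j _ => div_nonneg (pow_nonneg hx j) (Nat.cast_nonneg _)

lemma csE_nonneg (M : ℕ) {x : ℝ} (hx : 0 ≤ x) : 0 ≤ csE M x :=
  mul_nonneg (Real.exp_nonneg _) (csS_nonneg M hx)

lemma csE_le_one (M : ℕ) {x : ℝ} (hx : 0 ≤ x) : csE M x ≤ 1 := by
  unfold csE
  calc Real.exp (-x) * csS M x ≤ Real.exp (-x) * Real.exp x :=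
        mul_le_mul_of_nonneg_left (Real.sum_le_exp_of_nonneg hx M) (Real.exp_nonneg _)
    _ = 1 := by rw [← Real.exp_add]; simp

lemma csf_nonneg (M : ℕ) {x : ℝ} (hx : 0 ≤ x) : 0 ≤ csf M x :=
  div_nonneg (mul_nonneg (Real.exp_nonneg _) (pow_nonneg hx _)) (Nat.cast_nonneg _)

lemma csg_nonneg (M : ℕ) {x : ℝ} (hx : 0 ≤ x) : 0 ≤ csg M x :=
  mul_nonneg (mul_nonneg (Nat.cast_nonneg _) (pow_nonneg (csE_nonneg M hx) _)) (csf_nonneg M hx)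

lemma csE_zero (m : ℕ) : csE (m+1) 0 = 1 := by
  unfold csE csS
  rw [Finset.sum_range_succ']
  simp

lemma integral_csg (m : ℕ) {a b : ℝ} (hab : a ≤ b) :
    ∫ x in Ioc a b, csg (m+1) x = csE (m+1) a ^ (m+1) - csE (m+1) b ^ (m+1) := by
  have h := intervalIntegral.integral_eq_sub_of_hasDerivAt
    (f := fun y => csE (m+1) y ^ (m+1)) (f' := fun x => -(csg (m+1) x))
    (a := a) (b := b) (fun x _ => hasDerivAt_csE_pow m x)
    (((csg_continuous (m+1)).neg).intervalIntegrable a b)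
  rw [intervalIntegral.integral_of_le hab, MeasureTheory.integral_neg] at h
  linarith

lemma integral_csf (m : ℕ) {a : ℝ} (ha : 0 ≤ a) :
    ∫ x in Ioc 0 a, csf (m+1) x = 1 - csE (m+1) a := by
  have h := intervalIntegral.integral_eq_sub_of_hasDerivAt
    (f := csE (m+1)) (f' := fun x => -(csf (m+1) x))
    (a := 0) (b := a) (fun x _ => hasDerivAt_csE m x)
    (((csf_continuous (m+1)).neg).intervalIntegrable 0 a)
  rw [intervalIntegral.integral_of_le ha, MeasureTheory.integral_neg, csE_zero] at h
  linarith

lemma pow_div_factorial_le_exp {x : ℝ} (hx : 0 ≤ x) (j : ℕ) :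
    x ^ j / (Nat.factorial j : ℝ) ≤ Real.exp x := by
  calc x ^ j / (Nat.factorial j : ℝ)
      ≤ ∑ i ∈ Finset.range (j+1), x ^ i / (Nat.factorial i : ℝ) := by
        apply Finset.single_le_sum (f := fun i => x ^ i / (Nat.factorial i : ℝ))
          (fun i _ => div_nonneg (pow_nonneg hx i) (Nat.cast_nonneg _))
        simp
    _ ≤ Real.exp x := Real.sum_le_exp_of_nonneg hx _

lemma csF_le (m : ℕ) {a : ℝ} (ha : 0 ≤ a) :
    1 - csE (m+1) a ≤ a ^ (m+1) / (Nat.factorial (m+1) : ℝ) := by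
  rw [← integral_csf m ha]
  have h1 : ∫ x in Ioc 0 a, csf (m+1) x ≤ ∫ x in Ioc 0 a, x ^ m / (Nat.factorial m : ℝ) := by
    apply MeasureTheory.setIntegral_mono_on
    · exact ((csf_continuous (m+1)).integrableOn_Ioc)
    · exact (((continuous_pow m).div_const _).integrableOn_Ioc)
    · exact measurableSet_Ioc
    · intro x hx
      unfold csf
      simp only [Nat.add_sub_cancel]
      have hx0 : (0:ℝ) ≤ x := hx.1.le
      gcongr
      nlinarith [pow_nonneg hx0 m, Real.exp_nonneg (-x),
        Real.exp_le_one_iff.2 (neg_nonpos.mpr hx0)]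
  have h2 : ∫ x in Ioc 0 a, x ^ m / (Nat.factorial m : ℝ) = a ^ (m+1) / (Nat.factorial (m+1) : ℝ) := by
    rw [← intervalIntegral.integral_of_le ha]
    rw [intervalIntegral.integral_div, integral_pow]
    rw [Nat.factorial_succ]
    push_cast
    field_simp
    simp
  linarith

lemma exp_one_pow_eq (M : ℕ) : Real.exp 1 ^ M = Real.exp M := by
  rw [← Real.exp_nat_mul, mul_one]

lemma nat_pow_le_exp_mul_factorial (n : ℕ) :
    (n : ℝ) ^ n ≤ Real.exp n * (Nat.factorial n : ℝ) := by
  have h := Real.pow_div_factorial_le_exp (x := (n:ℝ)) (Nat.cast_nonneg n) n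
  have hf : (0:ℝ) < (Nat.factorial n : ℝ) := by exact_mod_cast Nat.factorial_pos n
  rw [div_le_iff₀ hf] at h
  linarith

lemma csF_quarter (m : ℕ) :
    1 - csE (m+1) ((m+1 : ℕ) / 4 : ℝ) ≤ (Real.exp 1 / 4) ^ (m+1) := by
  set M : ℕ := m + 1
  have hM : (0:ℝ) ≤ (M:ℝ) / 4 := by positivity
  have h1 := csF_le m hM
  have hf : (0:ℝ) < (Nat.factorial M : ℝ) := by exact_mod_cast Nat.factorial_pos M
  have h2 : ((M:ℝ)/4) ^ M / (Nat.factorial M : ℝ) ≤ (Real.exp 1 / 4) ^ M := by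
    have hp : (M:ℝ)^M / (Nat.factorial M:ℝ) ≤ Real.exp M := by
      rw [div_le_iff₀ hf]; linarith [nat_pow_le_exp_mul_factorial M]
    rw [div_pow, div_pow, exp_one_pow_eq, div_right_comm]
    gcongr
  exact h1.trans h2

lemma csE_two_M (m : ℕ) :
    csE (m+1) (2 * (m+1 : ℕ) : ℝ) ≤ (1/2) * (2 / Real.exp 1) ^ (m+1) := by
  set M : ℕ := m + 1
  have hS : csS M (2 * (M:ℕ) : ℝ) ≤ 2 ^ (M - 1) * Real.exp M := by
    unfold csS
    calc ∑ j ∈ Finset.range M, ((2:ℝ) * (M:ℕ)) ^ j / (Nat.factorial j : ℝ)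
        ≤ ∑ j ∈ Finset.range M, 2 ^ (M-1) * ((M:ℝ) ^ j / (Nat.factorial j : ℝ)) := by
          apply Finset.sum_le_sum
          intro j hj
          rw [Finset.mem_range] at hj
          have hj' : j ≤ M - 1 := Nat.le_sub_one_of_lt hj
          rw [mul_pow, mul_div_assoc]
          exact mul_le_mul_of_nonneg_right (pow_le_pow_right₀ one_le_two hj') (by positivity)
      _ = 2 ^ (M-1) * ∑ j ∈ Finset.range M, (M:ℝ) ^ j / (Nat.factorial j : ℝ) := by
          rw [Finset.mul_sum]
      _ ≤ 2 ^ (M-1) * Real.exp M := by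
          gcongr
          exact Real.sum_le_exp_of_nonneg (Nat.cast_nonneg M) M
  have hE : csE M (2 * (M:ℕ) : ℝ) ≤ Real.exp (-(2*(M:ℝ))) * (2 ^ (M-1) * Real.exp M) := by
    unfold csE
    push_cast
    refine mul_le_mul_of_nonneg_left ?_ (Real.exp_nonneg _)
    have := hS
    unfold csS at this
    push_cast at this ⊢
    exact this
  have h2 : (2:ℝ) ^ (M-1) = 2 ^ M / 2 := by
    have hMM : M - 1 + 1 = M := Nat.succ_pred_eq_of_pos (Nat.succ_pos m)
    rw [← hMM, pow_succ]
    field_simp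
    simp
  have hE1 : Real.exp (-(2*(M:ℝ))) = (Real.exp M)⁻¹ * (Real.exp M)⁻¹ := by
    rw [← Real.exp_neg, ← Real.exp_add]
    ring_nf
  calc csE M (2 * (M:ℕ) : ℝ) ≤ Real.exp (-(2*(M:ℝ))) * (2 ^ (M-1) * Real.exp M) := hE
    _ = (1/2) * (2 / Real.exp 1) ^ M := by
        rw [hE1, h2, div_pow, exp_one_pow_eq]
        field_simp [Real.exp_ne_zero]

lemma pow_mul_exp_le (M : ℕ) (hM : 1 ≤ M) {x : ℝ} (hx : 0 ≤ x) :
    x ^ M * Real.exp (-x) ≤ (2*(M:ℝ)/Real.exp 1)^M * Real.exp (-x/2) := by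
  have hM0 : (0:ℝ) < M := by exact_mod_cast hM
  have hbase : x * Real.exp (-(x/(2*(M:ℝ)))) ≤ 2*(M:ℝ)/Real.exp 1 := by
    have h1 : x/(2*(M:ℝ)) - 1 + 1 ≤ Real.exp (x/(2*(M:ℝ)) - 1) := Real.add_one_le_exp _
    have h2 : Real.exp (x/(2*(M:ℝ)) - 1) = Real.exp (x/(2*(M:ℝ))) / Real.exp 1 := by
      rw [Real.exp_sub]
    rw [h2] at h1
    have h3 : x ≤ 2*(M:ℝ) * (Real.exp (x/(2*(M:ℝ))) / Real.exp 1) := by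
      have := mul_le_mul_of_nonneg_left h1 (le_of_lt (by positivity : (0:ℝ) < 2*(M:ℝ)))
      calc x = 2*(M:ℝ) * (x/(2*(M:ℝ)) - 1 + 1) := by field_simp; ring
        _ ≤ 2*(M:ℝ) * (Real.exp (x/(2*(M:ℝ))) / Real.exp 1) := this
    calc x * Real.exp (-(x/(2*(M:ℝ))))
        ≤ (2*(M:ℝ) * (Real.exp (x/(2*(M:ℝ))) / Real.exp 1)) * Real.exp (-(x/(2*(M:ℝ)))) :=
          mul_le_mul_of_nonneg_right h3 (Real.exp_nonneg _)
      _ = 2*(M:ℝ)/Real.exp 1 := by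
          rw [Real.exp_neg]
          field_simp [Real.exp_ne_zero]
  have hpow := pow_le_pow_left₀ (mul_nonneg hx (Real.exp_nonneg _)) hbase M
  have hL : (x * Real.exp (-(x/(2*(M:ℝ)))))^M = x^M * Real.exp (-x/2) := by
    rw [mul_pow, ← Real.exp_nat_mul]
    congr 2
    field_simp
  rw [hL] at hpow
  have hsplit : Real.exp (-x) = Real.exp (-x/2) * Real.exp (-x/2) := by
    rw [← Real.exp_add]; ring_nf
  calc x ^ M * Real.exp (-x) = (x^M * Real.exp (-x/2)) * Real.exp (-x/2) := by
        rw [hsplit]; ring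
    _ ≤ (2*(M:ℝ)/Real.exp 1)^M * Real.exp (-x/2) :=
        mul_le_mul_of_nonneg_right hpow (Real.exp_nonneg _)

lemma integrableOn_exp_half (a : ℝ) : IntegrableOn (fun x => Real.exp (-x/2)) (Ioi a) := by
  have h := exp_neg_integrableOn_Ioi a (by norm_num : (0:ℝ) < 1/2)
  have he : (fun x : ℝ => Real.exp (-x/2)) = fun x : ℝ => Real.exp (-(1/2) * x) := by
    funext x; congr 1; ring
  rw [he]
  exact h

lemma integral_exp_half (a : ℝ) : ∫ x in Ioi a, Real.exp (-x/2) = 2 * Real.exp (-a/2) := by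
  have hd : ∀ x ∈ Ici a, HasDerivAt (fun y => -2 * Real.exp (-y/2)) (Real.exp (-x/2)) x := by
    intro x _
    have h1 : HasDerivAt (fun y : ℝ => -y/2) (-1/2 : ℝ) x := by
      simpa using ((hasDerivAt_id x).neg.div_const 2)
    have h2 := (Real.hasDerivAt_exp (-x/2)).comp x h1
    have h3 := h2.const_mul (-2 : ℝ)
    refine h3.congr_deriv ?_
    ring
  have htend : Filter.Tendsto (fun y : ℝ => -2 * Real.exp (-y/2)) Filter.atTop (nhds 0) := by
    have h1 : Filter.Tendsto (fun y : ℝ => y/2) Filter.atTop Filter.atTop :=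
      Filter.tendsto_id.atTop_div_const (by norm_num)
    have h2 : Filter.Tendsto (fun y : ℝ => -y/2) Filter.atTop Filter.atBot := by
      simp only [neg_div]
      exact Filter.tendsto_neg_atBot_iff.mpr h1
    have h3 : Filter.Tendsto (fun y : ℝ => Real.exp (-y/2)) Filter.atTop (nhds 0) :=
      Real.tendsto_exp_atBot.comp h2
    have := h3.const_mul (-2 : ℝ)
    simpa using this
  have h := MeasureTheory.integral_Ioi_of_hasDerivAt_of_tendsto' hd (integrableOn_exp_half a) htend
  rw [h]
  ring

noncomputable def csφ (P : ℝ) (M : ℕ) (x : ℝ) : ℝ := Real.log (1 + P * x / M) * csg M x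

lemma csφ_nonneg {P : ℝ} (hP : 0 ≤ P) (M : ℕ) {x : ℝ} (hx : 0 ≤ x) : 0 ≤ csφ P M x := by
  unfold csφ
  apply mul_nonneg _ (csg_nonneg M hx)
  apply Real.log_nonneg
  have : 0 ≤ P * x / M := by positivity
  linarith

lemma csφ_continuousOn {P : ℝ} (hP : 0 ≤ P) (M : ℕ) : ContinuousOn (csφ P M) (Ici 0) := by
  unfold csφ
  apply ContinuousOn.mul _ (csg_continuous M).continuousOn
  apply ContinuousOn.log
  · fun_prop
  · intro x hx
    have hx0 : (0:ℝ) ≤ x := hx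
    have h1 : 0 ≤ P * x / M := by positivity
    intro h
    linarith

lemma csφ_le {P : ℝ} (hP : 0 ≤ P) (m : ℕ) {x : ℝ} (hx : 0 ≤ x) :
    csφ P (m+1) x ≤
      P * ((2*((m+1:ℕ):ℝ)/Real.exp 1)^(m+1) / (Nat.factorial m : ℝ)) * Real.exp (-x/2) := by
  have hMpos : (0:ℝ) < ((m+1:ℕ):ℝ) := by positivity
  have hfac : (0:ℝ) < (Nat.factorial m : ℝ) := by exact_mod_cast Nat.factorial_pos m
  have hlog : Real.log (1 + P * x / ((m+1:ℕ):ℝ)) ≤ P * x / ((m+1:ℕ):ℝ) := by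
    have h1 : (0:ℝ) < 1 + P * x / ((m+1:ℕ):ℝ) := by positivity
    have := Real.log_le_sub_one_of_pos h1
    linarith
  have hg : csg (m+1) x ≤ ((m+1:ℕ):ℝ) * (Real.exp (-x) * x ^ m / (Nat.factorial m : ℝ)) := by
    unfold csg csf
    simp only [Nat.add_sub_cancel]
    have hEpow : csE (m+1) x ^ (m+1-1) ≤ 1 :=
      pow_le_one₀ (csE_nonneg (m+1) hx) (csE_le_one (m+1) hx)
    simp only [Nat.add_sub_cancel] at hEpow
    calc ((m+1:ℕ):ℝ) * csE (m+1) x ^ m * (Real.exp (-x) * x ^ m / (Nat.factorial m : ℝ))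
        ≤ ((m+1:ℕ):ℝ) * 1 * (Real.exp (-x) * x ^ m / (Nat.factorial m : ℝ)) := by
          apply mul_le_mul_of_nonneg_right _ (by positivity)
          exact mul_le_mul_of_nonneg_left hEpow (by positivity)
      _ = ((m+1:ℕ):ℝ) * (Real.exp (-x) * x ^ m / (Nat.factorial m : ℝ)) := by ring
  have hφ : csφ P (m+1) x ≤ (P * x / ((m+1:ℕ):ℝ)) * (((m+1:ℕ):ℝ) * (Real.exp (-x) * x ^ m / (Nat.factorial m : ℝ))) := by
    unfold csφ
    apply mul_le_mul hlog hg (csg_nonneg (m+1) hx) (by positivity)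
  have heq : (P * x / ((m+1:ℕ):ℝ)) * (((m+1:ℕ):ℝ) * (Real.exp (-x) * x ^ m / (Nat.factorial m : ℝ)))
      = P * (x ^ (m+1) * Real.exp (-x)) / (Nat.factorial m : ℝ) := by
    field_simp
    ring
  rw [heq] at hφ
  calc csφ P (m+1) x ≤ P * (x ^ (m+1) * Real.exp (-x)) / (Nat.factorial m : ℝ) := hφ
    _ ≤ P * ((2*((m+1:ℕ):ℝ)/Real.exp 1)^(m+1) * Real.exp (-x/2)) / (Nat.factorial m : ℝ) := by
        gcongr P * ?_ / _
        exact pow_mul_exp_le (m+1) (Nat.le_add_left 1 m) hx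
    _ = P * ((2*((m+1:ℕ):ℝ)/Real.exp 1)^(m+1) / (Nat.factorial m : ℝ)) * Real.exp (-x/2) := by ring

lemma csφ_integrableOn {P : ℝ} (hP : 0 ≤ P) (m : ℕ) {a : ℝ} (ha : 0 ≤ a) :
    IntegrableOn (csφ P (m+1)) (Ioi a) := by
  set C : ℝ := P * ((2*((m+1:ℕ):ℝ)/Real.exp 1)^(m+1) / (Nat.factorial m : ℝ)) with hC
  have hCint : Integrable (fun x => C * Real.exp (-x/2)) (volume.restrict (Ioi a)) :=
    (integrableOn_exp_half a).const_mul C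
  apply Integrable.mono' hCint
  · exact ((csφ_continuousOn hP (m+1)).mono (Ioi_subset_Ici ha)).aestronglyMeasurable measurableSet_Ioi
  · rw [MeasureTheory.ae_restrict_iff' measurableSet_Ioi]
    apply Filter.Eventually.of_forall
    intro x hx
    have hx0 : (0:ℝ) ≤ x := le_trans ha (le_of_lt hx)
    rw [Real.norm_eq_abs, abs_of_nonneg (csφ_nonneg hP (m+1) hx0)]
    exact csφ_le hP m hx0

lemma tailC_le (m : ℕ) :
    (2*((m+1:ℕ):ℝ)/Real.exp 1)^(m+1) / (Nat.factorial m : ℝ) ≤ 2^(m+1) * ((m+1:ℕ):ℝ) := by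
  set M : ℕ := m + 1
  have hfac : (0:ℝ) < (Nat.factorial m : ℝ) := by exact_mod_cast Nat.factorial_pos m
  have hterm : ((M:ℕ):ℝ)^m / (Nat.factorial m : ℝ) ≤ Real.exp M :=
    Real.pow_div_factorial_le_exp ((M:ℕ):ℝ) (Nat.cast_nonneg M) m
  rw [div_le_iff₀ hfac] at hterm
  have hexpM : (0:ℝ) < Real.exp M := Real.exp_pos _
  have hkey : (2*((M:ℕ):ℝ)/Real.exp 1)^M = 2^M * (((M:ℕ):ℝ)^m * ((M:ℕ):ℝ)) / Real.exp M := by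
    rw [div_pow, mul_pow, exp_one_pow_eq, ← pow_succ]
  rw [hkey, div_div, div_le_iff₀ (by positivity)]
  calc (2:ℝ)^M * (((M:ℕ):ℝ)^m * ((M:ℕ):ℝ))
      = 2^M * ((M:ℕ):ℝ) * ((M:ℕ):ℝ)^m := by ring
    _ ≤ 2^M * ((M:ℕ):ℝ) * (Real.exp M * (Nat.factorial m : ℝ)) := by gcongr

lemma lower_bound {P : ℝ} (hP : 0 < P) (m : ℕ)
    (h1 : ((m+1:ℕ):ℝ) * (Real.exp 1 / 4) ^ (m+1) ≤ 1/4)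
    (h2 : (1/2 : ℝ) * (2 / Real.exp 1) ^ (m+1) ≤ 1/4) :
    (1/2) * Real.log (1 + P/4) ≤ ∫ x in Ioi (0:ℝ), csφ P (m+1) x := by
  set M : ℕ := m + 1 with hMdef
  have hMpos : (0:ℝ) < ((M:ℕ):ℝ) := by positivity
  have hq : (0:ℝ) ≤ ((M:ℕ):ℝ)/4 := by positivity
  have hab : ((M:ℕ):ℝ)/4 ≤ 2*((M:ℕ):ℝ) := by linarith
  -- lower bound on the mass of (M/4, 2M]
  have hElow : (1:ℝ) - ((M:ℕ):ℝ) * (1 - csE M (((M:ℕ):ℝ)/4)) ≤ csE M (((M:ℕ):ℝ)/4) ^ M := by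
    have hEle := csE_le_one M hq
    have hEge := csE_nonneg M hq
    have hb := one_add_mul_le_pow (a := csE M (((M:ℕ):ℝ)/4) - 1) (by linarith) M
    have : (1 : ℝ) + (csE M (((M:ℕ):ℝ)/4) - 1) = csE M (((M:ℕ):ℝ)/4) := by ring
    rw [this] at hb
    calc (1:ℝ) - ((M:ℕ):ℝ) * (1 - csE M (((M:ℕ):ℝ)/4))
        = 1 + ((M:ℕ):ℝ) * (csE M (((M:ℕ):ℝ)/4) - 1) := by ring
      _ ≤ csE M (((M:ℕ):ℝ)/4) ^ M := hb
  have hF : 1 - csE M (((M:ℕ):ℝ)/4) ≤ (Real.exp 1 / 4) ^ M := csF_quarter m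
  have hEq : (3/4 : ℝ) ≤ csE M (((M:ℕ):ℝ)/4) ^ M := by
    have : ((M:ℕ):ℝ) * (1 - csE M (((M:ℕ):ℝ)/4)) ≤ ((M:ℕ):ℝ) * (Real.exp 1 / 4) ^ M :=
      mul_le_mul_of_nonneg_left hF (le_of_lt hMpos)
    linarith
  have hE2 : csE M (2*((M:ℕ):ℝ)) ^ M ≤ 1/4 := by
    have h2M : (0:ℝ) ≤ 2*((M:ℕ):ℝ) := by positivity
    have hEle := csE_le_one M h2M
    have hEge := csE_nonneg M h2M
    have hpow : csE M (2*((M:ℕ):ℝ)) ^ M ≤ csE M (2*((M:ℕ):ℝ)) ^ 1 :=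
      pow_le_pow_of_le_one hEge hEle (Nat.le_add_left 1 m)
    rw [pow_one] at hpow
    have h3 := csE_two_M m
    rw [← hMdef] at h3
    linarith
  have hmass : (1/2 : ℝ) ≤ csE M (((M:ℕ):ℝ)/4) ^ M - csE M (2*((M:ℕ):ℝ)) ^ M := by linarith
  -- compare with the integral
  have hmeas : ∫ x in Ioc (((M:ℕ):ℝ)/4) (2*((M:ℕ):ℝ)), csg M x
      = csE M (((M:ℕ):ℝ)/4) ^ M - csE M (2*((M:ℕ):ℝ)) ^ M := integral_csg m hab
  have hlogpos : (0:ℝ) ≤ Real.log (1 + P/4) := Real.log_nonneg (by linarith)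
  have hstep1 : (1/2) * Real.log (1 + P/4)
      ≤ ∫ x in Ioc (((M:ℕ):ℝ)/4) (2*((M:ℕ):ℝ)), Real.log (1 + P/4) * csg M x := by
    rw [MeasureTheory.integral_const_mul, hmeas]
    calc (1/2) * Real.log (1 + P/4) = Real.log (1 + P/4) * (1/2) := by ring
      _ ≤ Real.log (1 + P/4) * (csE M (((M:ℕ):ℝ)/4) ^ M - csE M (2*((M:ℕ):ℝ)) ^ M) :=
          mul_le_mul_of_nonneg_left hmass hlogpos
  have hicc : Icc (((M:ℕ):ℝ)/4) (2*((M:ℕ):ℝ)) ⊆ Ici 0 := fun x hx => le_trans hq hx.1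
  have hint1 : IntegrableOn (fun x => Real.log (1 + P/4) * csg M x)
      (Ioc (((M:ℕ):ℝ)/4) (2*((M:ℕ):ℝ))) :=
    (continuous_const.mul (csg_continuous M)).integrableOn_Ioc
  have hint2 : IntegrableOn (csφ P M) (Ioc (((M:ℕ):ℝ)/4) (2*((M:ℕ):ℝ))) := by
    apply (((csφ_continuousOn (le_of_lt hP) M).mono hicc).integrableOn_Icc).mono_set
      Ioc_subset_Icc_self
  have hstep2 : ∫ x in Ioc (((M:ℕ):ℝ)/4) (2*((M:ℕ):ℝ)), Real.log (1 + P/4) * csg M x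
      ≤ ∫ x in Ioc (((M:ℕ):ℝ)/4) (2*((M:ℕ):ℝ)), csφ P M x := by
    apply MeasureTheory.setIntegral_mono_on hint1 hint2 measurableSet_Ioc
    intro x hx
    have hx0 : (0:ℝ) ≤ x := le_trans hq (le_of_lt hx.1)
    unfold csφ
    apply mul_le_mul_of_nonneg_right _ (csg_nonneg M hx0)
    apply Real.log_le_log (by linarith)
    have : P/4 ≤ P * x / ((M:ℕ):ℝ) := by
      rw [div_le_div_iff₀ (by norm_num) hMpos]
      have : ((M:ℕ):ℝ)/4 ≤ x := le_of_lt hx.1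
      nlinarith
    linarith
  have hstep3 : ∫ x in Ioc (((M:ℕ):ℝ)/4) (2*((M:ℕ):ℝ)), csφ P M x
      ≤ ∫ x in Ioi (0:ℝ), csφ P M x := by
    apply MeasureTheory.setIntegral_mono_set (csφ_integrableOn (le_of_lt hP) m le_rfl)
    · filter_upwards [MeasureTheory.ae_restrict_mem measurableSet_Ioi] with x hx
      exact csφ_nonneg (le_of_lt hP) M (le_of_lt hx)
    · apply HasSubset.Subset.eventuallyLE
      intro x hx
      exact lt_of_lt_of_le (by positivity) (le_of_lt hx.1)
  linarith

lemma upper_bound {P : ℝ} (hP : 0 < P) (m : ℕ)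
    (h3 : 2*P*((m+1:ℕ):ℝ)*(2/Real.exp 1)^(m+1) ≤ 1) :
    ∫ x in Ioi (0:ℝ), csφ P (m+1) x ≤ Real.log (1 + 2*P) + 1 := by
  set M : ℕ := m + 1 with hMdef
  have hMpos : (0:ℝ) < ((M:ℕ):ℝ) := by positivity
  set b : ℝ := 2*((M:ℕ):ℝ) with hbdef
  have hb0 : (0:ℝ) ≤ b := by positivity
  have hInt1 : IntegrableOn (csφ P M) (Ioc 0 b) :=
    (csφ_integrableOn (le_of_lt hP) m le_rfl).mono_set Ioc_subset_Ioi_self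
  have hInt2 : IntegrableOn (csφ P M) (Ioi b) :=
    (csφ_integrableOn (le_of_lt hP) m le_rfl).mono_set (Ioi_subset_Ioi hb0)
  have hsplit : ∫ x in Ioi (0:ℝ), csφ P M x
      = (∫ x in Ioc 0 b, csφ P M x) + ∫ x in Ioi b, csφ P M x := by
    rw [← MeasureTheory.setIntegral_union (Ioc_disjoint_Ioi le_rfl) measurableSet_Ioi hInt1 hInt2]
    rw [Ioc_union_Ioi_eq_Ioi hb0]
  have hlogpos : (0:ℝ) ≤ Real.log (1 + 2*P) := Real.log_nonneg (by linarith)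
  -- main part
  have hpart1 : ∫ x in Ioc 0 b, csφ P M x ≤ Real.log (1 + 2*P) := by
    have hmono : ∫ x in Ioc 0 b, csφ P M x
        ≤ ∫ x in Ioc 0 b, Real.log (1 + 2*P) * csg M x := by
      apply MeasureTheory.setIntegral_mono_on hInt1
        ((continuous_const.mul (csg_continuous M)).integrableOn_Ioc) measurableSet_Ioc
      intro x hx
      have hx0 : (0:ℝ) ≤ x := le_of_lt hx.1
      unfold csφ
      apply mul_le_mul_of_nonneg_right _ (csg_nonneg M hx0)
      apply Real.log_le_log (by positivity)
      have hPx : P * x / ((M:ℕ):ℝ) ≤ 2*P := by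
        rw [div_le_iff₀ hMpos]
        have hxb : x ≤ 2*((M:ℕ):ℝ) := hx.2
        nlinarith
      linarith
    have hval : ∫ x in Ioc 0 b, Real.log (1 + 2*P) * csg M x
        = Real.log (1 + 2*P) * (csE M 0 ^ M - csE M b ^ M) := by
      rw [MeasureTheory.integral_const_mul, integral_csg m hb0]
    have hE0 : csE M 0 = 1 := csE_zero m
    have hEb : (0:ℝ) ≤ csE M b ^ M := pow_nonneg (csE_nonneg M hb0) M
    calc ∫ x in Ioc 0 b, csφ P M x ≤ Real.log (1 + 2*P) * (csE M 0 ^ M - csE M b ^ M) := by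
          rw [← hval]; exact hmono
      _ ≤ Real.log (1 + 2*P) * 1 := by
          apply mul_le_mul_of_nonneg_left _ hlogpos
          rw [hE0, one_pow]
          linarith
      _ = Real.log (1 + 2*P) := mul_one _
  -- tail part
  set C : ℝ := P * ((2*((M:ℕ):ℝ)/Real.exp 1)^M / (Nat.factorial m : ℝ)) with hCdef
  have hpart2 : ∫ x in Ioi b, csφ P M x ≤ 1 := by
    have hmono : ∫ x in Ioi b, csφ P M x ≤ ∫ x in Ioi b, C * Real.exp (-x/2) := by
      apply MeasureTheory.setIntegral_mono_on hInt2
        ((integrableOn_exp_half b).const_mul C) measurableSet_Ioi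
      intro x hx
      have hx0 : (0:ℝ) ≤ x := le_trans hb0 (le_of_lt hx)
      exact csφ_le (le_of_lt hP) m hx0
    have hval : ∫ x in Ioi b, C * Real.exp (-x/2) = C * (2 * Real.exp (-b/2)) := by
      rw [MeasureTheory.integral_const_mul, integral_exp_half b]
    have hbhalf : -b/2 = -((M:ℕ):ℝ) := by rw [hbdef]; ring
    have hCle : C ≤ P * (2^M * ((M:ℕ):ℝ)) :=
      mul_le_mul_of_nonneg_left (tailC_le m) (le_of_lt hP)
    have hfinal : C * (2 * Real.exp (-b/2)) ≤ 1 := by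
      rw [hbhalf]
      have hexp : (0:ℝ) < Real.exp (-((M:ℕ):ℝ)) := Real.exp_pos _
      have hgeo : 2^M * Real.exp (-((M:ℕ):ℝ)) = (2 / Real.exp 1) ^ M := by
        rw [div_pow, exp_one_pow_eq, Real.exp_neg]
        field_simp
      have hCpos : 0 ≤ C := by
        rw [hCdef]
        have : (0:ℝ) < (Nat.factorial m : ℝ) := by exact_mod_cast Nat.factorial_pos m
        positivity
      calc C * (2 * Real.exp (-((M:ℕ):ℝ)))
          ≤ (P * (2^M * ((M:ℕ):ℝ))) * (2 * Real.exp (-((M:ℕ):ℝ))) := by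
            apply mul_le_mul_of_nonneg_right hCle (by positivity)
        _ = 2*P*((M:ℕ):ℝ)*(2^M * Real.exp (-((M:ℕ):ℝ))) := by ring
        _ = 2*P*((M:ℕ):ℝ)*(2 / Real.exp 1) ^ M := by rw [hgeo]
        _ ≤ 1 := h3
    calc ∫ x in Ioi b, csφ P M x ≤ C * (2 * Real.exp (-b/2)) := by rw [← hval]; exact hmono
      _ ≤ 1 := hfinal
  rw [hsplit]
  linarith

lemma csφ_eq (P : ℝ) (M : ℕ) (x : ℝ) :
    Real.log (1 + P * x / (M : ℝ)) *
        ((M : ℝ) *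
          (1 - (1 - Real.exp (-x) *
            ∑ j ∈ Finset.range M, x ^ j / (Nat.factorial j : ℝ))) ^ (M - 1) *
          (Real.exp (-x) * x ^ (M - 1) / (Nat.factorial (M - 1) : ℝ))) = csφ P M x := by
  simp only [csφ, csg, csf, csE, csS, sub_sub_cancel]

lemma eventually_conds (P : ℝ) (hP : 0 < P) :
    ∀ᶠ M : ℕ in Filter.atTop,
      1 ≤ M ∧ ((M:ℝ) * (Real.exp 1 / 4) ^ M ≤ 1/4 ∧ (1/2 : ℝ) * (2 / Real.exp 1) ^ M ≤ 1/4 ∧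
        2*P*((M:ℕ):ℝ)*(2/Real.exp 1)^M ≤ 1) := by
  have he4 : Real.exp 1 / 4 < 1 := by
    have := Real.exp_one_lt_d9
    linarith
  have he4' : (0:ℝ) ≤ Real.exp 1 / 4 := by positivity
  have h2e : 2 / Real.exp 1 < 1 := by
    have := Real.exp_one_gt_d9
    rw [div_lt_one (Real.exp_pos 1)]
    linarith
  have h2e' : (0:ℝ) ≤ 2 / Real.exp 1 := by positivity
  have t1 : Filter.Tendsto (fun n : ℕ => (n:ℝ) * (Real.exp 1 / 4) ^ n) Filter.atTop (nhds 0) := by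
    have := (summable_pow_mul_geometric_of_norm_lt_one (R := ℝ) 1
      (r := Real.exp 1 / 4) (by rwa [Real.norm_eq_abs, abs_of_nonneg he4'])).tendsto_atTop_zero
    simpa using this
  have t2 : Filter.Tendsto (fun n : ℕ => (n:ℝ) * (2 / Real.exp 1) ^ n) Filter.atTop (nhds 0) := by
    have := (summable_pow_mul_geometric_of_norm_lt_one (R := ℝ) 1
      (r := 2 / Real.exp 1) (by rwa [Real.norm_eq_abs, abs_of_nonneg h2e'])).tendsto_atTop_zero
    simpa using this
  have t3 : Filter.Tendsto (fun n : ℕ => (2 / Real.exp 1) ^ n) Filter.atTop (nhds 0) :=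
    tendsto_pow_atTop_nhds_zero_of_lt_one h2e' h2e
  have e1 : ∀ᶠ M : ℕ in Filter.atTop, (M:ℝ) * (Real.exp 1 / 4) ^ M ≤ 1/4 := by
    filter_upwards [t1.eventually_lt_const (by norm_num : (0:ℝ) < 1/4)] with M h
    exact le_of_lt h
  have e2 : ∀ᶠ M : ℕ in Filter.atTop, (1/2 : ℝ) * (2 / Real.exp 1) ^ M ≤ 1/4 := by
    filter_upwards [t3.eventually_lt_const (by norm_num : (0:ℝ) < 1/2)] with M h
    linarith
  have e3 : ∀ᶠ M : ℕ in Filter.atTop, 2*P*((M:ℕ):ℝ)*(2/Real.exp 1)^M ≤ 1 := by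
    have t4 : Filter.Tendsto (fun n : ℕ => 2*P*((n:ℝ) * (2 / Real.exp 1) ^ n))
        Filter.atTop (nhds (2*P*0)) := t2.const_mul (2*P)
    rw [mul_zero] at t4
    filter_upwards [t4.eventually_lt_const (by norm_num : (0:ℝ) < 1)] with M h
    calc 2*P*((M:ℕ):ℝ)*(2/Real.exp 1)^M = 2*P*(((M:ℕ):ℝ)*(2/Real.exp 1)^M) := by ring
      _ ≤ 1 := le_of_lt h
  filter_upwards [Filter.eventually_ge_atTop 1, e1, e2, e3] with M h0 h1 h2 h3
  exact ⟨h0, h1, h2, h3⟩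

end Aux

open MeasureTheory in
/-- Fix `P > 0`. With `F_M(x) = 1 − e^{−x} Σ_{j<M} x^j/j!` and
`f_M(x) = e^{−x} x^{M−1}/(M−1)!`, the expected rate of the cooperative second stage,
`∫_0^∞ log(1+Px/M) · M (1−F_M(x))^{M−1} f_M(x) dx`, is `Θ(1)` in `M`. -/
theorem cooperative_second_stage_rate_theta (P : ℝ) (hP : 0 < P) :
    ∃ c₁ c₂ : ℝ, ∃ M₀ : ℕ, 0 < c₁ ∧ c₁ ≤ c₂ ∧
      ∀ M : ℕ, M₀ ≤ M →
        c₁ ≤ (∫ x in Ioi (0 : ℝ), Real.log (1 + P * x / (M : ℝ)) *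
              ((M : ℝ) *
                (1 - (1 - Real.exp (-x) *
                  ∑ j ∈ Finset.range M, x ^ j / (Nat.factorial j : ℝ))) ^ (M - 1) *
                (Real.exp (-x) * x ^ (M - 1) / (Nat.factorial (M - 1) : ℝ)))) ∧
          (∫ x in Ioi (0 : ℝ), Real.log (1 + P * x / (M : ℝ)) *
              ((M : ℝ) *
                (1 - (1 - Real.exp (-x) *
                  ∑ j ∈ Finset.range M, x ^ j / (Nat.factorial j : ℝ))) ^ (M - 1) *
                (Real.exp (-x) * x ^ (M - 1) / (Nat.factorial (M - 1) : ℝ)))) ≤ c₂ := by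
  obtain ⟨M₀, hM₀⟩ := Filter.eventually_atTop.mp (eventually_conds P hP)
  refine ⟨(1/2) * Real.log (1 + P/4), Real.log (1 + 2*P) + 1, M₀, ?_, ?_, ?_⟩
  · have : (0:ℝ) < Real.log (1 + P/4) := Real.log_pos (by linarith)
    linarith
  · have h1 : Real.log (1 + P/4) ≤ Real.log (1 + 2*P) :=
      Real.log_le_log (by linarith) (by linarith)
    have h2 : (0:ℝ) < Real.log (1 + P/4) := Real.log_pos (by linarith)
    linarith
  · intro M hM
    obtain ⟨hM1, hc1, hc2, hc3⟩ := hM₀ M hM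
    obtain ⟨m, rfl⟩ : ∃ m, M = m + 1 := ⟨M - 1, (Nat.succ_pred_eq_of_pos hM1).symm⟩
    simp only [csφ_eq]
    exact ⟨lower_bound hP m hc1 hc2, upper_bound hP m hc3⟩
end

section
/- Fix an integer L ≥ 1 and let F(x) = 1 − e^{−Lx} Σ_{k=0}^{L−1} (Lx)^k / k! for x ≥ 0. Then the expected minimum of N i.i.d. random variables with distribution F satisfies ∫_0^∞ (1−F(x))^N dx = Θ(N^{−1/L}): there exist constants 0 < c₁ ≤ c₂ and N₀ such that c₁ N^{−1/L} ≤ ∫_0^∞ (1−F(x))^N dx ≤ c₂ N^{−1/L} for all N ≥ N₀. -/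
open Real Set Finset MeasureTheory

noncomputable def chiG (L : ℕ) (x : ℝ) : ℝ :=
  Real.exp (-(L : ℝ) * x) * ∑ k ∈ Finset.range L, ((L : ℝ) * x) ^ k / (Nat.factorial k : ℝ)

lemma chiG_cont (L : ℕ) : Continuous (chiG L) := by
  unfold chiG; fun_prop

lemma chiG_nonneg (L : ℕ) {x : ℝ} (hx : 0 ≤ x) : 0 ≤ chiG L x := by
  refine mul_nonneg (Real.exp_pos _).le (Finset.sum_nonneg fun k _ => ?_)
  positivity

lemma chiG_le_one (L : ℕ) {x : ℝ} (hx : 0 ≤ x) : chiG L x ≤ 1 := by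
  have ht : 0 ≤ (L : ℝ) * x := by positivity
  have h := Real.sum_le_exp_of_nonneg ht L
  calc chiG L x ≤ Real.exp (-(L : ℝ) * x) * Real.exp ((L : ℝ) * x) :=
        mul_le_mul_of_nonneg_left h (Real.exp_pos _).le
    _ = 1 := by rw [← Real.exp_add]; simp

lemma term_le_exp {t : ℝ} (ht : 0 ≤ t) (k : ℕ) : t ^ k / (Nat.factorial k : ℝ) ≤ Real.exp t := by
  have h := Real.sum_le_exp_of_nonneg ht (k + 1)
  refine le_trans ?_ h
  exact Finset.single_le_sum (f := fun i => t ^ i / (Nat.factorial i : ℝ))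
    (fun i _ => by positivity) (Finset.self_mem_range_succ k)

lemma chiG_le_decay (L : ℕ) (hL : 1 ≤ L) {x : ℝ} (hx : 0 ≤ x) :
    chiG L x ≤ ((L : ℝ) * 2 ^ (L - 1)) * Real.exp (-(x / 2)) := by
  have ht : 0 ≤ (L : ℝ) * x := by positivity
  have hterm : ∀ k ∈ Finset.range L,
      ((L : ℝ) * x) ^ k / (Nat.factorial k : ℝ) ≤ 2 ^ (L - 1) * Real.exp ((L : ℝ) * x / 2) := by
    intro k hk
    have hk' : k ≤ L - 1 := Nat.le_sub_one_of_lt (Finset.mem_range.mp hk)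
    have h1 : ((L : ℝ) * x) ^ k / (Nat.factorial k : ℝ)
        = 2 ^ k * (((L : ℝ) * x / 2) ^ k / (Nat.factorial k : ℝ)) := by
      rw [mul_div_assoc, ← mul_div_assoc, ← mul_pow]; ring_nf
    rw [h1]
    have h2 : ((L : ℝ) * x / 2) ^ k / (Nat.factorial k : ℝ) ≤ Real.exp ((L : ℝ) * x / 2) :=
      term_le_exp (by positivity) k
    have h3 : (2 : ℝ) ^ k ≤ 2 ^ (L - 1) := pow_le_pow_right₀ (by norm_num) hk'
    exact mul_le_mul h3 h2 (by positivity) (by positivity)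
  have hsum : (∑ k ∈ Finset.range L, ((L : ℝ) * x) ^ k / (Nat.factorial k : ℝ))
      ≤ (L : ℝ) * 2 ^ (L - 1) * Real.exp ((L : ℝ) * x / 2) := by
    calc (∑ k ∈ Finset.range L, ((L : ℝ) * x) ^ k / (Nat.factorial k : ℝ))
        ≤ ∑ _k ∈ Finset.range L, 2 ^ (L - 1) * Real.exp ((L : ℝ) * x / 2) :=
          Finset.sum_le_sum hterm
      _ = (L : ℝ) * (2 ^ (L - 1) * Real.exp ((L : ℝ) * x / 2)) := by
          rw [Finset.sum_const, Finset.card_range, nsmul_eq_mul]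
      _ = (L : ℝ) * 2 ^ (L - 1) * Real.exp ((L : ℝ) * x / 2) := by ring
  calc chiG L x ≤ Real.exp (-(L : ℝ) * x) * ((L : ℝ) * 2 ^ (L - 1) * Real.exp ((L : ℝ) * x / 2)) :=
        mul_le_mul_of_nonneg_left hsum (Real.exp_pos _).le
    _ = (L : ℝ) * 2 ^ (L - 1) * Real.exp (-((L : ℝ) * x / 2)) := by
        rw [mul_comm, mul_assoc, ← Real.exp_add]; ring_nf
    _ ≤ (L : ℝ) * 2 ^ (L - 1) * Real.exp (-(x / 2)) := by
        have hL1 : (1 : ℝ) ≤ L := by exact_mod_cast hL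
        have hLx : x / 2 ≤ (L : ℝ) * x / 2 := by nlinarith
        exact mul_le_mul_of_nonneg_left (Real.exp_le_exp.mpr (neg_le_neg hLx)) (by positivity)

lemma chiG_le_mid (L : ℕ) {x : ℝ} (hx : 0 ≤ x) :
    chiG L x ≤ Real.exp (-(Real.exp (-((L : ℝ) * x)) * ((L : ℝ) * x) ^ L / (Nat.factorial L : ℝ))) := by
  have ht : 0 ≤ (L : ℝ) * x := by positivity
  have h := Real.sum_le_exp_of_nonneg ht (L + 1)
  rw [Finset.sum_range_succ] at h
  have hS : (∑ k ∈ Finset.range L, ((L : ℝ) * x) ^ k / (Nat.factorial k : ℝ))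
      ≤ Real.exp ((L : ℝ) * x) - ((L : ℝ) * x) ^ L / (Nat.factorial L : ℝ) := by linarith
  have h2 : chiG L x ≤ 1 - Real.exp (-((L : ℝ) * x)) * ((L : ℝ) * x) ^ L / (Nat.factorial L : ℝ) := by
    unfold chiG
    rw [neg_mul]
    calc Real.exp (-((L : ℝ) * x)) * ∑ k ∈ Finset.range L, ((L : ℝ) * x) ^ k / (Nat.factorial k : ℝ)
        ≤ Real.exp (-((L : ℝ) * x)) * (Real.exp ((L : ℝ) * x) - ((L : ℝ) * x) ^ L / (Nat.factorial L : ℝ)) :=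
          mul_le_mul_of_nonneg_left hS (Real.exp_pos _).le
      _ = 1 - Real.exp (-((L : ℝ) * x)) * ((L : ℝ) * x) ^ L / (Nat.factorial L : ℝ) := by
          rw [mul_sub, ← Real.exp_add, neg_add_cancel, Real.exp_zero]; ring
  refine h2.trans ?_
  have := Real.add_one_le_exp (-(Real.exp (-((L : ℝ) * x)) * ((L : ℝ) * x) ^ L / (Nat.factorial L : ℝ)))
  linarith

lemma chiG_ge (L : ℕ) (hL : 1 ≤ L) {x : ℝ} (hx : 0 ≤ x) (hx1 : (L : ℝ) * x ≤ 1) :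
    1 - 2 * ((L : ℝ) * x) ^ L / (Nat.factorial L : ℝ) ≤ chiG L x := by
  have ht : 0 ≤ (L : ℝ) * x := by positivity
  have hb := Real.exp_bound' ht hx1 (n := L) (Nat.pos_of_ne_zero (by omega))
  have hS : Real.exp ((L : ℝ) * x) - ((L : ℝ) * x) ^ L * (L + 1) / (Nat.factorial L * L) ≤
      ∑ k ∈ Finset.range L, ((L : ℝ) * x) ^ k / (Nat.factorial k : ℝ) := by linarith
  have key : 1 - Real.exp (-((L : ℝ) * x)) * (((L : ℝ) * x) ^ L * (L + 1) / (Nat.factorial L * L))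
      ≤ chiG L x := by
    unfold chiG
    rw [neg_mul]
    calc 1 - Real.exp (-((L : ℝ) * x)) * (((L : ℝ) * x) ^ L * (L + 1) / (Nat.factorial L * L))
        = Real.exp (-((L : ℝ) * x)) * (Real.exp ((L : ℝ) * x) - ((L : ℝ) * x) ^ L * (L + 1) / (Nat.factorial L * L)) := by
          rw [mul_sub, ← Real.exp_add, neg_add_cancel, Real.exp_zero]; try ring
      _ ≤ _ := mul_le_mul_of_nonneg_left hS (Real.exp_pos _).le
  refine le_trans ?_ key
  have hexp1 : Real.exp (-((L : ℝ) * x)) ≤ 1 := Real.exp_le_one_iff.mpr (by linarith)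
  have hfac : (0:ℝ) < Nat.factorial L := by exact_mod_cast Nat.factorial_pos L
  have hL1 : (1:ℝ) ≤ L := by exact_mod_cast hL
  have htL : (0:ℝ) ≤ ((L : ℝ) * x) ^ L := by positivity
  have h1 : Real.exp (-((L : ℝ) * x)) * (((L : ℝ) * x) ^ L * (L + 1) / (Nat.factorial L * L))
      ≤ ((L : ℝ) * x) ^ L * (L + 1) / (Nat.factorial L * L) :=
    mul_le_of_le_one_left (by positivity) hexp1
  have hle : ((L:ℝ) + 1) ≤ 2 * L := by linarith
  have h2 : ((L : ℝ) * x) ^ L * ((L:ℝ) + 1) / (Nat.factorial L * L) ≤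
      2 * ((L : ℝ) * x) ^ L / (Nat.factorial L : ℝ) := by
    rw [div_le_div_iff₀ (by positivity) (by positivity)]
    nlinarith [mul_le_mul_of_nonneg_left hle (mul_nonneg htL hfac.le)]
  linarith

lemma chiG_pow_integrableOn (L : ℕ) (hL : 1 ≤ L) {N : ℕ} (hN : 1 ≤ N) :
    IntegrableOn (fun x => chiG L x ^ N) (Ioi (0 : ℝ)) := by
  set A : ℝ := (L : ℝ) * 2 ^ (L - 1) with hA
  have hA0 : 0 < A := by
    have : (0:ℝ) < L := by exact_mod_cast Nat.pos_of_ne_zero (by omega)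
    positivity
  have hint : IntegrableOn (fun x => A * Real.exp (-(2⁻¹) * x)) (Ioi (0 : ℝ)) :=
    (exp_neg_integrableOn_Ioi 0 (by norm_num)).const_mul A
  refine MeasureTheory.Integrable.mono hint ?_ ?_
  · exact ((chiG_cont L).pow N).aestronglyMeasurable
  · rw [ae_restrict_iff' measurableSet_Ioi]
    filter_upwards with x hx
    have hx0 : (0:ℝ) ≤ x := le_of_lt hx
    have h1 : chiG L x ^ N ≤ chiG L x := by
      calc chiG L x ^ N ≤ chiG L x ^ 1 :=
            pow_le_pow_of_le_one (chiG_nonneg L hx0) (chiG_le_one L hx0) hN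
        _ = chiG L x := pow_one _
    have h2 : chiG L x ≤ A * Real.exp (-(2⁻¹) * x) := by
      have := chiG_le_decay L hL hx0
      rw [hA]
      convert this using 3
      ring
    have h0 : 0 ≤ chiG L x ^ N := pow_nonneg (chiG_nonneg L hx0) N
    rw [Real.norm_eq_abs, Real.norm_eq_abs, abs_of_nonneg h0, abs_of_nonneg (by positivity)]
    exact h1.trans h2

lemma chiG_lower (L : ℕ) (hL : 1 ≤ L) {N : ℕ} (hN : Nat.factorial L ≤ N) :
    ((Nat.factorial L / 4 : ℝ) ^ ((1:ℝ)/L) / (2 * L)) * (N : ℝ) ^ (-(1:ℝ)/L)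
      ≤ ∫ x in Ioi (0:ℝ), chiG L x ^ N := by
  have hN1 : 1 ≤ N := le_trans (Nat.one_le_iff_ne_zero.mpr (Nat.factorial_ne_zero L)) hN
  have hNR : (0:ℝ) < N := by exact_mod_cast hN1
  have hLR : (0:ℝ) < L := by exact_mod_cast hL
  have hfac : (0:ℝ) < Nat.factorial L := by exact_mod_cast Nat.factorial_pos L
  set u : ℝ := (Nat.factorial L : ℝ) / (4 * N) with hu
  have hu0 : 0 < u := by positivity
  have hu1 : u ≤ 1 := by
    rw [hu, div_le_one (by positivity)]
    have : (Nat.factorial L : ℝ) ≤ N := by exact_mod_cast hN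
    linarith
  set a : ℝ := u ^ ((1:ℝ)/L) / L with ha
  have hua : u ^ ((1:ℝ)/L) ≤ 1 := Real.rpow_le_one hu0.le hu1 (by positivity)
  have ha0 : 0 < a := by
    have := Real.rpow_pos_of_pos hu0 ((1:ℝ)/L)
    positivity
  -- pointwise bound on Ioc 0 a
  have hpt : ∀ x ∈ Ioc (0:ℝ) a, (1:ℝ)/2 ≤ chiG L x ^ N := by
    intro x hx
    have hx0 : (0:ℝ) ≤ x := hx.1.le
    have hLx1 : (L:ℝ) * x ≤ 1 := by
      calc (L:ℝ) * x ≤ (L:ℝ) * a := by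
            exact mul_le_mul_of_nonneg_left hx.2 hLR.le
        _ = u ^ ((1:ℝ)/L) := by rw [ha]; field_simp
        _ ≤ 1 := hua
    have hpow : ((L:ℝ) * x) ^ L ≤ u := by
      have h1 : ((L:ℝ) * x) ^ L ≤ (u ^ ((1:ℝ)/L)) ^ L := by
        apply pow_le_pow_left₀ (by positivity)
        calc (L:ℝ) * x ≤ (L:ℝ) * a := mul_le_mul_of_nonneg_left hx.2 hLR.le
          _ = u ^ ((1:ℝ)/L) := by rw [ha]; field_simp
      have h2 : (u ^ ((1:ℝ)/L)) ^ L = u := by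
        rw [← Real.rpow_natCast (u ^ ((1:ℝ)/L)) L, ← Real.rpow_mul hu0.le]
        rw [one_div, inv_mul_cancel₀ (by positivity), Real.rpow_one]
      rw [h2] at h1; exact h1
    have hg : 1 - 1/(2*N) ≤ chiG L x := by
      refine le_trans ?_ (chiG_ge L hL hx0 hLx1)
      have : 2 * ((L:ℝ) * x) ^ L / (Nat.factorial L : ℝ) ≤ 1/(2*N) := by
        rw [div_le_div_iff₀ hfac (by positivity)]
        calc 2 * ((L:ℝ)*x)^L * (2*N) ≤ 2 * u * (2 * N) := by
              have h4 : (0:ℝ) ≤ 2 * N := by positivity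
              nlinarith
          _ = 1 * (Nat.factorial L : ℝ) := by rw [hu]; field_simp; ring
      linarith
    have hg0 : (0:ℝ) ≤ 1 - 1/(2*N) := by
      have : 1/(2*(N:ℝ)) ≤ 1/2 := by
        apply div_le_div_of_nonneg_left (by norm_num) (by norm_num)
        have : (1:ℝ) ≤ N := by exact_mod_cast hN1
        linarith
      linarith
    calc (1:ℝ)/2 = 1 + (N:ℝ) * (-(1/(2*N))) := by field_simp; ring
      _ ≤ (1 + (-(1/(2*N)))) ^ N := by
          apply one_add_mul_le_pow
          have : (0:ℝ) ≤ 1/(2*N) := by positivity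
          linarith
      _ = (1 - 1/(2*N)) ^ N := by ring_nf
      _ ≤ chiG L x ^ N := pow_le_pow_left₀ hg0 hg N
  -- integral comparison
  have hint : IntegrableOn (fun x => chiG L x ^ N) (Ioi (0:ℝ)) :=
    chiG_pow_integrableOn L hL hN1
  have step1 : ∫ x in Ioc (0:ℝ) a, chiG L x ^ N ≤ ∫ x in Ioi (0:ℝ), chiG L x ^ N := by
    apply setIntegral_mono_set hint
    · filter_upwards [ae_restrict_mem measurableSet_Ioi] with x hx
      exact pow_nonneg (chiG_nonneg L hx.le) N
    · exact HasSubset.Subset.eventuallyLE Ioc_subset_Ioi_self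
  have step2 : ∫ x in Ioc (0:ℝ) a, (1:ℝ)/2 ≤ ∫ x in Ioc (0:ℝ) a, chiG L x ^ N := by
    apply setIntegral_mono_on
    · exact integrableOn_const (by rw [Real.volume_Ioc]; exact ENNReal.ofReal_ne_top)
    · exact hint.mono_set Ioc_subset_Ioi_self
    · exact measurableSet_Ioc
    · exact hpt
  have hval : ∫ _x in Ioc (0:ℝ) a, (1:ℝ)/2 = a / 2 := by
    rw [setIntegral_const, Real.volume_real_Ioc_of_le (by linarith), smul_eq_mul]
    ring
  have hfinal : ((Nat.factorial L / 4 : ℝ) ^ ((1:ℝ)/L) / (2 * L)) * (N : ℝ) ^ (-(1:ℝ)/L) = a / 2 := by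
    rw [ha, hu]
    have h1 : (Nat.factorial L : ℝ) / (4 * N) = (Nat.factorial L / 4 : ℝ) * (N:ℝ)⁻¹ := by
      field_simp
    rw [h1, Real.mul_rpow (by positivity) (by positivity), Real.inv_rpow hNR.le,
      show (-1:ℝ)/(L:ℝ) = -((1:ℝ)/L) by ring, Real.rpow_neg hNR.le]
    ring
  rw [hfinal]
  calc a / 2 = ∫ _x in Ioc (0:ℝ) a, (1:ℝ)/2 := hval.symm
    _ ≤ ∫ x in Ioc (0:ℝ) a, chiG L x ^ N := step2
    _ ≤ ∫ x in Ioi (0:ℝ), chiG L x ^ N := step1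

set_option maxHeartbeats 1000000 in
lemma chiG_upper (L : ℕ) (hL : 1 ≤ L) :
    ∃ C : ℝ, 0 < C ∧ ∀ N : ℕ, 2 ≤ N →
      ∫ x in Ioi (0:ℝ), chiG L x ^ N ≤ C * (N : ℝ) ^ (-(1:ℝ)/L) := by
  have hLR : (0:ℝ) < L := by exact_mod_cast hL
  have hfac : (0:ℝ) < Nat.factorial L := by exact_mod_cast Nat.factorial_pos L
  set A : ℝ := (L : ℝ) * 2 ^ (L - 1) with hAdef
  have hA1 : 1 ≤ A := by
    have h2 : (1:ℝ) ≤ 2 ^ (L - 1) := one_le_pow₀ (by norm_num)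
    have hL1 : (1:ℝ) ≤ L := by exact_mod_cast hL
    nlinarith
  have hA0 : 0 < A := lt_of_lt_of_le one_pos hA1
  set x₀ : ℝ := 2 * Real.log (2 * A) with hx₀def
  have hlog2 : (1:ℝ)/2 < Real.log 2 := by
    have := Real.log_two_gt_d9; linarith
  have hx₀1 : 1 ≤ x₀ := by
    have h1 : Real.log 2 ≤ Real.log (2 * A) := by
      apply Real.log_le_log (by norm_num); nlinarith
    rw [hx₀def]; linarith
  have hx₀0 : 0 < x₀ := lt_of_lt_of_le one_pos hx₀1
  have hexpx₀ : Real.exp (-(x₀ / 2)) = (2 * A)⁻¹ := by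
    rw [hx₀def, show -(2 * Real.log (2 * A) / 2) = -Real.log (2 * A) by ring,
      Real.exp_neg, Real.exp_log (by positivity)]
  set c : ℝ := Real.exp (-((L:ℝ) * x₀)) * (L:ℝ) ^ L / (Nat.factorial L : ℝ) with hcdef
  have hc0 : 0 < c := by positivity
  refine ⟨1 + 2 / c ^ 2 + 4 * A ^ 2, by positivity, ?_⟩
  intro N hN
  have hN1 : 1 ≤ N := by omega
  have hNR : (0:ℝ) < N := by exact_mod_cast hN1
  have hNR1 : (1:ℝ) ≤ N := by exact_mod_cast hN1
  set t : ℝ := (N : ℝ) ^ (-(1:ℝ)/L) with htdef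
  have ht0 : 0 < t := Real.rpow_pos_of_pos hNR _
  have ht1 : t ≤ 1 := by
    apply Real.rpow_le_one_of_one_le_of_nonpos hNR1
    rw [neg_div]
    simp only [Left.neg_nonpos_iff]
    positivity
  have htx₀ : t ≤ x₀ := le_trans ht1 hx₀1
  have hint : IntegrableOn (fun x => chiG L x ^ N) (Ioi (0:ℝ)) :=
    chiG_pow_integrableOn L hL hN1
  -- split the integral at x₀
  have hsplit : ∫ x in Ioi (0:ℝ), chiG L x ^ N =
      (∫ x in Ioc (0:ℝ) x₀, chiG L x ^ N) + ∫ x in Ioi x₀, chiG L x ^ N := by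
    rw [← setIntegral_union (Ioc_disjoint_Ioi le_rfl) measurableSet_Ioi
      (hint.mono_set Ioc_subset_Ioi_self) (hint.mono_set (Ioi_subset_Ioi hx₀0.le)),
      Ioc_union_Ioi_eq_Ioi hx₀0.le]
  ----------------------------------------------------------------
  -- MIDDLE PART
  ----------------------------------------------------------------
  have hcmid : ∀ x ∈ Ioc (0:ℝ) x₀, chiG L x ^ N ≤ Real.exp (-((N:ℝ) * c * x ^ L)) := by
    intro x hx
    have h1 : Real.exp (-((L:ℝ) * x₀)) ≤ Real.exp (-((L:ℝ) * x)) := by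
      apply Real.exp_le_exp.mpr
      have := hx.2; nlinarith
    have h2 : c * x ^ L ≤ Real.exp (-((L:ℝ) * x)) * ((L:ℝ) * x) ^ L / (Nat.factorial L : ℝ) := by
      have key := mul_le_mul_of_nonneg_right h1
        (show (0:ℝ) ≤ (L:ℝ) ^ L * x ^ L / (Nat.factorial L : ℝ) by
          have hx0 := hx.1.le; positivity)
      calc c * x ^ L = Real.exp (-((L:ℝ)*x₀)) * ((L:ℝ)^L * x^L / (Nat.factorial L : ℝ)) := by
            rw [hcdef]; ring
        _ ≤ Real.exp (-((L:ℝ)*x)) * ((L:ℝ)^L * x^L / (Nat.factorial L : ℝ)) := key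
        _ = Real.exp (-((L:ℝ)*x)) * ((L:ℝ)*x)^L / (Nat.factorial L : ℝ) := by
            rw [mul_pow]; ring
    have h3 : chiG L x ≤ Real.exp (-(c * x ^ L)) := by
      refine (chiG_le_mid L hx.1.le).trans ?_
      exact Real.exp_le_exp.mpr (by linarith)
    calc chiG L x ^ N ≤ (Real.exp (-(c * x ^ L))) ^ N :=
          pow_le_pow_left₀ (chiG_nonneg L hx.1.le) h3 N
      _ = Real.exp (-((N:ℝ) * c * x ^ L)) := by
          rw [← Real.exp_nat_mul]; congr 1; ring
  have hcontmid : Continuous (fun x : ℝ => Real.exp (-((N:ℝ) * c * x ^ L))) := by fun_prop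
  have hM1 : ∫ x in Ioc (0:ℝ) x₀, chiG L x ^ N
      ≤ ∫ x in Ioc (0:ℝ) x₀, Real.exp (-((N:ℝ) * c * x ^ L)) := by
    apply setIntegral_mono_on (hint.mono_set Ioc_subset_Ioi_self)
      (hcontmid.integrableOn_Ioc) measurableSet_Ioc hcmid
  -- split the middle integral at t
  have hMsplit : ∫ x in Ioc (0:ℝ) x₀, Real.exp (-((N:ℝ) * c * x ^ L)) =
      (∫ x in Ioc (0:ℝ) t, Real.exp (-((N:ℝ) * c * x ^ L)))
      + ∫ x in Ioc t x₀, Real.exp (-((N:ℝ) * c * x ^ L)) := by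
    rw [← setIntegral_union (Set.Ioc_disjoint_Ioc_of_le le_rfl) measurableSet_Ioc
      hcontmid.integrableOn_Ioc hcontmid.integrableOn_Ioc,
      Ioc_union_Ioc_eq_Ioc ht0.le htx₀]
  have hM2 : ∫ x in Ioc (0:ℝ) t, Real.exp (-((N:ℝ) * c * x ^ L)) ≤ t := by
    have : ∫ x in Ioc (0:ℝ) t, Real.exp (-((N:ℝ) * c * x ^ L)) ≤ ∫ _x in Ioc (0:ℝ) t, (1:ℝ) := by
      apply setIntegral_mono_on hcontmid.integrableOn_Ioc
        (integrableOn_const (by rw [Real.volume_Ioc]; exact ENNReal.ofReal_ne_top))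
        measurableSet_Ioc
      intro x hx
      rw [Real.exp_le_one_iff]
      have : (0:ℝ) ≤ (N:ℝ) * c * x ^ L := by
        have := hx.1.le; positivity
      linarith
    calc ∫ x in Ioc (0:ℝ) t, Real.exp (-((N:ℝ) * c * x ^ L)) ≤ ∫ _x in Ioc (0:ℝ) t, (1:ℝ) := this
      _ = t := by
        rw [setIntegral_const, Real.volume_real_Ioc_of_le (by linarith), smul_eq_mul]
        ring
  -- tail of the middle integral
  have hrint : IntegrableOn (fun x : ℝ => x ^ (-(2*(L:ℝ)))) (Ioi t) := by
    apply integrableOn_Ioi_rpow_of_lt _ ht0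
    have : (1:ℝ) ≤ L := by exact_mod_cast hL
    linarith
  have hM3 : ∫ x in Ioc t x₀, Real.exp (-((N:ℝ) * c * x ^ L))
      ≤ ∫ x in Ioc t x₀, 2 / (c^2 * (N:ℝ)^2) * x ^ (-(2*(L:ℝ))) := by
    apply setIntegral_mono_on hcontmid.integrableOn_Ioc
      (((hrint.mono_set Ioc_subset_Ioi_self)).const_mul _) measurableSet_Ioc
    intro x hx
    have hx0 : 0 < x := lt_of_le_of_lt ht0.le hx.1
    set u : ℝ := (N:ℝ) * c * x ^ L with hudef
    have hu0 : 0 < u := by positivity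
    have hexpu : u ^ 2 / 2 ≤ Real.exp u := by
      have h := Real.sum_le_exp_of_nonneg hu0.le 3
      have : ∑ i ∈ Finset.range 3, u ^ i / (Nat.factorial i : ℝ) = 1 + u + u^2/2 := by
        simp [Finset.sum_range_succ, Nat.factorial]
        try ring
      rw [this] at h
      linarith
    have hle : Real.exp (-u) ≤ 2 / u ^ 2 := by
      rw [Real.exp_neg]
      rw [inv_le_iff_one_le_mul₀ (Real.exp_pos u)]
      rw [div_mul_eq_mul_div, le_div_iff₀ (by positivity)]
      nlinarith [Real.exp_pos u]
    refine hle.trans (le_of_eq ?_)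
    rw [Real.rpow_neg hx0.le, show (2*(L:ℝ)) = ((2*L : ℕ):ℝ) by push_cast; ring,
      Real.rpow_natCast]
    rw [hudef, mul_pow, mul_pow, ← pow_mul]
    field_simp
    ring
  have hM4 : ∫ x in Ioc t x₀, 2 / (c^2 * (N:ℝ)^2) * x ^ (-(2*(L:ℝ)))
      ≤ 2 / c^2 * (N : ℝ) ^ (-(1:ℝ)/L) := by
    have hs1 : ∫ x in Ioc t x₀, 2 / (c^2 * (N:ℝ)^2) * x ^ (-(2*(L:ℝ)))
        ≤ ∫ x in Ioi t, 2 / (c^2 * (N:ℝ)^2) * x ^ (-(2*(L:ℝ))) := by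
      apply setIntegral_mono_set (hrint.const_mul _)
      · filter_upwards [ae_restrict_mem measurableSet_Ioi] with x hx
        have hx0 : (0:ℝ) ≤ x := le_trans ht0.le (le_of_lt hx)
        positivity
      · exact HasSubset.Subset.eventuallyLE Ioc_subset_Ioi_self
    have hval : ∫ x in Ioi t, 2 / (c^2 * (N:ℝ)^2) * x ^ (-(2*(L:ℝ)))
        = 2 / (c^2 * (N:ℝ)^2) * (-t ^ (-(2*(L:ℝ)) + 1) / (-(2*(L:ℝ)) + 1)) := by
      rw [MeasureTheory.integral_const_mul]
      congr 1
      apply integral_Ioi_rpow_of_lt _ ht0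
      have : (1:ℝ) ≤ L := by exact_mod_cast hL
      linarith
    have hexp : -t ^ (-(2*(L:ℝ)) + 1) / (-(2*(L:ℝ)) + 1) ≤ t ^ (-(2*(L:ℝ)) + 1) := by
      have htp : 0 < t ^ (-(2*(L:ℝ)) + 1) := Real.rpow_pos_of_pos ht0 _
      have hden : (1:ℝ) ≤ 2*(L:ℝ) - 1 := by
        have : (1:ℝ) ≤ L := by exact_mod_cast hL
        linarith
      have hb0 : -(2*(L:ℝ)) + 1 < 0 := by linarith
      have heq : -t ^ (-(2*(L:ℝ)) + 1) / (-(2*(L:ℝ)) + 1)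
          = t ^ (-(2*(L:ℝ)) + 1) / (2*(L:ℝ) - 1) := by
        rw [div_eq_div_iff (ne_of_lt hb0) (by linarith)]
        ring
      rw [heq, div_le_iff₀ (by linarith)]
      nlinarith [mul_le_mul_of_nonneg_left hden htp.le]
    have harith : t ^ (-(2*(L:ℝ)) + 1) = (N:ℝ)^2 * (N : ℝ) ^ (-(1:ℝ)/L) := by
      rw [htdef, ← Real.rpow_mul hNR.le]
      rw [show ((N:ℝ)^2 : ℝ) = (N:ℝ) ^ ((2:ℕ):ℝ) by rw [Real.rpow_natCast],
        ← Real.rpow_add hNR]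
      congr 1
      have hLne : (L:ℝ) ≠ 0 := ne_of_gt hLR
      field_simp
      ring
    calc ∫ x in Ioc t x₀, 2 / (c^2 * (N:ℝ)^2) * x ^ (-(2*(L:ℝ)))
        ≤ ∫ x in Ioi t, 2 / (c^2 * (N:ℝ)^2) * x ^ (-(2*(L:ℝ))) := hs1
      _ = 2 / (c^2 * (N:ℝ)^2) * (-t ^ (-(2*(L:ℝ)) + 1) / (-(2*(L:ℝ)) + 1)) := hval
      _ ≤ 2 / (c^2 * (N:ℝ)^2) * t ^ (-(2*(L:ℝ)) + 1) := by
          apply mul_le_mul_of_nonneg_left hexp (by positivity)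
      _ = 2 / c^2 * (N : ℝ) ^ (-(1:ℝ)/L) := by
          rw [harith]; field_simp
  ----------------------------------------------------------------
  -- TAIL PART
  ----------------------------------------------------------------
  have htail_pt : ∀ x ∈ Ioi x₀, chiG L x ^ N ≤ ((1:ℝ)/2)^(N-2) * A^2 * Real.exp (-x) := by
    intro x hx
    have hx0 : (0:ℝ) ≤ x := le_trans hx₀0.le (le_of_lt hx)
    have hg0 : 0 ≤ chiG L x := chiG_nonneg L hx0
    have hgd : chiG L x ≤ A * Real.exp (-(x/2)) := chiG_le_decay L hL hx0
    have hhalf : A * Real.exp (-(x/2)) ≤ (1:ℝ)/2 := by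
      have h1 : Real.exp (-(x/2)) ≤ Real.exp (-(x₀/2)) := by
        apply Real.exp_le_exp.mpr
        have := le_of_lt (mem_Ioi.mp hx)
        linarith
      calc A * Real.exp (-(x/2)) ≤ A * Real.exp (-(x₀/2)) :=
            mul_le_mul_of_nonneg_left h1 hA0.le
        _ = A * (2*A)⁻¹ := by rw [hexpx₀]
        _ = 1/2 := by field_simp [mul_comm]
    have hsplitpow : chiG L x ^ N = chiG L x ^ (N-2) * chiG L x ^ 2 := by
      rw [← pow_add, Nat.sub_add_cancel hN]
    rw [hsplitpow]
    have hb1 : chiG L x ^ (N-2) ≤ ((1:ℝ)/2)^(N-2) :=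
      pow_le_pow_left₀ hg0 (le_trans hgd hhalf) _
    have hb2 : chiG L x ^ 2 ≤ A^2 * Real.exp (-x) := by
      calc chiG L x ^ 2 ≤ (A * Real.exp (-(x/2)))^2 := pow_le_pow_left₀ hg0 hgd 2
        _ = A^2 * Real.exp (-x) := by
          rw [mul_pow, sq (Real.exp (-(x/2))), ← Real.exp_add]
          congr 2
          ring
    calc chiG L x ^ (N-2) * chiG L x ^ 2 ≤ ((1:ℝ)/2)^(N-2) * (A^2 * Real.exp (-x)) := by
          apply mul_le_mul hb1 hb2 (by positivity) (by positivity)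
      _ = ((1:ℝ)/2)^(N-2) * A^2 * Real.exp (-x) := by ring
  have hexpint : IntegrableOn (fun x : ℝ => ((1:ℝ)/2)^(N-2) * A^2 * Real.exp (-x)) (Ioi x₀) := by
    have h0 : IntegrableOn (fun x : ℝ => Real.exp (-x)) (Ioi x₀) := by
      have := exp_neg_integrableOn_Ioi x₀ (show (0:ℝ) < 1 by norm_num)
      simpa using this
    exact h0.const_mul _
  have hT : ∫ x in Ioi x₀, chiG L x ^ N ≤ ((1:ℝ)/2)^(N-2) * A^2 := by
    have h1 : ∫ x in Ioi x₀, chiG L x ^ N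
        ≤ ∫ x in Ioi x₀, ((1:ℝ)/2)^(N-2) * A^2 * Real.exp (-x) := by
      apply setIntegral_mono_on (hint.mono_set (Ioi_subset_Ioi hx₀0.le)) hexpint
        measurableSet_Ioi htail_pt
    have h2 : ∫ x in Ioi x₀, ((1:ℝ)/2)^(N-2) * A^2 * Real.exp (-x)
        = ((1:ℝ)/2)^(N-2) * A^2 * Real.exp (-x₀) := by
      rw [MeasureTheory.integral_const_mul, integral_exp_neg_Ioi]
    have h3 : Real.exp (-x₀) ≤ 1 := Real.exp_le_one_iff.mpr (by linarith)
    calc ∫ x in Ioi x₀, chiG L x ^ N ≤ ((1:ℝ)/2)^(N-2) * A^2 * Real.exp (-x₀) := by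
          rw [← h2]; exact h1
      _ ≤ ((1:ℝ)/2)^(N-2) * A^2 := mul_le_of_le_one_right (by positivity) h3
  have hTfin : ((1:ℝ)/2)^(N-2) * A^2 ≤ 4 * A^2 * (N : ℝ) ^ (-(1:ℝ)/L) := by
    have h1 : ((1:ℝ)/2)^(N-2) = 4 * ((1:ℝ)/2)^N := by
      have hpow : ((1:ℝ)/2)^N = ((1:ℝ)/2)^(N-2) * ((1:ℝ)/2)^2 := by
        rw [← pow_add, Nat.sub_add_cancel hN]
      rw [hpow]; ring
    have h2 : ((1:ℝ)/2)^N ≤ ((N:ℝ))⁻¹ := by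
      rw [div_pow, one_pow]
      rw [div_eq_mul_inv, one_mul]
      apply inv_anti₀ hNR
      have := Nat.lt_two_pow_self (n := N)
      exact_mod_cast this.le
    have h3 : ((N:ℝ))⁻¹ ≤ (N : ℝ) ^ (-(1:ℝ)/L) := by
      rw [← Real.rpow_neg_one]
      apply Real.rpow_le_rpow_of_exponent_le hNR1
      rw [neg_div]
      have h4 : (1:ℝ)/(L:ℝ) ≤ 1 := by
        rw [div_le_one hLR]
        exact_mod_cast hL
      linarith
    calc ((1:ℝ)/2)^(N-2) * A^2 = 4 * ((1:ℝ)/2)^N * A^2 := by rw [h1]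
      _ ≤ 4 * ((N:ℝ))⁻¹ * A^2 := by nlinarith [sq_nonneg A]
      _ ≤ 4 * ((N : ℝ) ^ (-(1:ℝ)/L)) * A^2 := by nlinarith [sq_nonneg A]
      _ = 4 * A^2 * (N : ℝ) ^ (-(1:ℝ)/L) := by ring
  ----------------------------------------------------------------
  -- COMBINE
  ----------------------------------------------------------------
  have httN : t = 1 * (N : ℝ) ^ (-(1:ℝ)/L) := by rw [htdef]; ring
  calc ∫ x in Ioi (0:ℝ), chiG L x ^ N
      = (∫ x in Ioc (0:ℝ) x₀, chiG L x ^ N) + ∫ x in Ioi x₀, chiG L x ^ N := hsplit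
    _ ≤ (t + 2 / c^2 * (N : ℝ) ^ (-(1:ℝ)/L)) + ((1:ℝ)/2)^(N-2) * A^2 := by
        have := hM1.trans (le_of_eq hMsplit)
        have hmid : ∫ x in Ioc (0:ℝ) x₀, chiG L x ^ N ≤ t + 2 / c^2 * (N : ℝ) ^ (-(1:ℝ)/L) := by
          calc ∫ x in Ioc (0:ℝ) x₀, chiG L x ^ N
              ≤ (∫ x in Ioc (0:ℝ) t, Real.exp (-((N:ℝ) * c * x ^ L)))
                + ∫ x in Ioc t x₀, Real.exp (-((N:ℝ) * c * x ^ L)) := this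
            _ ≤ t + 2 / c^2 * (N : ℝ) ^ (-(1:ℝ)/L) := add_le_add hM2 (hM3.trans hM4)
        exact add_le_add hmid hT
    _ ≤ (1 + 2 / c ^ 2 + 4 * A ^ 2) * (N : ℝ) ^ (-(1:ℝ)/L) := by
        have expand : (1 + 2 / c ^ 2 + 4 * A ^ 2) * (N : ℝ) ^ (-(1:ℝ)/L)
            = 1 * (N : ℝ) ^ (-(1:ℝ)/L) + 2 / c^2 * (N : ℝ) ^ (-(1:ℝ)/L)
              + 4 * A^2 * (N : ℝ) ^ (-(1:ℝ)/L) := by ring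
        rw [httN, expand]
        linarith [hTfin]


/-- Fix `L ≥ 1` and let `F(x) = 1 − e^{−Lx} Σ_{k<L} (Lx)^k/k!`. Then the expected
minimum of `N` i.i.d. variables with cdf `F`, `∫_0^∞ (1−F(x))^N dx`, is `Θ(N^{−1/L})`. -/
theorem chi_square_min_expectation_theta (L : ℕ) (hL : 1 ≤ L) :
    ∃ c₁ c₂ : ℝ, ∃ N₀ : ℕ, 0 < c₁ ∧ c₁ ≤ c₂ ∧
      ∀ N : ℕ, N₀ ≤ N →
        c₁ * (N : ℝ) ^ (-(1 : ℝ) / L) ≤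
            (∫ x in Ioi (0 : ℝ),
              (Real.exp (-(L : ℝ) * x) *
                ∑ k ∈ Finset.range L, ((L : ℝ) * x) ^ k / (Nat.factorial k : ℝ)) ^ N) ∧
          (∫ x in Ioi (0 : ℝ),
              (Real.exp (-(L : ℝ) * x) *
                ∑ k ∈ Finset.range L, ((L : ℝ) * x) ^ k / (Nat.factorial k : ℝ)) ^ N) ≤
            c₂ * (N : ℝ) ^ (-(1 : ℝ) / L) := by
  obtain ⟨C, hC0, hC⟩ := chiG_upper L hL
  have hLR : (0:ℝ) < L := by exact_mod_cast hL
  have hfacR : (0:ℝ) < Nat.factorial L := by exact_mod_cast Nat.factorial_pos L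
  set c₁ : ℝ := (Nat.factorial L / 4 : ℝ) ^ ((1:ℝ)/L) / (2 * L) with hc₁def
  have hc₁0 : 0 < c₁ := by
    apply div_pos (Real.rpow_pos_of_pos (by positivity) _) (by linarith)
  refine ⟨c₁, c₁ + C, max (Nat.factorial L) 2, hc₁0, by linarith, ?_⟩
  intro N hN
  have hN2 : 2 ≤ N := le_trans (le_max_right _ _) hN
  have hNf : Nat.factorial L ≤ N := le_trans (le_max_left _ _) hN
  have hN1 : 1 ≤ N := by omega
  have hNR : (0:ℝ) < N := by exact_mod_cast hN1
  have hIeq : (∫ x in Ioi (0 : ℝ),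
      (Real.exp (-(L : ℝ) * x) *
        ∑ k ∈ Finset.range L, ((L : ℝ) * x) ^ k / (Nat.factorial k : ℝ)) ^ N)
      = ∫ x in Ioi (0:ℝ), chiG L x ^ N := rfl
  have hexp : -(1 : ℝ) / (L:ℝ) = -(1:ℝ)/(L:ℝ) := rfl
  constructor
  · rw [hIeq]
    exact chiG_lower L hL hNf
  · rw [hIeq]
    refine (hC N hN2).trans ?_
    have hP : 0 ≤ (N : ℝ) ^ (-(1:ℝ)/(L:ℝ)) := (Real.rpow_pos_of_pos hNR _).le
    exact mul_le_mul_of_nonneg_right (by linarith) hP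
end
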